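/- arXiv:2310.19021 — 6 statements merged into one kernel-verified Lean document; each statement's English description precedes it below -/
import Mathlib

section
/- Let V, A_1,…,A_m, c, n, H, Ric, Θ_p be as in the setting, with n ≥ 4. Assume that Ric(X) ≥ (n−2)(c+H²) for every unit vector X ∈ V. Then for every integer p with 2 ≤ p ≤ n/2 and every orthonormal basis e_1,…,e_n of V one has Θ_p ≤ p(n−p)c. (Pointwise form of Proposition 2, part (i).) -/
open scoped RealInnerProductSpace

/-- The Ricci curvature at a point of a submanifold, expressed through the shape
operators `A_α` via the Gauss equation: for a unit vector `X`,
`Ric X = (n-1)c + Σ_α tr(A_α)⟨A_α X, X⟩ − Σ_α ‖A_α X‖²`. -/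
noncomputable def RicCurv {V : Type*} [NormedAddCommGroup V] [InnerProductSpace ℝ V]
    (m n : ℕ) (c : ℝ) (A : Fin m → V →ₗ[ℝ] V) (X : V) : ℝ :=
  ((n : ℝ) - 1) * c + (∑ α : Fin m, LinearMap.trace ℝ V (A α) * ⟪(A α) X, X⟫)
    - ∑ α : Fin m, ‖(A α) X‖ ^ 2

/-- The Lawson–Simons quantity `Θ_p` associated to an orthonormal basis
`e_1, …, e_n` and an integer `p`:
`Θ_p = Σ_{i≤p} Σ_{j>p} (2 Σ_α ⟨A_α e_i, e_j⟩² − Σ_α ⟨A_α e_i, e_i⟩⟨A_α e_j, e_j⟩)`. -/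
noncomputable def Theta {V : Type*} [NormedAddCommGroup V] [InnerProductSpace ℝ V]
    (m : ℕ) {n : ℕ} (p : ℕ) (A : Fin m → V →ₗ[ℝ] V)
    (e : OrthonormalBasis (Fin n) ℝ V) : ℝ :=
  ∑ i ∈ Finset.univ.filter (fun i : Fin n => (i : ℕ) < p),
    ∑ j ∈ Finset.univ.filter (fun j : Fin n => p ≤ (j : ℕ)),
      (2 * ∑ α : Fin m, ⟪(A α) (e i), e j⟫ ^ 2
        - ∑ α : Fin m, ⟪(A α) (e i), e i⟫ * ⟪(A α) (e j), e j⟫)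

/-- The quantity `T_p = Σ_α (tr A_α) Σ_{i≤p} ⟨A_α e_i, e_i⟩`. -/
noncomputable def Tsum {V : Type*} [NormedAddCommGroup V] [InnerProductSpace ℝ V]
    (m : ℕ) {n : ℕ} (p : ℕ) (A : Fin m → V →ₗ[ℝ] V)
    (e : OrthonormalBasis (Fin n) ℝ V) : ℝ :=
  ∑ α : Fin m, LinearMap.trace ℝ V (A α) *
    ∑ i ∈ Finset.univ.filter (fun i : Fin n => (i : ℕ) < p), ⟪(A α) (e i), e i⟫

/-- The squared length `S = Σ_α tr(A_α²)` of the second fundamental form. -/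
noncomputable def Ssec {V : Type*} [NormedAddCommGroup V] [InnerProductSpace ℝ V]
    (m : ℕ) (A : Fin m → V →ₗ[ℝ] V) : ℝ :=
  ∑ α : Fin m, LinearMap.trace ℝ V (A α ∘ₗ A α)

/-- Trace of an endomorphism computed in an orthonormal basis. -/
private theorem trace_eq_sum_inner_onb {V : Type*} [NormedAddCommGroup V]
    [InnerProductSpace ℝ V] [FiniteDimensional ℝ V]
    {n : ℕ} (e : OrthonormalBasis (Fin n) ℝ V) (T : V →ₗ[ℝ] V) :
    LinearMap.trace ℝ V T = ∑ i : Fin n, ⟪T (e i), e i⟫ := by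
  rw [LinearMap.trace_eq_matrix_trace ℝ e.toBasis, Matrix.trace]
  congr 1
  ext i
  rw [Matrix.diag_apply, LinearMap.toMatrix_apply, e.coe_toBasis_repr_apply,
    e.repr_apply_apply, e.coe_toBasis, real_inner_comm]

/-- Parseval identity for the squared norm in an orthonormal basis. -/
private theorem norm_sq_eq_sum_inner_onb {V : Type*} [NormedAddCommGroup V]
    [InnerProductSpace ℝ V] [FiniteDimensional ℝ V]
    {n : ℕ} (e : OrthonormalBasis (Fin n) ℝ V) (x : V) :
    ‖x‖ ^ 2 = ∑ i : Fin n, ⟪x, e i⟫ ^ 2 := by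
  rw [← real_inner_self_eq_norm_sq, ← e.sum_inner_mul_inner x x]
  congr 1; ext i; rw [sq, real_inner_comm x (e i)]

/-- The algebraic certificate used in the final quadratic-form estimate. -/
private theorem theta_certificate (p q : ℝ) (hp : 2 ≤ p) (hpq : p ≤ q) :
    ∃ l1 l2 mu : ℝ, 0 ≤ l1 ∧ 0 ≤ l2 ∧ 0 ≤ mu ∧
      p * l1 + q * l2 = p * q - (p + q) ∧
      (∀ x y : ℝ,
        (1 + l1) * x ^ 2 / p + (1 + l2) * y ^ 2 / q + x * y
          - l1 * ((x + y) * x) - l2 * ((x + y) * y)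
          - (1 - p * q * ((p + q) - 2) / (p + q) ^ 2) * (x + y) ^ 2
        = mu * (q * x - p * y) ^ 2) := by
  set n : ℝ := p + q with hn
  have hq2 : 2 ≤ q := le_trans hp hpq
  have hp0 : (0:ℝ) < p := by linarith
  have hq0 : (0:ℝ) < q := by linarith
  have hn0 : (0:ℝ) < n := by simp only [hn]; linarith
  have hn2 : (0:ℝ) < n - 2 := by simp only [hn]; linarith
  have hp1 : (0:ℝ) < p - 1 := by linarith
  have hq1 : (0:ℝ) < q - 1 := by linarith
  set D : ℝ := n ^ 2 * (n - 2) with hD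
  set N1 : ℝ := -n ^ 2 * (p - 1) * (n - 2) + p ^ 2 * q * (n - 2) ^ 2 - q * (q - p) ^ 2 with hN1
  set N2 : ℝ := -n ^ 2 * (q - 1) * (n - 2) + q ^ 2 * p * (n - 2) ^ 2 - p * (q - p) ^ 2 with hN2
  have ha : (0:ℝ) ≤ p - 2 := by linarith
  have hs : (0:ℝ) ≤ q - p := by linarith
  have hmono : ∀ i j : ℕ, (0:ℝ) ≤ (p - 2) ^ i * (q - p) ^ j :=
    fun i j => mul_nonneg (pow_nonneg ha i) (pow_nonneg hs j)
  have hN1pos : (0 : ℝ) ≤ N1 := by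
    have hexp : N1 = 16 * ((p-2)^0*(q-p)^1) + 12 * ((p-2)^0*(q-p)^2) + 2 * ((p-2)^0*(q-p)^3)
        + 16 * ((p-2)^1*(q-p)^0) + 56 * ((p-2)^1*(q-p)^1) + 27 * ((p-2)^1*(q-p)^2)
        + 3 * ((p-2)^1*(q-p)^3) + 48 * ((p-2)^2*(q-p)^0) + 72 * ((p-2)^2*(q-p)^1)
        + 20 * ((p-2)^2*(q-p)^2) + 1 * ((p-2)^2*(q-p)^3) + 52 * ((p-2)^3*(q-p)^0)
        + 40 * ((p-2)^3*(q-p)^1) + 5 * ((p-2)^3*(q-p)^2) + 24 * ((p-2)^4*(q-p)^0)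
        + 8 * ((p-2)^4*(q-p)^1) + 4 * ((p-2)^5*(q-p)^0) := by
      simp only [hN1, hn]; ring
    rw [hexp]
    have h01 := hmono 0 1; have h02 := hmono 0 2; have h03 := hmono 0 3
    have h10 := hmono 1 0; have h11 := hmono 1 1; have h12 := hmono 1 2; have h13 := hmono 1 3
    have h20 := hmono 2 0; have h21 := hmono 2 1; have h22 := hmono 2 2; have h23 := hmono 2 3
    have h30 := hmono 3 0; have h31 := hmono 3 1; have h32 := hmono 3 2
    have h40 := hmono 4 0; have h41 := hmono 4 1; have h50 := hmono 5 0
    linarith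
  have hN2pos : (0 : ℝ) ≤ N2 := by
    have hexp : N2 = 4 * ((p-2)^0*(q-p)^2) + 5 * ((p-2)^0*(q-p)^3) + 1 * ((p-2)^0*(q-p)^4)
        + 16 * ((p-2)^1*(q-p)^0) + 40 * ((p-2)^1*(q-p)^1) + 39 * ((p-2)^1*(q-p)^2)
        + 13 * ((p-2)^1*(q-p)^3) + 1 * ((p-2)^1*(q-p)^4) + 48 * ((p-2)^2*(q-p)^0)
        + 84 * ((p-2)^2*(q-p)^1) + 44 * ((p-2)^2*(q-p)^2) + 6 * ((p-2)^2*(q-p)^3)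
        + 52 * ((p-2)^3*(q-p)^0) + 56 * ((p-2)^3*(q-p)^1) + 13 * ((p-2)^3*(q-p)^2)
        + 24 * ((p-2)^4*(q-p)^0) + 12 * ((p-2)^4*(q-p)^1) + 4 * ((p-2)^5*(q-p)^0) := by
      simp only [hN2, hn]; ring
    rw [hexp]
    have h02 := hmono 0 2; have h03 := hmono 0 3; have h04 := hmono 0 4
    have h10 := hmono 1 0; have h11 := hmono 1 1; have h12 := hmono 1 2; have h13 := hmono 1 3
    have h14 := hmono 1 4; have h20 := hmono 2 0; have h21 := hmono 2 1; have h22 := hmono 2 2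
    have h23 := hmono 2 3; have h30 := hmono 3 0; have h31 := hmono 3 1; have h32 := hmono 3 2
    have h40 := hmono 4 0; have h41 := hmono 4 1; have h50 := hmono 5 0
    linarith
  refine ⟨N1 / ((p - 1) * D), N2 / ((q - 1) * D), (q - p) ^ 2 / (p * q * D),
    div_nonneg hN1pos (by positivity), div_nonneg hN2pos (by positivity),
    by positivity, ?_, ?_⟩
  · have hnz : p + q - 2 ≠ 0 := by linarith
    have hp1z : p - 1 ≠ 0 := by linarith
    have hq1z : q - 1 ≠ 0 := by linarith
    simp only [hN1, hN2, hD, hn]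
    field_simp
    ring
  · intro x y
    have hnz : p + q - 2 ≠ 0 := by linarith
    have hp1z : p - 1 ≠ 0 := by linarith
    have hq1z : q - 1 ≠ 0 := by linarith
    simp only [hN1, hN2, hD, hn]
    field_simp
    ring

theorem ricci_pinched_theta_le {V : Type*} [NormedAddCommGroup V] [InnerProductSpace ℝ V]
    [FiniteDimensional ℝ V] (n m : ℕ)
    (hdim : Module.finrank ℝ V = n)
    (A : Fin m → V →ₗ[ℝ] V) (hsymm : ∀ α : Fin m, (A α).IsSymmetric)
    (c H : ℝ) (hH : 0 ≤ H)
    (hHdef : (n : ℝ) ^ 2 * H ^ 2 = ∑ α : Fin m, (LinearMap.trace ℝ V (A α)) ^ 2)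
    (hn : 4 ≤ n)
    (hRic : ∀ X : V, ‖X‖ = 1 → RicCurv m n c A X ≥ ((n : ℝ) - 2) * (c + H ^ 2)) :
    ∀ p : ℕ, 2 ≤ p → 2 * p ≤ n → ∀ e : OrthonormalBasis (Fin n) ℝ V,
      Theta m p A e ≤ (p : ℝ) * ((n : ℝ) - p) * c := by
  classical
  intro p hp2 hpn e
  have hpn' : p < n := by omega
  -- index sets (as opaque variables, to keep `linarith` atom matching robust)
  obtain ⟨I, hIdef⟩ : ∃ s : Finset (Fin n),
      s = Finset.univ.filter (fun i : Fin n => (i : ℕ) < p) := ⟨_, rfl⟩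
  obtain ⟨J, hJdef⟩ : ∃ s : Finset (Fin n),
      s = Finset.univ.filter (fun j : Fin n => p ≤ (j : ℕ)) := ⟨_, rfl⟩
  have hcardI : I.card = p := by
    have hIeq : I = Finset.Iio (⟨p, hpn'⟩ : Fin n) := by
      rw [hIdef]; ext i; simp [Fin.lt_def]
    rw [hIeq, Fin.card_Iio]
  have hcardJ : J.card = n - p := by
    have hJeq : J = Finset.Ici (⟨p, hpn'⟩ : Fin n) := by
      rw [hJdef]; ext i; simp [Fin.le_def]
    rw [hJeq, Fin.card_Ici]
  have huniv : ∀ f : Fin n → ℝ, ∑ i : Fin n, f i = (∑ i ∈ I, f i) + ∑ j ∈ J, f j := by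
    intro f
    rw [← Finset.sum_filter_add_sum_filter_not Finset.univ (fun i : Fin n => (i : ℕ) < p) f]
    rw [hIdef, hJdef]
    congr 1
    apply Finset.sum_congr _ (fun _ _ => rfl)
    apply Finset.filter_congr
    intro i _
    simp [not_lt]
  -- real constants
  obtain ⟨pR, hpRdef⟩ : ∃ x : ℝ, x = (p : ℝ) := ⟨_, rfl⟩
  obtain ⟨qR, hqRdef⟩ : ∃ x : ℝ, x = (n : ℝ) - pR := ⟨_, rfl⟩
  have hp2R : (2:ℝ) ≤ pR := by rw [hpRdef]; exact_mod_cast hp2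
  have hpqR : pR ≤ qR := by
    have h2p : (2:ℝ) * pR ≤ (n : ℝ) := by rw [hpRdef]; exact_mod_cast hpn
    rw [hqRdef]; linarith
  have hp0R : (0:ℝ) < pR := by linarith
  have hq0R : (0:ℝ) < qR := by linarith
  have hnR : (n : ℝ) = pR + qR := by rw [hqRdef]; ring
  have hqcast : ((n - p : ℕ) : ℝ) = qR := by
    rw [hqRdef, hpRdef]
    push_cast [Nat.cast_sub hpn'.le]
    ring
  obtain ⟨k, hkdef⟩ : ∃ x : ℝ, x = c - ((n : ℝ) - 2) * H ^ 2 := ⟨_, rfl⟩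
  -- symmetry of the entries
  have hsymE : ∀ (α : Fin m) (i j : Fin n), ⟪(A α) (e i), e j⟫ = ⟪(A α) (e j), e i⟫ := by
    intro α i j
    rw [hsymm α (e i) (e j), real_inner_comm]
  -- trace split
  have htr : ∀ α : Fin m, LinearMap.trace ℝ V (A α)
      = (∑ i ∈ I, ⟪(A α) (e i), e i⟫) + ∑ j ∈ J, ⟪(A α) (e j), e j⟫ := by
    intro α
    rw [trace_eq_sum_inner_onb e (A α), huniv]
  -- the pointwise Ricci inequality
  have hRic' : ∀ i : Fin n,
      (∑ α : Fin m, ∑ j : Fin n, ⟪(A α) (e i), e j⟫ ^ 2)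
        ≤ k + ∑ α : Fin m, LinearMap.trace ℝ V (A α) * ⟪(A α) (e i), e i⟫ := by
    intro i
    have h0 := hRic (e i) (e.orthonormal.1 i)
    rw [RicCurv] at h0
    have hpar : ∀ α : Fin m, ‖(A α) (e i)‖ ^ 2 = ∑ j : Fin n, ⟪(A α) (e i), e j⟫ ^ 2 :=
      fun α => norm_sq_eq_sum_inner_onb e ((A α) (e i))
    simp only [hpar] at h0
    rw [hkdef]
    linarith
  -- Cauchy–Schwarz for the diagonal sums
  have hCSI : ∀ α : Fin m, (∑ i ∈ I, ⟪(A α) (e i), e i⟫) ^ 2 / pR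
      ≤ ∑ i ∈ I, ⟪(A α) (e i), e i⟫ ^ 2 := by
    intro α
    have h1 : (∑ i ∈ I, ⟪(A α) (e i), e i⟫) ^ 2
        ≤ (I.card : ℝ) * ∑ i ∈ I, ⟪(A α) (e i), e i⟫ ^ 2 :=
      sq_sum_le_card_mul_sum_sq
    rw [hcardI, ← hpRdef] at h1
    rw [div_le_iff₀ hp0R]
    linarith [h1]
  have hCSJ : ∀ α : Fin m, (∑ j ∈ J, ⟪(A α) (e j), e j⟫) ^ 2 / qR
      ≤ ∑ j ∈ J, ⟪(A α) (e j), e j⟫ ^ 2 := by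
    intro α
    have h1 : (∑ j ∈ J, ⟪(A α) (e j), e j⟫) ^ 2
        ≤ (J.card : ℝ) * ∑ j ∈ J, ⟪(A α) (e j), e j⟫ ^ 2 :=
      sq_sum_le_card_mul_sum_sq
    rw [hcardJ, hqcast] at h1
    rw [div_le_iff₀ hq0R]
    linarith [h1]
  -- main inequality (B): sum the Ricci inequality over I
  have hB : (∑ α : Fin m, ∑ i ∈ I, ∑ j ∈ J, ⟪(A α) (e i), e j⟫ ^ 2)
      + (∑ α : Fin m, (∑ i ∈ I, ⟪(A α) (e i), e i⟫) ^ 2) / pR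
      ≤ pR * k + ∑ α : Fin m, LinearMap.trace ℝ V (A α) * ∑ i ∈ I, ⟪(A α) (e i), e i⟫ := by
    have hs1 : ∑ i ∈ I, (∑ α : Fin m, ∑ j : Fin n, ⟪(A α) (e i), e j⟫ ^ 2)
        ≤ ∑ i ∈ I, (k + ∑ α : Fin m, LinearMap.trace ℝ V (A α) * ⟪(A α) (e i), e i⟫) :=
      Finset.sum_le_sum (fun i _ => hRic' i)
    have hrhs : ∑ i ∈ I, (k + ∑ α : Fin m, LinearMap.trace ℝ V (A α) * ⟪(A α) (e i), e i⟫)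
        = pR * k + ∑ α : Fin m, LinearMap.trace ℝ V (A α) * ∑ i ∈ I, ⟪(A α) (e i), e i⟫ := by
      rw [Finset.sum_add_distrib, Finset.sum_const, hcardI, nsmul_eq_mul, ← hpRdef,
        Finset.sum_comm]
      congr 1
      exact Finset.sum_congr rfl (fun α _ => by rw [Finset.mul_sum])
    have hlhs : ∑ i ∈ I, (∑ α : Fin m, ∑ j : Fin n, ⟪(A α) (e i), e j⟫ ^ 2)
        = (∑ α : Fin m, ∑ i ∈ I, ∑ j ∈ I, ⟪(A α) (e i), e j⟫ ^ 2)
          + ∑ α : Fin m, ∑ i ∈ I, ∑ j ∈ J, ⟪(A α) (e i), e j⟫ ^ 2 := by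
      rw [Finset.sum_comm]
      simp only [huniv, Finset.sum_add_distrib]
    have hdiag : ∀ α : Fin m, ∑ i ∈ I, ⟪(A α) (e i), e i⟫ ^ 2
        ≤ ∑ i ∈ I, ∑ j ∈ I, ⟪(A α) (e i), e j⟫ ^ 2 :=
      fun α => Finset.sum_le_sum (fun i hi =>
        Finset.single_le_sum (f := fun j => ⟪(A α) (e i), e j⟫ ^ 2)
          (fun j _ => sq_nonneg _) hi)
    have h2 : (∑ α : Fin m, (∑ i ∈ I, ⟪(A α) (e i), e i⟫) ^ 2) / pR
        ≤ ∑ α : Fin m, ∑ i ∈ I, ∑ j ∈ I, ⟪(A α) (e i), e j⟫ ^ 2 := by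
      rw [Finset.sum_div]
      exact Finset.sum_le_sum (fun α _ => le_trans (hCSI α) (hdiag α))
    have hmain : (∑ α : Fin m, ∑ i ∈ I, ∑ j ∈ I, ⟪(A α) (e i), e j⟫ ^ 2)
        + (∑ α : Fin m, ∑ i ∈ I, ∑ j ∈ J, ⟪(A α) (e i), e j⟫ ^ 2)
        ≤ pR * k + ∑ α : Fin m, LinearMap.trace ℝ V (A α) * ∑ i ∈ I, ⟪(A α) (e i), e i⟫ := by
      rw [← hlhs, ← hrhs]; exact hs1
    linarith [hmain, h2]
  -- main inequality (C): sum the Ricci inequality over J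
  have hflip : (∑ α : Fin m, ∑ j ∈ J, ∑ i ∈ I, ⟪(A α) (e j), e i⟫ ^ 2)
      = ∑ α : Fin m, ∑ i ∈ I, ∑ j ∈ J, ⟪(A α) (e i), e j⟫ ^ 2 := by
    refine Finset.sum_congr rfl (fun α _ => ?_)
    rw [Finset.sum_comm]
    exact Finset.sum_congr rfl (fun i _ => Finset.sum_congr rfl (fun j _ => by
      rw [hsymE α j i]))
  have hC : (∑ α : Fin m, ∑ i ∈ I, ∑ j ∈ J, ⟪(A α) (e i), e j⟫ ^ 2)
      + (∑ α : Fin m, (∑ j ∈ J, ⟪(A α) (e j), e j⟫) ^ 2) / qR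
      ≤ qR * k + ∑ α : Fin m, LinearMap.trace ℝ V (A α) * ∑ j ∈ J, ⟪(A α) (e j), e j⟫ := by
    have hs1 : ∑ j ∈ J, (∑ α : Fin m, ∑ i : Fin n, ⟪(A α) (e j), e i⟫ ^ 2)
        ≤ ∑ j ∈ J, (k + ∑ α : Fin m, LinearMap.trace ℝ V (A α) * ⟪(A α) (e j), e j⟫) :=
      Finset.sum_le_sum (fun j _ => hRic' j)
    have hrhs : ∑ j ∈ J, (k + ∑ α : Fin m, LinearMap.trace ℝ V (A α) * ⟪(A α) (e j), e j⟫)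
        = qR * k + ∑ α : Fin m, LinearMap.trace ℝ V (A α) * ∑ j ∈ J, ⟪(A α) (e j), e j⟫ := by
      rw [Finset.sum_add_distrib, Finset.sum_const, hcardJ, nsmul_eq_mul, hqcast,
        Finset.sum_comm]
      congr 1
      exact Finset.sum_congr rfl (fun α _ => by rw [Finset.mul_sum])
    have hlhs : ∑ j ∈ J, (∑ α : Fin m, ∑ i : Fin n, ⟪(A α) (e j), e i⟫ ^ 2)
        = (∑ α : Fin m, ∑ j ∈ J, ∑ i ∈ I, ⟪(A α) (e j), e i⟫ ^ 2)
          + ∑ α : Fin m, ∑ j ∈ J, ∑ i ∈ J, ⟪(A α) (e j), e i⟫ ^ 2 := by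
      rw [Finset.sum_comm]
      simp only [huniv, Finset.sum_add_distrib]
    have hdiag : ∀ α : Fin m, ∑ j ∈ J, ⟪(A α) (e j), e j⟫ ^ 2
        ≤ ∑ j ∈ J, ∑ i ∈ J, ⟪(A α) (e j), e i⟫ ^ 2 :=
      fun α => Finset.sum_le_sum (fun j hj =>
        Finset.single_le_sum (f := fun i => ⟪(A α) (e j), e i⟫ ^ 2)
          (fun i _ => sq_nonneg _) hj)
    have h2 : (∑ α : Fin m, (∑ j ∈ J, ⟪(A α) (e j), e j⟫) ^ 2) / qR
        ≤ ∑ α : Fin m, ∑ j ∈ J, ∑ i ∈ J, ⟪(A α) (e j), e i⟫ ^ 2 := by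
      rw [Finset.sum_div]
      exact Finset.sum_le_sum (fun α _ => le_trans (hCSJ α) (hdiag α))
    have hmain : (∑ α : Fin m, ∑ j ∈ J, ∑ i ∈ I, ⟪(A α) (e j), e i⟫ ^ 2)
        + (∑ α : Fin m, ∑ j ∈ J, ∑ i ∈ J, ⟪(A α) (e j), e i⟫ ^ 2)
        ≤ qR * k + ∑ α : Fin m, LinearMap.trace ℝ V (A α) * ∑ j ∈ J, ⟪(A α) (e j), e j⟫ := by
      rw [← hlhs, ← hrhs]; exact hs1
    rw [← hflip]
    linarith [hmain, h2]
  -- rewriting Theta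
  have hswap : ∀ F : Fin m → Fin n → Fin n → ℝ,
      (∑ i ∈ I, ∑ j ∈ J, ∑ α : Fin m, F α i j)
        = ∑ α : Fin m, ∑ i ∈ I, ∑ j ∈ J, F α i j := by
    intro F
    calc (∑ i ∈ I, ∑ j ∈ J, ∑ α : Fin m, F α i j)
        = ∑ i ∈ I, ∑ α : Fin m, ∑ j ∈ J, F α i j :=
          Finset.sum_congr rfl (fun i _ => Finset.sum_comm)
      _ = ∑ α : Fin m, ∑ i ∈ I, ∑ j ∈ J, F α i j := Finset.sum_comm
  have hT : Theta m p A e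
      = 2 * (∑ α : Fin m, ∑ i ∈ I, ∑ j ∈ J, ⟪(A α) (e i), e j⟫ ^ 2)
        - ∑ α : Fin m, (∑ i ∈ I, ⟪(A α) (e i), e i⟫) * (∑ j ∈ J, ⟪(A α) (e j), e j⟫) := by
    rw [Theta, ← hIdef, ← hJdef]
    calc ∑ i ∈ I, ∑ j ∈ J,
          (2 * ∑ α : Fin m, ⟪(A α) (e i), e j⟫ ^ 2
            - ∑ α : Fin m, ⟪(A α) (e i), e i⟫ * ⟪(A α) (e j), e j⟫)
        = (∑ i ∈ I, ∑ j ∈ J, ∑ α : Fin m, 2 * ⟪(A α) (e i), e j⟫ ^ 2)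
          - ∑ i ∈ I, ∑ j ∈ J, ∑ α : Fin m, ⟪(A α) (e i), e i⟫ * ⟪(A α) (e j), e j⟫ := by
          simp only [Finset.mul_sum, Finset.sum_sub_distrib]
      _ = (∑ α : Fin m, ∑ i ∈ I, ∑ j ∈ J, 2 * ⟪(A α) (e i), e j⟫ ^ 2)
          - ∑ α : Fin m, ∑ i ∈ I, ∑ j ∈ J, ⟪(A α) (e i), e i⟫ * ⟪(A α) (e j), e j⟫ := by
          rw [hswap, hswap]
      _ = 2 * (∑ α : Fin m, ∑ i ∈ I, ∑ j ∈ J, ⟪(A α) (e i), e j⟫ ^ 2)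
          - ∑ α : Fin m, (∑ i ∈ I, ⟪(A α) (e i), e i⟫) * (∑ j ∈ J, ⟪(A α) (e j), e j⟫) := by
          congr 1
          · simp only [← Finset.mul_sum]
          · exact Finset.sum_congr rfl (fun α _ =>
              (Finset.sum_mul_sum I J (fun i => ⟪(A α) (e i), e i⟫)
                (fun j => ⟪(A α) (e j), e j⟫)).symm)
  -- trace splitting identity
  have hF4 : (∑ α : Fin m, LinearMap.trace ℝ V (A α) * ∑ i ∈ I, ⟪(A α) (e i), e i⟫)
      + (∑ α : Fin m, LinearMap.trace ℝ V (A α) * ∑ j ∈ J, ⟪(A α) (e j), e j⟫)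
      = ∑ α : Fin m, (LinearMap.trace ℝ V (A α)) ^ 2 := by
    rw [← Finset.sum_add_distrib]
    refine Finset.sum_congr rfl (fun α _ => ?_)
    rw [htr α]
    ring
  -- the certificate
  obtain ⟨l1, l2, mu, hl1, hl2, hmu, hsum, hid⟩ := theta_certificate pR qR hp2R hpqR
  obtain ⟨G, hGdef⟩ : ∃ x : ℝ,
      x = 1 - pR * qR * ((pR + qR) - 2) / (pR + qR) ^ 2 := ⟨_, rfl⟩
  -- aggregated quadratic-form inequality
  have hF6 : 0 ≤ (1 + l1) * (∑ α : Fin m, (∑ i ∈ I, ⟪(A α) (e i), e i⟫) ^ 2) / pR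
      + (1 + l2) * (∑ α : Fin m, (∑ j ∈ J, ⟪(A α) (e j), e j⟫) ^ 2) / qR
      + (∑ α : Fin m, (∑ i ∈ I, ⟪(A α) (e i), e i⟫) * (∑ j ∈ J, ⟪(A α) (e j), e j⟫))
      - l1 * (∑ α : Fin m, LinearMap.trace ℝ V (A α) * ∑ i ∈ I, ⟪(A α) (e i), e i⟫)
      - l2 * (∑ α : Fin m, LinearMap.trace ℝ V (A α) * ∑ j ∈ J, ⟪(A α) (e j), e j⟫)
      - G * ∑ α : Fin m, (LinearMap.trace ℝ V (A α)) ^ 2 := by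
    have hagg : (1 + l1) * (∑ α : Fin m, (∑ i ∈ I, ⟪(A α) (e i), e i⟫) ^ 2) / pR
        + (1 + l2) * (∑ α : Fin m, (∑ j ∈ J, ⟪(A α) (e j), e j⟫) ^ 2) / qR
        + (∑ α : Fin m, (∑ i ∈ I, ⟪(A α) (e i), e i⟫) * (∑ j ∈ J, ⟪(A α) (e j), e j⟫))
        - l1 * (∑ α : Fin m, LinearMap.trace ℝ V (A α) * ∑ i ∈ I, ⟪(A α) (e i), e i⟫)
        - l2 * (∑ α : Fin m, LinearMap.trace ℝ V (A α) * ∑ j ∈ J, ⟪(A α) (e j), e j⟫)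
        - G * ∑ α : Fin m, (LinearMap.trace ℝ V (A α)) ^ 2
        = ∑ α : Fin m,
            ((1 + l1) * (∑ i ∈ I, ⟪(A α) (e i), e i⟫) ^ 2 / pR
              + (1 + l2) * (∑ j ∈ J, ⟪(A α) (e j), e j⟫) ^ 2 / qR
              + (∑ i ∈ I, ⟪(A α) (e i), e i⟫) * (∑ j ∈ J, ⟪(A α) (e j), e j⟫)
              - l1 * (LinearMap.trace ℝ V (A α) * ∑ i ∈ I, ⟪(A α) (e i), e i⟫)
              - l2 * (LinearMap.trace ℝ V (A α) * ∑ j ∈ J, ⟪(A α) (e j), e j⟫)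
              - G * (LinearMap.trace ℝ V (A α)) ^ 2) := by
      simp only [Finset.mul_sum, Finset.sum_div, Finset.sum_sub_distrib, Finset.sum_add_distrib]
    rw [hagg]
    refine Finset.sum_nonneg (fun α _ => ?_)
    rw [htr α, hGdef]
    rw [hid (∑ i ∈ I, ⟪(A α) (e i), e i⟫) (∑ j ∈ J, ⟪(A α) (e j), e j⟫)]
    exact mul_nonneg hmu (sq_nonneg _)
  -- nonnegativity of the cross term
  have hC2nn : 0 ≤ ∑ α : Fin m, ∑ i ∈ I, ∑ j ∈ J, ⟪(A α) (e i), e j⟫ ^ 2 :=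
    Finset.sum_nonneg fun α _ => Finset.sum_nonneg fun i _ =>
      Finset.sum_nonneg fun j _ => sq_nonneg _
  -- prepackaged nonlinear facts
  have h1 : l1 * ((∑ α : Fin m, (∑ i ∈ I, ⟪(A α) (e i), e i⟫) ^ 2) / pR
      - ∑ α : Fin m, LinearMap.trace ℝ V (A α) * ∑ i ∈ I, ⟪(A α) (e i), e i⟫)
      ≤ l1 * (pR * k) := by
    apply mul_le_mul_of_nonneg_left _ hl1
    linarith [hB, hC2nn]
  have h2 : l2 * ((∑ α : Fin m, (∑ j ∈ J, ⟪(A α) (e j), e j⟫) ^ 2) / qR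
      - ∑ α : Fin m, LinearMap.trace ℝ V (A α) * ∑ j ∈ J, ⟪(A α) (e j), e j⟫)
      ≤ l2 * (qR * k) := by
    apply mul_le_mul_of_nonneg_left _ hl2
    linarith [hC, hC2nn]
  have hcomb : l1 * (pR * k) + l2 * (qR * k) = (pR * qR - (pR + qR)) * k := by
    linear_combination k * hsum
  have hG : G * (∑ α : Fin m, (LinearMap.trace ℝ V (A α)) ^ 2)
      = (∑ α : Fin m, (LinearMap.trace ℝ V (A α)) ^ 2)
        - pR * qR * ((pR + qR) - 2) * H ^ 2 := by
    rw [← hHdef, hGdef, hnR]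
    have hpq0 : pR + qR ≠ 0 := by positivity
    field_simp
  have hPc : pR * qR * c = pR * qR * k + pR * qR * ((pR + qR) - 2) * H ^ 2 := by
    rw [hkdef]
    linear_combination (pR * qR * H ^ 2) * hnR
  have hgoal : Theta m p A e ≤ pR * qR * c := by
    rw [hT]
    simp only [div_eq_mul_inv] at hB hC hF6 h1 h2
    linarith [hB, hC, hF4, hF6, h1, h2, hcomb, hG, hPc]
  rw [← hpRdef, ← hqRdef]
  exact hgoal
end

section
/- Let V, A_1,…,A_m, c, n, H, Ric, Θ_p be as in the setting, with n ≥ 4. Assume that Ric(X) > (n−2)(c+H²) for every unit vector X ∈ V. Then for every integer p with 2 ≤ p ≤ n/2 and every orthonormal basis e_1,…,e_n of V one has Θ_p < p(n−p)c. (Strict case of Proposition 2, part (i).) -/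
open scoped RealInnerProductSpace

set_option maxHeartbeats 1000000 in
theorem core_lemma' (p q c H2 u x z P Q R : ℝ)
    (hp : 2 ≤ p) (hq : 2 ≤ q)
    (hu : 0 ≤ u) (hP : 0 ≤ P) (hQ : 0 ≤ Q)
    (hR : R ^ 2 ≤ P * Q) (hx : P ≤ p * x) (hz : Q ≤ q * z)
    (hH : (p + q) ^ 2 * H2 = P + 2 * R + Q)
    (h1 : x + u < p * c - p * ((p + q) - 2) * H2 + (P + R))
    (h2 : z + u < q * c - q * ((p + q) - 2) * H2 + (Q + R)) :
    2 * u - R < p * q * c := by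
  by_contra hcon
  push_neg at hcon
  have hp0 : (0:ℝ) < p := by linarith
  have hq0 : (0:ℝ) < q := by linarith
  have hN0 : (0:ℝ) < p + q := by linarith
  have hF1 : 0 < p*q*(p+q)^2*(P+R) - p*(p+q)^2*R - p^2*q*((p+q)-2)*(P+2*R+Q)
      - q*(p+q)^2*P := by
    have m1 := mul_lt_mul_of_pos_left h1 (show (0:ℝ) < p*q*(p+q)^2 by positivity)
    have m2 := mul_le_mul_of_nonneg_left hcon (show (0:ℝ) ≤ p*(p+q)^2 by positivity)
    have m3 := mul_le_mul_of_nonneg_left hx (show (0:ℝ) ≤ q*(p+q)^2 by positivity)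
    have m4 : 0 ≤ p*(p+q)^2*(q-2)*u := by
      have h' : (0:ℝ) ≤ q - 2 := by linarith
      positivity
    have m5 : p^2*q*((p+q)-2)*((p+q)^2*H2) = p^2*q*((p+q)-2)*(P+2*R+Q) := by rw [hH]
    nlinarith [m1, m2, m3, m4, m5]
  have hF2 : 0 < p*q*(p+q)^2*(Q+R) - q*(p+q)^2*R - p*q^2*((p+q)-2)*(P+2*R+Q)
      - p*(p+q)^2*Q := by
    have m1 := mul_lt_mul_of_pos_left h2 (show (0:ℝ) < p*q*(p+q)^2 by positivity)
    have m2 := mul_le_mul_of_nonneg_left hcon (show (0:ℝ) ≤ q*(p+q)^2 by positivity)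
    have m3 := mul_le_mul_of_nonneg_left hz (show (0:ℝ) ≤ p*(p+q)^2 by positivity)
    have m4 : 0 ≤ q*(p+q)^2*(p-2)*u := by
      have h' : (0:ℝ) ≤ p - 2 := by linarith
      positivity
    have m5 : p*q^2*((p+q)-2)*((p+q)^2*H2) = p*q^2*((p+q)-2)*(P+2*R+Q) := by rw [hH]
    nlinarith [m1, m2, m3, m4, m5]
  have hs1 : 0 < p^2 + p*q + q - 3*p := by
    nlinarith [mul_nonneg (show (0:ℝ) ≤ p - 2 by linarith) hp0.le]
  have hs2 : 0 < q^2 + p*q + p - 3*q := by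
    nlinarith [mul_nonneg (show (0:ℝ) ≤ q - 2 by linarith) hq0.le]
  have w1 := mul_pos (mul_pos hq0 hs1) hF1
  have w2 := mul_pos (mul_pos hp0 hs2) hF2
  have hkey : 0 < (q - p)^2 * (p + q) * (2*p*q*R - q^2*P - p^2*Q) := by nlinarith [w1, w2]
  have hM : 0 < 2*p*q*R - q^2*P - p^2*Q := by
    by_contra hM'
    push_neg at hM'
    have := mul_nonneg (mul_nonneg (sq_nonneg (q-p)) hN0.le) (neg_nonneg.mpr hM')
    nlinarith [this, hkey]
  have hq2P : 0 ≤ q^2*P := by positivity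
  have hp2Q : 0 ≤ p^2*Q := by positivity
  have hsumpos : 0 < 2*p*q*R + q^2*P + p^2*Q := by linarith
  have hint1 := mul_pos hM hsumpos
  have hint3 := mul_le_mul_of_nonneg_left hR (show (0:ℝ) ≤ 4*p^2*q^2 by positivity)
  nlinarith [hint1, hint3, sq_nonneg (q^2*P - p^2*Q)]


set_option maxHeartbeats 1000000 in
theorem ricci_pinched_theta_lt {V : Type*} [NormedAddCommGroup V] [InnerProductSpace ℝ V]
    [FiniteDimensional ℝ V] (n m : ℕ)
    (hdim : Module.finrank ℝ V = n)
    (A : Fin m → V →ₗ[ℝ] V) (hsymm : ∀ α : Fin m, (A α).IsSymmetric)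
    (c H : ℝ) (hH : 0 ≤ H)
    (hHdef : (n : ℝ) ^ 2 * H ^ 2 = ∑ α : Fin m, (LinearMap.trace ℝ V (A α)) ^ 2)
    (hn : 4 ≤ n)
    (hRic : ∀ X : V, ‖X‖ = 1 → RicCurv m n c A X > ((n : ℝ) - 2) * (c + H ^ 2)) :
    ∀ p : ℕ, 2 ≤ p → 2 * p ≤ n → ∀ e : OrthonormalBasis (Fin n) ℝ V,
      Theta m p A e < (p : ℝ) * ((n : ℝ) - p) * c := by
  classical
  intro p hp2 h2pn e
  have hpltn : p < n := by omega
  set I : Finset (Fin n) := Finset.univ.filter (fun i : Fin n => (i : ℕ) < p) with hIdef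
  set J : Finset (Fin n) := Finset.univ.filter (fun j : Fin n => p ≤ (j : ℕ)) with hJdef
  have hJnot : J = Finset.univ.filter (fun i : Fin n => ¬ (i : ℕ) < p) := by
    rw [hJdef]; apply Finset.filter_congr; intro i _; simp [not_lt]
  have hsplit : ∀ f : Fin n → ℝ, (∑ i, f i) = (∑ i ∈ I, f i) + (∑ j ∈ J, f j) := by
    intro f
    rw [hJnot, hIdef, Finset.sum_filter_add_sum_filter_not]
  have hcardI : I.card = p := by
    have h : I = Finset.Iio (⟨p, hpltn⟩ : Fin n) := by
      ext i
      simp [hIdef, Finset.mem_Iio, Fin.lt_def]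
    rw [h, Fin.card_Iio]
  have hcardJ : J.card = n - p := by
    have h := Finset.card_filter_add_card_filter_not
      (s := (Finset.univ : Finset (Fin n))) (p := fun i : Fin n => (i : ℕ) < p)
    rw [← hIdef, ← hJnot] at h
    simp only [Finset.card_univ, Fintype.card_fin] at h
    omega
  have hInonempty : I.Nonempty := by
    rw [← Finset.card_pos, hcardI]; omega
  have hJnonempty : J.Nonempty := by
    rw [← Finset.card_pos, hcardJ]; omega
  have hnorm1 : ∀ i : Fin n, ‖e i‖ = 1 := fun i => e.orthonormal.1 i
  have htrace : ∀ α, LinearMap.trace ℝ V (A α) = ∑ i, ⟪(A α) (e i), e i⟫ := by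
    intro α
    rw [LinearMap.trace_eq_matrix_trace ℝ e.toBasis, Matrix.trace]
    apply Finset.sum_congr rfl
    intro i _
    simp [Matrix.diag, LinearMap.toMatrix_apply, OrthonormalBasis.coe_toBasis,
      OrthonormalBasis.coe_toBasis_repr_apply, OrthonormalBasis.repr_apply_apply,
      real_inner_comm]
  have hnormsq : ∀ α (i : Fin n), ‖(A α) (e i)‖ ^ 2 = ∑ j, ⟪(A α) (e i), e j⟫ ^ 2 := by
    intro α i
    rw [← real_inner_self_eq_norm_sq]
    rw [← e.sum_inner_mul_inner ((A α) (e i)) ((A α) (e i))]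
    apply Finset.sum_congr rfl
    intro j _
    rw [real_inner_comm (e j) ((A α) (e i)), sq]
  have hsymh : ∀ α (i j : Fin n), ⟪(A α) (e i), e j⟫ = ⟪(A α) (e j), e i⟫ := by
    intro α i j
    rw [hsymm α (e i) (e j), real_inner_comm]
  set t : Fin m → ℝ := fun α => ∑ i ∈ I, ⟪(A α) (e i), e i⟫ with htdef
  set r : Fin m → ℝ := fun α => ∑ j ∈ J, ⟪(A α) (e j), e j⟫ with hrdef
  set P : ℝ := ∑ α, (t α) ^ 2 with hPdef
  set Q : ℝ := ∑ α, (r α) ^ 2 with hQdef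
  set R : ℝ := ∑ α, t α * r α with hRdef
  set u : ℝ := ∑ α, ∑ i ∈ I, ∑ j ∈ J, ⟪(A α) (e i), e j⟫ ^ 2 with hudef
  set x : ℝ := ∑ α, ∑ i ∈ I, ∑ j ∈ I, ⟪(A α) (e i), e j⟫ ^ 2 with hxdef
  set z : ℝ := ∑ α, ∑ i ∈ J, ∑ j ∈ J, ⟪(A α) (e i), e j⟫ ^ 2 with hzdef
  have htr : ∀ α, LinearMap.trace ℝ V (A α) = t α + r α := by
    intro α
    rw [htrace α, hsplit]
  -- swap helper
  have hswap : ∀ (S T : Finset (Fin n)) (g : Fin m → Fin n → Fin n → ℝ),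
      (∑ i ∈ S, ∑ j ∈ T, ∑ α, g α i j) = ∑ α, ∑ i ∈ S, ∑ j ∈ T, g α i j := by
    intro S T g
    calc (∑ i ∈ S, ∑ j ∈ T, ∑ α, g α i j)
        = ∑ i ∈ S, ∑ α, ∑ j ∈ T, g α i j :=
          Finset.sum_congr rfl (fun i _ => Finset.sum_comm)
      _ = ∑ α, ∑ i ∈ S, ∑ j ∈ T, g α i j := Finset.sum_comm
  -- Theta in terms of u and R
  have hTheta : Theta m p A e = 2 * u - R := by
    rw [show Theta m p A e = (∑ i ∈ I, ∑ j ∈ J,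
        (2 * ∑ α : Fin m, ⟪(A α) (e i), e j⟫ ^ 2
          - ∑ α : Fin m, ⟪(A α) (e i), e i⟫ * ⟪(A α) (e j), e j⟫)) from rfl]
    rw [Finset.sum_congr rfl (fun i (_ : i ∈ I) => Finset.sum_sub_distrib
      (s := J) _ _), Finset.sum_sub_distrib]
    congr 1
    · rw [Finset.sum_congr rfl (fun i (_ : i ∈ I) => (Finset.mul_sum J _ 2).symm),
        ← Finset.mul_sum]
      rw [hswap I J (fun α i j => ⟪(A α) (e i), e j⟫ ^ 2)]
    · rw [hswap I J (fun α i j => ⟪(A α) (e i), e i⟫ * ⟪(A α) (e j), e j⟫)]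
      rw [hRdef]
      apply Finset.sum_congr rfl
      intro α _
      rw [htdef, hrdef]
      exact (Finset.sum_mul_sum I J _ _).symm
  -- middle terms
  have hmidI : (∑ i ∈ I, ∑ α, LinearMap.trace ℝ V (A α) * ⟪(A α) (e i), e i⟫) = P + R := by
    rw [Finset.sum_comm]
    have h1 : ∀ α, (∑ i ∈ I, LinearMap.trace ℝ V (A α) * ⟪(A α) (e i), e i⟫)
        = (t α)^2 + t α * r α := by
      intro α
      rw [← Finset.mul_sum, htr α]
      have : (∑ i ∈ I, ⟪(A α) (e i), e i⟫) = t α := by rw [htdef]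
      rw [this]; ring
    rw [Finset.sum_congr rfl (fun α _ => h1 α), Finset.sum_add_distrib, hPdef, hRdef]
  have hmidJ : (∑ j ∈ J, ∑ α, LinearMap.trace ℝ V (A α) * ⟪(A α) (e j), e j⟫) = Q + R := by
    rw [Finset.sum_comm]
    have h1 : ∀ α, (∑ j ∈ J, LinearMap.trace ℝ V (A α) * ⟪(A α) (e j), e j⟫)
        = (r α)^2 + t α * r α := by
      intro α
      rw [← Finset.mul_sum, htr α]
      have : (∑ j ∈ J, ⟪(A α) (e j), e j⟫) = r α := by rw [hrdef]
      rw [this]; ring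
    rw [Finset.sum_congr rfl (fun α _ => h1 α), Finset.sum_add_distrib, hQdef, hRdef]
  -- norm sums
  have hlastI : (∑ i ∈ I, ∑ α, ‖(A α) (e i)‖^2) = x + u := by
    rw [Finset.sum_comm]
    have h1 : ∀ α, (∑ i ∈ I, ‖(A α) (e i)‖^2)
        = (∑ i ∈ I, ∑ j ∈ I, ⟪(A α) (e i), e j⟫^2)
          + (∑ i ∈ I, ∑ j ∈ J, ⟪(A α) (e i), e j⟫^2) := by
      intro α
      rw [← Finset.sum_add_distrib]
      apply Finset.sum_congr rfl
      intro i _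
      rw [hnormsq α i, hsplit]
    rw [Finset.sum_congr rfl (fun α _ => h1 α), Finset.sum_add_distrib, hxdef, hudef]
  have hlastJ : (∑ j ∈ J, ∑ α, ‖(A α) (e j)‖^2) = u + z := by
    rw [Finset.sum_comm]
    have hcross : ∀ α, (∑ j ∈ J, ∑ k ∈ I, ⟪(A α) (e j), e k⟫^2)
        = ∑ i ∈ I, ∑ j ∈ J, ⟪(A α) (e i), e j⟫^2 := by
      intro α
      rw [Finset.sum_comm]
      apply Finset.sum_congr rfl
      intro k _
      apply Finset.sum_congr rfl
      intro j _
      rw [hsymh α j k]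
    have h1 : ∀ α, (∑ j ∈ J, ‖(A α) (e j)‖^2)
        = (∑ i ∈ I, ∑ j ∈ J, ⟪(A α) (e i), e j⟫^2)
          + (∑ i ∈ J, ∑ j ∈ J, ⟪(A α) (e i), e j⟫^2) := by
      intro α
      rw [← hcross α, ← Finset.sum_add_distrib]
      apply Finset.sum_congr rfl
      intro j _
      rw [hnormsq α j, hsplit]
    rw [Finset.sum_congr rfl (fun α _ => h1 α), Finset.sum_add_distrib, hudef, hzdef]
  -- Ricci sums
  have hRicI : (p:ℝ) * (((n:ℝ) - 2) * (c + H^2)) < ∑ i ∈ I, RicCurv m n c A (e i) := by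
    have h := Finset.sum_lt_sum_of_nonempty hInonempty
      (f := fun _ : Fin n => ((n:ℝ) - 2) * (c + H^2))
      (g := fun i => RicCurv m n c A (e i)) (fun i _ => hRic (e i) (hnorm1 i))
    rwa [Finset.sum_const, hcardI, nsmul_eq_mul] at h
  have hRicJ : ((n:ℝ) - p) * (((n:ℝ) - 2) * (c + H^2)) < ∑ j ∈ J, RicCurv m n c A (e j) := by
    have h := Finset.sum_lt_sum_of_nonempty hJnonempty
      (f := fun _ : Fin n => ((n:ℝ) - 2) * (c + H^2))
      (g := fun j => RicCurv m n c A (e j)) (fun j _ => hRic (e j) (hnorm1 j))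
    rw [Finset.sum_const, hcardJ, nsmul_eq_mul] at h
    rwa [Nat.cast_sub hpltn.le] at h
  have hexpand : ∀ S : Finset (Fin n), (∑ i ∈ S, RicCurv m n c A (e i))
      = (S.card : ℝ) * (((n:ℝ)-1)*c)
        + (∑ i ∈ S, ∑ α, LinearMap.trace ℝ V (A α) * ⟪(A α) (e i), e i⟫)
        - ∑ i ∈ S, ∑ α, ‖(A α) (e i)‖^2 := by
    intro S
    rw [show (∑ i ∈ S, RicCurv m n c A (e i)) = ∑ i ∈ S, (((n:ℝ)-1)*c
      + (∑ α, LinearMap.trace ℝ V (A α) * ⟪(A α) (e i), e i⟫)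
      - ∑ α, ‖(A α) (e i)‖^2) from rfl]
    rw [Finset.sum_sub_distrib, Finset.sum_add_distrib, Finset.sum_const, nsmul_eq_mul]
  -- the aggregate inequalities
  have hq2 : (2:ℝ) ≤ (n:ℝ) - p := by
    have h : p + 2 ≤ n := by omega
    have h' := (Nat.cast_le (α := ℝ)).mpr h
    push_cast at h'
    linarith
  have hp2' : (2:ℝ) ≤ (p:ℝ) := by exact_mod_cast hp2
  have h1 : x + u < (p:ℝ)*c - (p:ℝ)*(((p:ℝ) + ((n:ℝ)-(p:ℝ))) - 2)*H^2 + (P + R) := by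
    have he := hexpand I
    rw [hcardI, hmidI, hlastI] at he
    rw [he] at hRicI
    have hppq : (p:ℝ) + ((n:ℝ) - (p:ℝ)) = (n:ℝ) := by ring
    rw [hppq]
    nlinarith [hRicI]
  have h2 : z + u < ((n:ℝ)-(p:ℝ))*c - ((n:ℝ)-(p:ℝ))*(((p:ℝ) + ((n:ℝ)-(p:ℝ))) - 2)*H^2
      + (Q + R) := by
    have he := hexpand J
    rw [hcardJ, hmidJ, hlastJ] at he
    rw [Nat.cast_sub hpltn.le] at he
    rw [he] at hRicJ
    have hppq : (p:ℝ) + ((n:ℝ) - (p:ℝ)) = (n:ℝ) := by ring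
    rw [hppq]
    nlinarith [hRicJ]
  have hu0 : 0 ≤ u := by
    rw [hudef]
    exact Finset.sum_nonneg fun α _ => Finset.sum_nonneg fun i _ =>
      Finset.sum_nonneg fun j _ => sq_nonneg _
  have hP0 : 0 ≤ P := by
    rw [hPdef]; exact Finset.sum_nonneg fun α _ => sq_nonneg _
  have hQ0 : 0 ≤ Q := by
    rw [hQdef]; exact Finset.sum_nonneg fun α _ => sq_nonneg _
  have hRC : R^2 ≤ P * Q := by
    rw [hPdef, hQdef, hRdef]
    exact Finset.sum_mul_sq_le_sq_mul_sq Finset.univ t r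
  have hxineq : P ≤ (p:ℝ) * x := by
    rw [hPdef, hxdef, Finset.mul_sum]
    apply Finset.sum_le_sum
    intro α _
    have c1 : (t α)^2 ≤ (I.card : ℝ) * ∑ i ∈ I, ⟪(A α) (e i), e i⟫^2 := by
      have := sq_sum_le_card_mul_sum_sq (s := I) (f := fun i => ⟪(A α) (e i), e i⟫)
      rw [htdef]
      exact_mod_cast this
    have c2 : (∑ i ∈ I, ⟪(A α) (e i), e i⟫^2) ≤ ∑ i ∈ I, ∑ j ∈ I, ⟪(A α) (e i), e j⟫^2 := by
      apply Finset.sum_le_sum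
      intro i hi
      exact Finset.single_le_sum (f := fun j => ⟪(A α) (e i), e j⟫^2)
        (fun j _ => sq_nonneg _) hi
    calc (t α)^2 ≤ (I.card : ℝ) * ∑ i ∈ I, ⟪(A α) (e i), e i⟫^2 := c1
      _ = (p:ℝ) * ∑ i ∈ I, ⟪(A α) (e i), e i⟫^2 := by rw [hcardI]
      _ ≤ (p:ℝ) * ∑ i ∈ I, ∑ j ∈ I, ⟪(A α) (e i), e j⟫^2 := by
          apply mul_le_mul_of_nonneg_left c2
          positivity
  have hzineq : Q ≤ ((n:ℝ)-(p:ℝ)) * z := by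
    rw [hQdef, hzdef, Finset.mul_sum]
    apply Finset.sum_le_sum
    intro α _
    have c1 : (r α)^2 ≤ (J.card : ℝ) * ∑ j ∈ J, ⟪(A α) (e j), e j⟫^2 := by
      have := sq_sum_le_card_mul_sum_sq (s := J) (f := fun j => ⟪(A α) (e j), e j⟫)
      rw [hrdef]
      exact_mod_cast this
    have c2 : (∑ i ∈ J, ⟪(A α) (e i), e i⟫^2) ≤ ∑ i ∈ J, ∑ j ∈ J, ⟪(A α) (e i), e j⟫^2 := by
      apply Finset.sum_le_sum
      intro i hi
      exact Finset.single_le_sum (f := fun j => ⟪(A α) (e i), e j⟫^2)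
        (fun j _ => sq_nonneg _) hi
    calc (r α)^2 ≤ (J.card : ℝ) * ∑ j ∈ J, ⟪(A α) (e j), e j⟫^2 := c1
      _ = ((n:ℝ)-(p:ℝ)) * ∑ j ∈ J, ⟪(A α) (e j), e j⟫^2 := by
          rw [hcardJ, Nat.cast_sub hpltn.le]
      _ ≤ ((n:ℝ)-(p:ℝ)) * ∑ i ∈ J, ∑ j ∈ J, ⟪(A α) (e i), e j⟫^2 := by
          apply mul_le_mul_of_nonneg_left c2
          linarith
  have hH2eq : ((p:ℝ) + ((n:ℝ)-(p:ℝ)))^2 * H^2 = P + 2*R + Q := by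
    have hsum : ∑ α, (LinearMap.trace ℝ V (A α))^2 = P + 2*R + Q := by
      calc ∑ α, (LinearMap.trace ℝ V (A α))^2
          = ∑ α, (t α + r α)^2 := Finset.sum_congr rfl (fun α _ => by rw [htr α])
        _ = ∑ α, ((t α)^2 + 2*(t α * r α) + (r α)^2) :=
            Finset.sum_congr rfl (fun α _ => by ring)
        _ = P + 2*R + Q := by
            rw [Finset.sum_add_distrib, Finset.sum_add_distrib, ← Finset.mul_sum,
              hPdef, hQdef, hRdef]
    have hppq : (p:ℝ) + ((n:ℝ) - (p:ℝ)) = (n:ℝ) := by ring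
    rw [hppq, ← hsum, ← hHdef]
  have hcore := core_lemma' (p:ℝ) ((n:ℝ)-(p:ℝ)) c (H^2) u x z P Q R
    hp2' hq2 hu0 hP0 hQ0 hRC hxineq hzineq hH2eq h1 h2
  rw [hTheta]
  exact hcore
end

section
/- Let V, A_1,…,A_m, c, n, H, Ric, Θ_p be as in the setting, with n ≥ 4. Assume Ric(X) ≥ (n−2)(c+H²) for every unit vector X ∈ V, and that for some integer p with 2 ≤ p ≤ n/2 and some orthonormal basis e_1,…,e_n of V equality Θ_p = p(n−p)c holds. Then Ric(X) = (n−2)(c+H²) for every unit vector X ∈ V. (First conclusion of Proposition 2, part (ii).) -/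
open scoped RealInnerProductSpace

section Aux

lemma perAlpha (N P : ℝ) (hN : 4 ≤ N) (hp : 2 ≤ P) (h2p : 2*P ≤ N)
    (t r C D b : ℝ) (hC : t^2 ≤ P*C) (hD : (r-t)^2 ≤ (N-P)*D) (hb : 0 ≤ b) :
    N^2*(N-2)*P*(N-P)*(2*b - t*(r-t)) + N^2*P*(N-P)*(N-2*P)*(r*t - C - b)
      ≤ N*P^2*(N-P)*((N-P)*(N-2)-(N-2*P))*(C+D+2*b)
        - P^2*(N-P)*(N^2-4*N+4*P)*r^2 := by
  have hNP : (0:ℝ) ≤ N - 2*P := by linarith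
  have hP0 : (0:ℝ) < P := by linarith
  have hN0 : (0:ℝ) < N := by linarith
  have hNmP : (0:ℝ) < N - P := by linarith
  have hE : 0 ≤ (N-P)*(N-2)-(N-2*P) := by
    nlinarith [mul_nonneg hNP (by linarith : (0:ℝ) ≤ N-4),
      mul_nonneg hP0.le (by linarith : (0:ℝ) ≤ N-4)]
  have hW : 0 ≤ 2*P*((N-P)*(N-2)-(N-2*P)) + N*(N-2*P) - 2*N*(N-2) := by
    nlinarith [mul_nonneg (by linarith : (0:ℝ) ≤ P-2) (by linarith : (0:ℝ) ≤ N-P-2),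
      sq_nonneg (N-2*P)]
  have e1 : 0 ≤ N*(N-P)*(P*((N-P)*(N-2)-(N-2*P))+N*(N-2*P)) * (P*C - t^2) :=
    mul_nonneg (mul_nonneg (mul_nonneg hN0.le hNmP.le)
      (add_nonneg (mul_nonneg hP0.le hE) (mul_nonneg hN0.le hNP))) (by linarith)
  have e2 : 0 ≤ N*P^2*((N-P)*(N-2)-(N-2*P)) * ((N-P)*D - (r-t)^2) :=
    mul_nonneg (mul_nonneg (mul_nonneg hN0.le (sq_nonneg P)) hE) (by linarith)
  have e3 : 0 ≤ N*P*(N-P)*(2*P*((N-P)*(N-2)-(N-2*P)) + N*(N-2*P) - 2*N*(N-2)) * b :=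
    mul_nonneg (mul_nonneg (mul_nonneg (mul_nonneg hN0.le hP0.le) hNmP.le) hW) hb
  have e4 : 0 ≤ (N-2*P)^2*(N*t-P*r)^2 := mul_nonneg (sq_nonneg _) (sq_nonneg _)
  have key : N*P^2*(N-P)*((N-P)*(N-2)-(N-2*P))*(C+D+2*b) - P^2*(N-P)*(N^2-4*N+4*P)*r^2
      - (N^2*(N-2)*P*(N-P)*(2*b - t*(r-t)) + N^2*P*(N-P)*(N-2*P)*(r*t - C - b))
      = N*(N-P)*(P*((N-P)*(N-2)-(N-2*P))+N*(N-2*P)) * (P*C - t^2)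
        + N*P^2*((N-P)*(N-2)-(N-2*P)) * ((N-P)*D - (r-t)^2)
        + N*P*(N-P)*(2*P*((N-P)*(N-2)-(N-2*P)) + N*(N-2*P) - 2*N*(N-2)) * b
        + (N-2*P)^2*(N*t-P*r)^2 := by ring
  linarith [key, e1, e2, e3, e4]

variable {V : Type*} [NormedAddCommGroup V] [InnerProductSpace ℝ V]

omit [InnerProductSpace ℝ V] in
lemma dummy : True := trivial

lemma trace_onb [FiniteDimensional ℝ V] {n : ℕ} (f : OrthonormalBasis (Fin n) ℝ V)
    (T : V →ₗ[ℝ] V) :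
    LinearMap.trace ℝ V T = ∑ i, ⟪T (f i), f i⟫ := by
  rw [LinearMap.trace_eq_matrix_trace ℝ f.toBasis, Matrix.trace]
  congr 1
  ext i
  rw [Matrix.diag_apply, LinearMap.toMatrix_apply, OrthonormalBasis.coe_toBasis,
    OrthonormalBasis.coe_toBasis_repr_apply, OrthonormalBasis.repr_apply_apply,
    real_inner_comm]

lemma normsq_onb {n : ℕ} (f : OrthonormalBasis (Fin n) ℝ V) (v : V) :
    ‖v‖ ^ 2 = ∑ i, ⟪v, f i⟫ ^ 2 := by
  rw [← real_inner_self_eq_norm_sq, ← f.sum_inner_mul_inner v v]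
  congr 1; ext i; rw [real_inner_comm (f i) v]; ring

lemma sumnorm_onb [FiniteDimensional ℝ V] {n : ℕ} (f : OrthonormalBasis (Fin n) ℝ V)
    (T : V →ₗ[ℝ] V) (hT : T.IsSymmetric) :
    ∑ i, ‖T (f i)‖ ^ 2 = LinearMap.trace ℝ V (T ∘ₗ T) := by
  rw [trace_onb f]
  refine Finset.sum_congr rfl fun i _ => ?_
  rw [LinearMap.comp_apply, hT (T (f i)) (f i), real_inner_self_eq_norm_sq]

lemma ricSum [FiniteDimensional ℝ V] (m n : ℕ) (c : ℝ) (A : Fin m → V →ₗ[ℝ] V)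
    (hsymm : ∀ α : Fin m, (A α).IsSymmetric) (f : OrthonormalBasis (Fin n) ℝ V) :
    ∑ i, RicCurv m n c A (f i)
      = (n : ℝ) * (((n : ℝ) - 1) * c)
        + (∑ α : Fin m, (LinearMap.trace ℝ V (A α))^2) - Ssec m A := by
  unfold RicCurv Ssec
  have h1 : ∑ i : Fin n, ∑ α : Fin m, LinearMap.trace ℝ V (A α) * ⟪(A α) (f i), f i⟫
      = ∑ α : Fin m, (LinearMap.trace ℝ V (A α))^2 := by
    rw [Finset.sum_comm]
    refine Finset.sum_congr rfl fun α _ => ?_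
    rw [← Finset.mul_sum, ← trace_onb f (A α), sq]
  have h2 : ∑ i : Fin n, ∑ α : Fin m, ‖(A α) (f i)‖^2
      = ∑ α : Fin m, LinearMap.trace ℝ V (A α ∘ₗ A α) := by
    rw [Finset.sum_comm]
    exact Finset.sum_congr rfl fun α _ => sumnorm_onb f (A α) (hsymm α)
  rw [Finset.sum_sub_distrib, Finset.sum_add_distrib, h1, h2, Finset.sum_const,
    Finset.card_univ, Fintype.card_fin, nsmul_eq_mul]

end Aux

theorem ricci_pinched_equality_einstein {V : Type*} [NormedAddCommGroup V] [InnerProductSpace ℝ V]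
    [FiniteDimensional ℝ V] (n m : ℕ)
    (hdim : Module.finrank ℝ V = n)
    (A : Fin m → V →ₗ[ℝ] V) (hsymm : ∀ α : Fin m, (A α).IsSymmetric)
    (c H : ℝ) (hH : 0 ≤ H)
    (hHdef : (n : ℝ) ^ 2 * H ^ 2 = ∑ α : Fin m, (LinearMap.trace ℝ V (A α)) ^ 2)
    (hn : 4 ≤ n)
    (hRic : ∀ X : V, ‖X‖ = 1 → RicCurv m n c A X ≥ ((n : ℝ) - 2) * (c + H ^ 2))
    (p : ℕ) (hp1 : 2 ≤ p) (hp2 : 2 * p ≤ n)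
    (e : OrthonormalBasis (Fin n) ℝ V)
    (heq : Theta m p A e = (p : ℝ) * ((n : ℝ) - p) * c) :
    ∀ X : V, ‖X‖ = 1 → RicCurv m n c A X = ((n : ℝ) - 2) * (c + H ^ 2) := by
  classical
  have hpn : p ≤ n := by omega
  have hN4 : (4:ℝ) ≤ (n:ℝ) := by exact_mod_cast hn
  have hP2 : (2:ℝ) ≤ (p:ℝ) := by exact_mod_cast hp1
  have h2PN : 2*(p:ℝ) ≤ (n:ℝ) := by exact_mod_cast hp2
  have hunit : ∀ i, ‖e i‖ = 1 := fun i => e.orthonormal.1 i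
  set Pf := Finset.univ.filter (fun i : Fin n => (i:ℕ) < p) with hPfdef
  set Qf := Finset.univ.filter (fun i : Fin n => p ≤ (i:ℕ)) with hQfdef
  have hsplit : ∀ g : Fin n → ℝ, ∑ i, g i = (∑ i ∈ Pf, g i) + ∑ i ∈ Qf, g i := by
    intro g
    rw [hPfdef, hQfdef,
      ← Finset.sum_filter_add_sum_filter_not Finset.univ (fun i : Fin n => (i:ℕ) < p) g]
    congr 1
    apply Finset.sum_congr _ (fun _ _ => rfl)
    ext i; simp [not_lt]
  have cardPf : Pf.card = p := by
    have : Pf = Finset.map (Fin.castLEEmb hpn) Finset.univ := by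
      rw [hPfdef]; ext i; simp [Fin.lt_iff_val_lt_val]
      constructor
      · intro hi; exact ⟨⟨i, hi⟩, rfl⟩
      · rintro ⟨j, rfl⟩; exact j.2
    rw [this]; simp
  have cardQf : Qf.card = n - p := by
    have h := Finset.card_filter_add_card_filter_not
      (s := (Finset.univ : Finset (Fin n))) (p := fun i : Fin n => (i:ℕ) < p)
    have h2 : Finset.univ.filter (fun i : Fin n => ¬ (i:ℕ) < p) = Qf := by
      rw [hQfdef]; apply Finset.filter_congr; intro i _; simp [not_lt]
    rw [h2, ← hPfdef, cardPf, Finset.card_univ, Fintype.card_fin] at h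
    omega
  -- abbreviations for the per-α quantities
  set tA : Fin m → ℝ := fun α => ∑ i ∈ Pf, ⟪(A α) (e i), e i⟫ with htAdef
  set rA : Fin m → ℝ := fun α => LinearMap.trace ℝ V (A α) with hrAdef
  set CA : Fin m → ℝ := fun α => ∑ i ∈ Pf, ∑ j ∈ Pf, ⟪(A α) (e i), e j⟫^2 with hCAdef
  set DA : Fin m → ℝ := fun α => ∑ i ∈ Qf, ∑ j ∈ Qf, ⟪(A α) (e i), e j⟫^2 with hDAdef
  set BA : Fin m → ℝ := fun α => ∑ i ∈ Pf, ∑ j ∈ Qf, ⟪(A α) (e i), e j⟫^2 with hBAdef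
  have hip : ∀ (α : Fin m) (i j : Fin n), ⟪(A α) (e i), e j⟫ = ⟪(A α) (e j), e i⟫ := by
    intro α i j; rw [hsymm α (e i) (e j), real_inner_comm]
  have hrATr : ∀ α, rA α = ∑ i, ⟪(A α) (e i), e i⟫ := fun α => trace_onb e (A α)
  have hsA : ∀ α, rA α - tA α = ∑ j ∈ Qf, ⟪(A α) (e j), e j⟫ := by
    intro α
    rw [hrATr α, hsplit (fun i => ⟪(A α) (e i), e i⟫)]
    simp [htAdef]
  have htrsq : ∀ α, LinearMap.trace ℝ V (A α ∘ₗ A α) = CA α + DA α + 2*BA α := by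
    intro α
    rw [← sumnorm_onb e (A α) (hsymm α)]
    have expand : ∀ i, ‖(A α) (e i)‖^2 = ∑ j, ⟪(A α) (e i), e j⟫^2 :=
      fun i => normsq_onb e _
    calc ∑ i, ‖(A α) (e i)‖^2 = ∑ i, ∑ j, ⟪(A α) (e i), e j⟫^2 :=
          Finset.sum_congr rfl fun i _ => expand i
      _ = (∑ i ∈ Pf, ∑ j, ⟪(A α) (e i), e j⟫^2)
          + ∑ i ∈ Qf, ∑ j, ⟪(A α) (e i), e j⟫^2 := hsplit _
      _ = ((∑ i ∈ Pf, ∑ j ∈ Pf, ⟪(A α) (e i), e j⟫^2)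
            + ∑ i ∈ Pf, ∑ j ∈ Qf, ⟪(A α) (e i), e j⟫^2)
          + ((∑ i ∈ Qf, ∑ j ∈ Pf, ⟪(A α) (e i), e j⟫^2)
            + ∑ i ∈ Qf, ∑ j ∈ Qf, ⟪(A α) (e i), e j⟫^2) := by
        rw [Finset.sum_congr rfl (fun i (_ : i ∈ Pf) => hsplit (fun j => ⟪(A α) (e i), e j⟫^2)),
          Finset.sum_congr rfl (fun i (_ : i ∈ Qf) => hsplit (fun j => ⟪(A α) (e i), e j⟫^2)),
          Finset.sum_add_distrib, Finset.sum_add_distrib]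
      _ = CA α + DA α + 2*BA α := by
        have hswap : ∑ i ∈ Qf, ∑ j ∈ Pf, ⟪(A α) (e i), e j⟫^2 = BA α := by
          rw [Finset.sum_comm]
          simp only [hBAdef]
          exact Finset.sum_congr rfl fun i _ => Finset.sum_congr rfl fun j _ => by
            rw [hip α i j]
        rw [hswap]; simp only [hCAdef, hDAdef, hBAdef]; ring
  -- Ricci curvature of basis vectors
  have hRicB : ∀ i : Fin n, RicCurv m n c A (e i)
      = ((n:ℝ) - 1)*c + (∑ α, rA α * ⟪(A α) (e i), e i⟫)
        - ∑ α, ∑ j, ⟪(A α) (e i), e j⟫^2 := by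
    intro i
    unfold RicCurv
    have : ∑ α, ‖(A α) (e i)‖^2 = ∑ α, ∑ j, ⟪(A α) (e i), e j⟫^2 :=
      Finset.sum_congr rfl fun α _ => normsq_onb e _
    rw [this, hrAdef]
    -- Theta expansion
  have hper : ∀ α : Fin m, (∑ i ∈ Pf, ∑ j ∈ Qf,
      (2*⟪(A α) (e i), e j⟫^2 - ⟪(A α) (e i), e i⟫*⟪(A α) (e j), e j⟫))
      = 2*BA α - tA α*(rA α - tA α) := by
    intro α
    rw [hsA α, htAdef, hBAdef]
    simp only [Finset.sum_sub_distrib, Finset.mul_sum, Finset.sum_mul]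
    congr 1
    rw [Finset.sum_comm]
  have hThetaE : (2*∑ α, BA α) - (∑ α, tA α * (rA α - tA α)) = (p:ℝ)*((n:ℝ)-p)*c := by
    rw [← heq]
    unfold Theta
    rw [← hPfdef, ← hQfdef]
    refine Eq.symm ?_
    calc (∑ i ∈ Pf, ∑ j ∈ Qf, (2 * ∑ α : Fin m, ⟪(A α) (e i), e j⟫ ^ 2
            - ∑ α : Fin m, ⟪(A α) (e i), e i⟫ * ⟪(A α) (e j), e j⟫))
        = ∑ i ∈ Pf, ∑ j ∈ Qf, ∑ α : Fin m,
            (2*⟪(A α) (e i), e j⟫^2 - ⟪(A α) (e i), e i⟫*⟪(A α) (e j), e j⟫) := by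
          refine Finset.sum_congr rfl fun i _ => Finset.sum_congr rfl fun j _ => ?_
          rw [Finset.mul_sum, ← Finset.sum_sub_distrib]
      _ = ∑ α : Fin m, ∑ i ∈ Pf, ∑ j ∈ Qf,
            (2*⟪(A α) (e i), e j⟫^2 - ⟪(A α) (e i), e i⟫*⟪(A α) (e j), e j⟫) := by
          rw [Finset.sum_congr rfl (fun i (_ : i ∈ Pf) => Finset.sum_comm), Finset.sum_comm]
      _ = ∑ α : Fin m, (2*BA α - tA α*(rA α - tA α)) :=
          Finset.sum_congr rfl fun α _ => hper α
      _ = (2*∑ α, BA α) - (∑ α, tA α * (rA α - tA α)) := by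
          rw [Finset.sum_sub_distrib, ← Finset.mul_sum]
    -- partial Ricci sum bound (R1)
  have hR1 : (p:ℝ)*(((n:ℝ)-2)*(c+H^2))
      ≤ (p:ℝ)*(((n:ℝ)-1)*c) + (∑ α, rA α * tA α) - ∑ α, (CA α + BA α) := by
    have hb : ∀ i ∈ Pf, ((n:ℝ)-2)*(c+H^2) ≤ RicCurv m n c A (e i) :=
      fun i _ => hRic (e i) (hunit i)
    have hs := Finset.card_nsmul_le_sum Pf _ _ hb
    rw [cardPf, nsmul_eq_mul] at hs
    have hexp : ∑ i ∈ Pf, RicCurv m n c A (e i)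
        = (p:ℝ)*(((n:ℝ)-1)*c) + (∑ α, rA α * tA α) - ∑ α, (CA α + BA α) := by
      rw [Finset.sum_congr rfl (fun i (_ : i ∈ Pf) => hRicB i), Finset.sum_sub_distrib,
        Finset.sum_add_distrib, Finset.sum_const, cardPf, nsmul_eq_mul]
      congr 1
      · congr 1
        rw [Finset.sum_comm]
        refine Finset.sum_congr rfl fun α _ => ?_
        rw [← Finset.mul_sum, htAdef]
      · rw [Finset.sum_comm]
        refine Finset.sum_congr rfl fun α _ => ?_
        rw [Finset.sum_congr rfl
          (fun i (_ : i ∈ Pf) => hsplit (fun j => ⟪(A α) (e i), e j⟫^2)),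
          Finset.sum_add_distrib]
    rw [hexp] at hs
    exact hs
  -- global Ricci sum and upper bound on S
  have hRs := ricSum m n c A hsymm e
  have hAll : (n:ℝ)*(((n:ℝ)-2)*(c+H^2)) ≤ ∑ i, RicCurv m n c A (e i) := by
    have hb : ∀ i ∈ Finset.univ, ((n:ℝ)-2)*(c+H^2) ≤ RicCurv m n c A (e i) :=
      fun i _ => hRic (e i) (hunit i)
    have hs := Finset.card_nsmul_le_sum Finset.univ _ _ hb
    rwa [Finset.card_univ, Fintype.card_fin, nsmul_eq_mul] at hs
  have hUpper : Ssec m A ≤ (n:ℝ)*c + 2*(n:ℝ)*H^2 := by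
    rw [hRs, ← hHdef] at hAll
    nlinarith only [hAll]
  -- Cauchy–Schwarz bounds
  have hCb : ∀ α, (tA α)^2 ≤ (p:ℝ) * CA α := by
    intro α
    have h1 : ∑ i ∈ Pf, ⟪(A α) (e i), e i⟫^2 ≤ CA α := by
      rw [hCAdef]
      exact Finset.sum_le_sum fun i hi =>
        Finset.single_le_sum (fun j _ => sq_nonneg (⟪(A α) (e i), e j⟫)) hi
    have h2 := sq_sum_le_card_mul_sum_sq (s := Pf) (f := fun i => ⟪(A α) (e i), e i⟫)
    rw [cardPf] at h2
    have h2' : (tA α)^2 ≤ (p:ℝ) * ∑ i ∈ Pf, ⟪(A α) (e i), e i⟫^2 := by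
      rw [htAdef]; exact_mod_cast h2
    calc (tA α)^2 ≤ (p:ℝ) * ∑ i ∈ Pf, ⟪(A α) (e i), e i⟫^2 := h2'
      _ ≤ (p:ℝ) * CA α := by
        apply mul_le_mul_of_nonneg_left h1; linarith only [hP2]
  have hDb : ∀ α, (rA α - tA α)^2 ≤ ((n:ℝ)-(p:ℝ)) * DA α := by
    intro α
    have h1 : ∑ i ∈ Qf, ⟪(A α) (e i), e i⟫^2 ≤ DA α := by
      rw [hDAdef]
      exact Finset.sum_le_sum fun i hi =>
        Finset.single_le_sum (fun j _ => sq_nonneg (⟪(A α) (e i), e j⟫)) hi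
    have h2 := sq_sum_le_card_mul_sum_sq (s := Qf) (f := fun i => ⟪(A α) (e i), e i⟫)
    rw [cardQf] at h2
    have hcast : ((n - p : ℕ) : ℝ) = (n:ℝ) - (p:ℝ) := by
      have := hpn; push_cast [this]; ring
    have h2' : (rA α - tA α)^2 ≤ ((n:ℝ)-(p:ℝ)) * ∑ i ∈ Qf, ⟪(A α) (e i), e i⟫^2 := by
      rw [hsA α, ← hcast]
      exact h2
    calc (rA α - tA α)^2 ≤ ((n:ℝ)-(p:ℝ)) * ∑ i ∈ Qf, ⟪(A α) (e i), e i⟫^2 := h2'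
      _ ≤ ((n:ℝ)-(p:ℝ)) * DA α := by
        apply mul_le_mul_of_nonneg_left h1; linarith only [hP2, h2PN]
  have hBb : ∀ α : Fin m, 0 ≤ BA α := by
    intro α; rw [hBAdef]
    exact Finset.sum_nonneg fun i _ => Finset.sum_nonneg fun j _ => sq_nonneg _
    -- sum the per-α master inequality
  have hSM := Finset.sum_le_sum
    (fun α (_ : α ∈ (Finset.univ : Finset (Fin m))) => perAlpha (n:ℝ) (p:ℝ) hN4 hP2 h2PN
      (tA α) (rA α) (CA α) (DA α) (BA α) (hCb α) (hDb α) (hBb α))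
  have lin2 : ∀ (K : ℝ) (f : Fin m → ℝ), ∑ α, K * f α = K * ∑ α, f α :=
    fun K f => (Finset.mul_sum _ _ _).symm
  have hLagg : ∑ α, ((n:ℝ)^2*((n:ℝ)-2)*(p:ℝ)*((n:ℝ)-(p:ℝ))*(2*BA α - tA α*(rA α - tA α))
        + (n:ℝ)^2*(p:ℝ)*((n:ℝ)-(p:ℝ))*((n:ℝ)-2*(p:ℝ))*(rA α*tA α - CA α - BA α))
      = (n:ℝ)^2*((n:ℝ)-2)*(p:ℝ)*((n:ℝ)-(p:ℝ))*(2*(∑ α, BA α) - ∑ α, tA α*(rA α - tA α))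
        + (n:ℝ)^2*(p:ℝ)*((n:ℝ)-(p:ℝ))*((n:ℝ)-2*(p:ℝ))
          *((∑ α, rA α*tA α) - (∑ α, CA α) - ∑ α, BA α) := by
    rw [Finset.sum_add_distrib, lin2, lin2]
    congr 1
    · congr 1
      rw [Finset.sum_sub_distrib, lin2]
    · congr 1
      rw [Finset.sum_sub_distrib, Finset.sum_sub_distrib]
  have hRagg : ∑ α, ((n:ℝ)*(p:ℝ)^2*((n:ℝ)-(p:ℝ))*(((n:ℝ)-(p:ℝ))*((n:ℝ)-2)-((n:ℝ)-2*(p:ℝ)))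
          *(CA α + DA α + 2*BA α)
        - (p:ℝ)^2*((n:ℝ)-(p:ℝ))*((n:ℝ)^2-4*(n:ℝ)+4*(p:ℝ))*(rA α)^2)
      = (n:ℝ)*(p:ℝ)^2*((n:ℝ)-(p:ℝ))*(((n:ℝ)-(p:ℝ))*((n:ℝ)-2)-((n:ℝ)-2*(p:ℝ)))
          *((∑ α, CA α) + (∑ α, DA α) + 2*(∑ α, BA α))
        - (p:ℝ)^2*((n:ℝ)-(p:ℝ))*((n:ℝ)^2-4*(n:ℝ)+4*(p:ℝ))*((n:ℝ)^2*H^2) := by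
    rw [Finset.sum_sub_distrib, lin2, lin2]
    congr 1
    · congr 1
      rw [Finset.sum_add_distrib, Finset.sum_add_distrib, lin2]
    · congr 1
      rw [hHdef]
  rw [hLagg, hRagg] at hSM
  -- S in terms of the aggregates
  have hSSeq : Ssec m A = (∑ α, CA α) + (∑ α, DA α) + 2*(∑ α, BA α) := by
    unfold Ssec
    rw [Finset.sum_congr rfl (fun α (_ : α ∈ (Finset.univ : Finset (Fin m))) => htrsq α),
      Finset.sum_add_distrib, Finset.sum_add_distrib, lin2]
  -- positivity facts
  have hnp0 : (0:ℝ) ≤ (n:ℝ)-(p:ℝ) := by linarith only [hP2, h2PN]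
  have hK2pos : (0:ℝ) ≤ (n:ℝ)^2*(p:ℝ)*((n:ℝ)-(p:ℝ))*((n:ℝ)-2*(p:ℝ)) := by
    apply mul_nonneg
    apply mul_nonneg
    apply mul_nonneg (sq_nonneg _)
    · linarith only [hP2]
    · exact hnp0
    · linarith only [h2PN]
  have hEpos : (0:ℝ) < ((n:ℝ)-(p:ℝ))*((n:ℝ)-2)-((n:ℝ)-2*(p:ℝ)) := by
    nlinarith only [hN4, hP2, h2PN,
      mul_nonneg (by linarith only [h2PN] : (0:ℝ) ≤ (n:ℝ)-2*(p:ℝ))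
        (by linarith only [hN4] : (0:ℝ) ≤ (n:ℝ)-4),
      mul_nonneg (by linarith only [hP2] : (0:ℝ) ≤ (p:ℝ))
        (by linarith only [hN4] : (0:ℝ) ≤ (n:ℝ)-4)]
  have hK3pos : (0:ℝ) < (n:ℝ)*(p:ℝ)^2*((n:ℝ)-(p:ℝ))
      *(((n:ℝ)-(p:ℝ))*((n:ℝ)-2)-((n:ℝ)-2*(p:ℝ))) := by
    apply mul_pos
    apply mul_pos
    apply mul_pos
    · linarith only [hN4]
    · nlinarith only [hP2]
    · linarith only [hP2, h2PN]
    · exact hEpos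
  -- combine
  have hR1' : (p:ℝ)*(((n:ℝ)-2)*(c+H^2))
      ≤ (p:ℝ)*(((n:ℝ)-1)*c) + (∑ α, rA α * tA α) - ((∑ α, CA α) + ∑ α, BA α) := by
    rw [← Finset.sum_add_distrib]
    exact hR1
  have m1 : (0:ℝ) ≤ ((n:ℝ)^2*(p:ℝ)*((n:ℝ)-(p:ℝ))*((n:ℝ)-2*(p:ℝ)))
      * (((p:ℝ)*(((n:ℝ)-1)*c) + (∑ α, rA α * tA α) - ((∑ α, CA α) + ∑ α, BA α))
        - (p:ℝ)*(((n:ℝ)-2)*(c+H^2))) :=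
    mul_nonneg hK2pos (by linarith only [hR1'])
  have m2 : (n:ℝ)^2*((n:ℝ)-2)*(p:ℝ)*((n:ℝ)-(p:ℝ))
        *(2*(∑ α, BA α) - ∑ α, tA α*(rA α - tA α))
      = (n:ℝ)^2*((n:ℝ)-2)*(p:ℝ)*((n:ℝ)-(p:ℝ))*((p:ℝ)*((n:ℝ)-(p:ℝ))*c) := by
    rw [hThetaE]
  have hKey : (n:ℝ)*(p:ℝ)^2*((n:ℝ)-(p:ℝ))*(((n:ℝ)-(p:ℝ))*((n:ℝ)-2)-((n:ℝ)-2*(p:ℝ)))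
        *((n:ℝ)*c+2*(n:ℝ)*H^2)
      ≤ (n:ℝ)*(p:ℝ)^2*((n:ℝ)-(p:ℝ))*(((n:ℝ)-(p:ℝ))*((n:ℝ)-2)-((n:ℝ)-2*(p:ℝ)))
        *(Ssec m A) := by
    rw [hSSeq]
    nlinarith only [hSM, m1, m2]
  have hLow : (n:ℝ)*c + 2*(n:ℝ)*H^2 ≤ Ssec m A := le_of_mul_le_mul_left hKey hK3pos
  have hSeq : Ssec m A = (n:ℝ)*c + 2*(n:ℝ)*H^2 := le_antisymm hUpper hLow
  -- final step: every unit vector attains equality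
  intro X hX
  have hi0 : (0:ℕ) < n := by omega
  have hcard : Module.finrank ℝ V = Fintype.card (Fin n) := by
    rw [hdim, Fintype.card_fin]
  have horth : Orthonormal ℝ (Set.restrict {(⟨0, hi0⟩ : Fin n)} (fun _ : Fin n => X)) := by
    constructor
    · intro i; exact hX
    · intro i j hij
      exact absurd (Subtype.ext (by
        have hi := i.2; have hj := j.2
        simp only [Set.mem_singleton_iff] at hi hj
        rw [hi, hj])) hij
  obtain ⟨f, hf⟩ := horth.exists_orthonormalBasis_extension_of_card_eq hcard
  have hfX : f ⟨0, hi0⟩ = X := hf _ rfl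
  have hfs := ricSum m n c A hsymm f
  rw [← hHdef, hSeq] at hfs
  by_contra hne
  have hgt : ((n:ℝ)-2)*(c+H^2) < RicCurv m n c A (f ⟨0, hi0⟩) := by
    rw [hfX]
    exact lt_of_le_of_ne (hRic X hX) (Ne.symm hne)
  have hlt := Finset.sum_lt_sum
    (f := fun _ : Fin n => ((n:ℝ)-2)*(c+H^2))
    (g := fun i => RicCurv m n c A (f i))
    (fun i (_ : i ∈ Finset.univ) => hRic (f i) (f.orthonormal.1 i))
    ⟨⟨0, hi0⟩, Finset.mem_univ _, hgt⟩
  rw [Finset.sum_const, Finset.card_univ, Fintype.card_fin, nsmul_eq_mul, hfs] at hlt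
  nlinarith only [hlt]
end

section
/- Let V, A_1,…,A_m, c, n, H, Ric, Θ_p be as in the setting, with n ≥ 4. Assume Ric(X) ≥ (n−2)(c+H²) for every unit vector X ∈ V, and that for some integer p with 2 ≤ p ≤ n/2 and some orthonormal basis e_1,…,e_n of V equality Θ_p = p(n−p)c holds. Then for every α ∈ {1,…,m}: ⟨A_α e_i, e_i⟩ = ⟨A_α e_1, e_1⟩ for all 1 ≤ i ≤ p, and ⟨A_α e_i, e_{i'}⟩ = 0 for all 1 ≤ i ≠ i' ≤ p. (Equations (13) and (15) in the proof of Proposition 2.) -/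
open scoped RealInnerProductSpace

private lemma scalar_id (nn pn Q B C s u : ℝ) (hp : (2:ℝ) ≤ pn) (h4 : (4:ℝ) ≤ nn)
    (hq : 2*pn ≤ nn) :
    ((nn-pn)*((nn-pn)+pn*(nn-3))/(nn*(nn-2)) + pn*(pn+(nn-pn)*(nn-3))/(nn*(nn-2)) - 2)*Q
      + ((nn-pn)*((nn-pn)+pn*(nn-3))/(nn*(nn-2)))*(B - s^2/pn)
      + (pn*(pn+(nn-pn)*(nn-3))/(nn*(nn-2)))*(C - u^2/(nn-pn))
      + ((nn-2*pn)^2/(pn*(nn-pn)*nn^2*(nn-2)))*((nn-pn)*s - pn*u)^2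
    = ((nn-pn)*((nn-pn)+pn*(nn-3))/(nn*(nn-2)))*((B + Q) - (s+u)*s)
      + (pn*(pn+(nn-pn)*(nn-3))/(nn*(nn-2)))*((C + Q) - (s+u)*u)
      - (2*Q - s*u) + (pn*(nn-pn)*(nn-2)/nn^2)*(s+u)^2 := by
  have hp0 : pn ≠ 0 := by linarith
  have hq0 : nn - pn ≠ 0 := by linarith
  have hn0 : nn ≠ 0 := by linarith
  have hn2 : nn - 2 ≠ 0 := by linarith
  field_simp
  ring

set_option maxHeartbeats 2000000 in
private lemma core_lemma {m n : ℕ} (p : ℕ) (hp1 : 2 ≤ p) (hp2 : 2 * p ≤ n) (hn : 4 ≤ n)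
    (h : Fin m → Fin n → Fin n → ℝ) (hsym : ∀ α i j, h α i j = h α j i)
    (c H : ℝ)
    (hHdef : (n : ℝ) ^ 2 * H ^ 2 = ∑ α : Fin m, (∑ l, h α l l) ^ 2)
    (hRic : ∀ i : Fin n, ((n:ℝ)-2)*(c+H^2) ≤
      ((n:ℝ) - 1) * c + (∑ α : Fin m, (∑ l, h α l l) * h α i i) - ∑ α : Fin m, ∑ k, (h α i k)^2)
    (heq : ∑ i ∈ Finset.univ.filter (fun i : Fin n => (i : ℕ) < p),
      ∑ j ∈ Finset.univ.filter (fun j : Fin n => p ≤ (j : ℕ)),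
        (2 * ∑ α : Fin m, (h α i j)^2 - ∑ α : Fin m, h α i i * h α j j)
        = (p:ℝ) * ((n:ℝ) - p) * c) :
    ∀ α : Fin m, ∀ i ∈ Finset.univ.filter (fun i : Fin n => (i : ℕ) < p),
      ∀ k ∈ Finset.univ.filter (fun i : Fin n => (i : ℕ) < p),
        h α i i = h α k k ∧ (i ≠ k → h α i k = 0) := by
  classical
  have hpn : p < n := by omega
  set P : Finset (Fin n) := Finset.univ.filter (fun i : Fin n => (i : ℕ) < p) with hPdef
  set Pc : Finset (Fin n) := Finset.univ.filter (fun j : Fin n => p ≤ (j : ℕ)) with hPcdef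
  have hpn2 : (2:ℝ) ≤ (p:ℝ) := by exact_mod_cast hp1
  have hnn4 : (4:ℝ) ≤ (n:ℝ) := by exact_mod_cast hn
  have h2pn : 2*(p:ℝ) ≤ (n:ℝ) := by
    have : ((2*p : ℕ) : ℝ) ≤ ((n:ℕ) : ℝ) := by exact_mod_cast hp2
    push_cast at this
    linarith
  have hp0 : (0:ℝ) < (p:ℝ) := by linarith
  have hq0 : (0:ℝ) < (n:ℝ) - p := by linarith
  have hq2 : (2:ℝ) ≤ (n:ℝ) - p := by linarith
  have hn0 : (0:ℝ) < (n:ℝ) := by linarith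
  have hn2 : (0:ℝ) < (n:ℝ) - 2 := by linarith
  have hcardP : P.card = p := by
    have hPI : P = Finset.Iio (⟨p, hpn⟩ : Fin n) := by
      ext i; simp [hPdef, Fin.lt_def]
    rw [hPI, Fin.card_Iio]
  have hcardP' : ((P.card : ℕ) : ℝ) = (p:ℝ) := by rw [hcardP]
  have hPcne : Pc = Finset.univ.filter (fun j : Fin n => ¬ (j : ℕ) < p) := by
    ext j; simp [hPcdef, not_lt]
  have hcardPc : ((Pc.card : ℕ) : ℝ) = (n:ℝ) - p := by
    have hc : P.card + Pc.card = n := by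
      rw [hPcne, hPdef, Finset.card_filter_add_card_filter_not]
      simp
    have hc2 : Pc.card = n - p := by omega
    rw [hc2]
    push_cast [Nat.cast_sub (le_of_lt hpn)]
    ring
  have hsplit : ∀ f : Fin n → ℝ, (∑ i ∈ P, f i) + (∑ i ∈ Pc, f i) = ∑ i, f i := by
    intro f
    rw [hPcne, hPdef]
    exact Finset.sum_filter_add_sum_filter_not _ _ f
  set tf : Fin m → ℝ := fun α => ∑ l, h α l l with htf
  set Sf : Fin m → ℝ := fun α => ∑ i ∈ P, h α i i with hSf
  set Uf : Fin m → ℝ := fun α => ∑ j ∈ Pc, h α j j with hUf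
  set Qf : Fin m → ℝ := fun α => ∑ i ∈ P, ∑ j ∈ Pc, (h α i j)^2 with hQf
  set Bf : Fin m → ℝ := fun α => ∑ i ∈ P, ∑ k ∈ P, (h α i k)^2 with hBf
  set Cf : Fin m → ℝ := fun α => ∑ j ∈ Pc, ∑ k ∈ Pc, (h α j k)^2 with hCf
  have htSU : ∀ α, tf α = Sf α + Uf α := by
    intro α
    simp only [htf, hSf, hUf]
    exact (hsplit fun i => h α i i).symm
  -- row sum decompositions
  have hrowP : ∀ α, ∑ i ∈ P, ∑ k, (h α i k)^2 = Bf α + Qf α := by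
    intro α
    simp only [hBf, hQf]
    rw [← Finset.sum_add_distrib]
    exact Finset.sum_congr rfl fun i _ => (hsplit fun k => (h α i k)^2).symm
  have hrowPc : ∀ α, ∑ j ∈ Pc, ∑ k, (h α j k)^2 = Cf α + Qf α := by
    intro α
    have hq : ∑ j ∈ Pc, ∑ k ∈ P, (h α j k)^2 = Qf α := by
      simp only [hQf]
      rw [Finset.sum_comm]
      exact Finset.sum_congr rfl fun i _ => Finset.sum_congr rfl fun j _ => by rw [hsym α j i]
    calc ∑ j ∈ Pc, ∑ k, (h α j k)^2
        = ∑ j ∈ Pc, ((∑ k ∈ P, (h α j k)^2) + ∑ k ∈ Pc, (h α j k)^2) :=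
          Finset.sum_congr rfl fun j _ => (hsplit fun k => (h α j k)^2).symm
      _ = (∑ j ∈ Pc, ∑ k ∈ P, (h α j k)^2) + ∑ j ∈ Pc, ∑ k ∈ Pc, (h α j k)^2 :=
          Finset.sum_add_distrib
      _ = Cf α + Qf α := by rw [hq]; simp only [hCf]; ring
  -- summed Ricci lower bounds
  have hRicSum : ∀ G : Finset (Fin n), ((G.card : ℕ) : ℝ)*(((n:ℝ)-2)*(c+H^2))
      ≤ ((G.card : ℕ) : ℝ)*(((n:ℝ)-1)*c) + (∑ α : Fin m, tf α * (∑ i ∈ G, h α i i))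
        - ∑ α : Fin m, ∑ i ∈ G, ∑ k, (h α i k)^2 := by
    intro G
    have h1 := Finset.sum_le_sum fun i (_ : i ∈ G) => hRic i
    rw [Finset.sum_const, nsmul_eq_mul] at h1
    have hexp : ∑ i ∈ G, (((n:ℝ) - 1) * c + (∑ α : Fin m, (∑ l, h α l l) * h α i i)
          - ∑ α : Fin m, ∑ k, (h α i k)^2)
        = ((G.card : ℕ) : ℝ)*(((n:ℝ)-1)*c) + (∑ α : Fin m, tf α * (∑ i ∈ G, h α i i))
          - ∑ α : Fin m, ∑ i ∈ G, ∑ k, (h α i k)^2 := by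
      rw [Finset.sum_sub_distrib, Finset.sum_add_distrib, Finset.sum_const, nsmul_eq_mul]
      congr 1
      · congr 1
        rw [Finset.sum_comm]
        refine Finset.sum_congr rfl fun α _ => ?_
        simp only [htf]
        exact (Finset.mul_sum _ _ _).symm
      · exact Finset.sum_comm
    rw [hexp] at h1
    exact h1
  have hX1 : (∑ α : Fin m, Bf α) + (∑ α : Fin m, Qf α)
      ≤ (p:ℝ)*c - (p:ℝ)*((n:ℝ)-2)*H^2 + ∑ α : Fin m, tf α * Sf α := by
    have h1 := hRicSum P
    rw [hcardP'] at h1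
    have h2 : ∑ α : Fin m, ∑ i ∈ P, ∑ k, (h α i k)^2
        = (∑ α : Fin m, Bf α) + (∑ α : Fin m, Qf α) := by
      rw [← Finset.sum_add_distrib]
      exact Finset.sum_congr rfl fun α _ => hrowP α
    have h3 : (∑ α : Fin m, tf α * (∑ i ∈ P, h α i i)) = ∑ α : Fin m, tf α * Sf α := by
      refine Finset.sum_congr rfl fun α _ => ?_
      simp only [hSf]
    rw [h2, h3] at h1
    nlinarith [h1]
  have hX2 : (∑ α : Fin m, Cf α) + (∑ α : Fin m, Qf α)
      ≤ ((n:ℝ)-p)*c - ((n:ℝ)-p)*((n:ℝ)-2)*H^2 + ∑ α : Fin m, tf α * Uf α := by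
    have h1 := hRicSum Pc
    rw [hcardPc] at h1
    have h2 : ∑ α : Fin m, ∑ i ∈ Pc, ∑ k, (h α i k)^2
        = (∑ α : Fin m, Cf α) + (∑ α : Fin m, Qf α) := by
      rw [← Finset.sum_add_distrib]
      exact Finset.sum_congr rfl fun α _ => hrowPc α
    have h3 : (∑ α : Fin m, tf α * (∑ i ∈ Pc, h α i i)) = ∑ α : Fin m, tf α * Uf α := by
      refine Finset.sum_congr rfl fun α _ => ?_
      simp only [hUf]
    rw [h2, h3] at h1
    nlinarith [h1]
  -- the equality hypothesis in aggregate form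
  have hswap3 : ∀ (s1 s2 : Finset (Fin n)) (F : Fin n → Fin n → Fin m → ℝ),
      ∑ i ∈ s1, ∑ j ∈ s2, ∑ α : Fin m, F i j α = ∑ α : Fin m, ∑ i ∈ s1, ∑ j ∈ s2, F i j α := by
    intro s1 s2 F
    calc ∑ i ∈ s1, ∑ j ∈ s2, ∑ α : Fin m, F i j α
        = ∑ i ∈ s1, ∑ α : Fin m, ∑ j ∈ s2, F i j α :=
          Finset.sum_congr rfl fun i _ => Finset.sum_comm
      _ = ∑ α : Fin m, ∑ i ∈ s1, ∑ j ∈ s2, F i j α := Finset.sum_comm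
  have hE3 : 2*(∑ α : Fin m, Qf α) - (∑ α : Fin m, Sf α * Uf α) = (p:ℝ)*((n:ℝ)-p)*c := by
    rw [← heq]
    have hstep : ∑ i ∈ P, ∑ j ∈ Pc,
        (2 * ∑ α : Fin m, (h α i j)^2 - ∑ α : Fin m, h α i i * h α j j)
        = 2*(∑ i ∈ P, ∑ j ∈ Pc, ∑ α : Fin m, (h α i j)^2)
          - ∑ i ∈ P, ∑ j ∈ Pc, ∑ α : Fin m, h α i i * h α j j := by
      simp only [Finset.sum_sub_distrib, ← Finset.mul_sum]
    have hAq : ∑ i ∈ P, ∑ j ∈ Pc, ∑ α : Fin m, (h α i j)^2 = ∑ α : Fin m, Qf α := by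
      calc ∑ i ∈ P, ∑ j ∈ Pc, ∑ α : Fin m, (h α i j)^2
          = ∑ i ∈ P, ∑ α : Fin m, ∑ j ∈ Pc, (h α i j)^2 :=
            Finset.sum_congr rfl fun i _ => Finset.sum_comm
        _ = ∑ α : Fin m, ∑ i ∈ P, ∑ j ∈ Pc, (h α i j)^2 := Finset.sum_comm
        _ = ∑ α : Fin m, Qf α := by simp only [hQf]
    have hAsu : ∑ i ∈ P, ∑ j ∈ Pc, ∑ α : Fin m, h α i i * h α j j
        = ∑ α : Fin m, Sf α * Uf α := by
      calc ∑ i ∈ P, ∑ j ∈ Pc, ∑ α : Fin m, h α i i * h α j j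
          = ∑ i ∈ P, ∑ α : Fin m, ∑ j ∈ Pc, h α i i * h α j j :=
            Finset.sum_congr rfl fun i _ => Finset.sum_comm
        _ = ∑ α : Fin m, ∑ i ∈ P, ∑ j ∈ Pc, h α i i * h α j j := Finset.sum_comm
        _ = ∑ α : Fin m, Sf α * Uf α := by
            refine Finset.sum_congr rfl fun α _ => ?_
            simp only [hSf, hUf]
            exact (Finset.sum_mul_sum _ _ _ _).symm
    rw [hstep, hAq, hAsu]
  have hE4 : ∑ α : Fin m, (tf α)^2 = (n:ℝ)^2*H^2 := by
    simp only [htf]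
    exact hHdef.symm
  -- coefficients
  set aR : ℝ := ((n:ℝ)-p)*(((n:ℝ)-p)+p*((n:ℝ)-3))/((n:ℝ)*((n:ℝ)-2)) with haRdef
  set bR : ℝ := (p:ℝ)*((p:ℝ)+((n:ℝ)-p)*((n:ℝ)-3))/((n:ℝ)*((n:ℝ)-2)) with hbRdef
  set kR : ℝ := ((n:ℝ)-2*p)^2/((p:ℝ)*((n:ℝ)-p)*(n:ℝ)^2*((n:ℝ)-2)) with hkRdef
  set dd : ℝ := (p:ℝ)*((n:ℝ)-p)*((n:ℝ)-2)/(n:ℝ)^2 with hdddef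
  have hden : (0:ℝ) < (n:ℝ)*((n:ℝ)-2) := mul_pos hn0 hn2
  have haR : 0 < aR := by
    rw [haRdef]
    have h1 : 0 < ((n:ℝ)-p)+p*((n:ℝ)-3) := by nlinarith
    exact div_pos (mul_pos hq0 h1) hden
  have hbR : 0 < bR := by
    rw [hbRdef]
    have h1 : 0 < (p:ℝ)+((n:ℝ)-p)*((n:ℝ)-3) := by nlinarith
    exact div_pos (mul_pos hp0 h1) hden
  have hkR : 0 ≤ kR := by
    rw [hkRdef]
    have h1 : 0 < (p:ℝ)*((n:ℝ)-p)*(n:ℝ)^2*((n:ℝ)-2) := by positivity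
    positivity
  have h2pq : (n:ℝ) ≤ 2*((p:ℝ)*((n:ℝ)-p)) := by
    nlinarith [mul_nonneg (sub_nonneg.2 hpn2) (sub_nonneg.2 hq2)]
  have hab2 : 2 ≤ aR + bR := by
    rw [haRdef, hbRdef, ← add_div, le_div_iff₀ hden]
    nlinarith [mul_nonneg (sub_nonneg.2 hnn4) (by linarith [h2pq] : (0:ℝ) ≤ 2*((p:ℝ)*((n:ℝ)-p)) - n)]
  -- master inequality
  set F : Fin m → ℝ := fun α => (aR + bR - 2)*Qf α + aR*(Bf α - (Sf α)^2/(p:ℝ))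
      + bR*(Cf α - (Uf α)^2/((n:ℝ)-p)) + kR*(((n:ℝ)-p)*Sf α - (p:ℝ)*Uf α)^2 with hFdef
  have hFid : ∀ α, F α = aR*((Bf α + Qf α) - tf α * Sf α) + bR*((Cf α + Qf α) - tf α * Uf α)
      - (2*Qf α - Sf α * Uf α) + dd*(tf α)^2 := by
    intro α
    have hs := scalar_id (n:ℝ) (p:ℝ) (Qf α) (Bf α) (Cf α) (Sf α) (Uf α) hpn2 hnn4 h2pn
    rw [← haRdef, ← hbRdef, ← hkRdef, ← hdddef] at hs
    rw [hFdef]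
    simp only
    rw [htSU α]
    linear_combination hs
  have hFsum0 : ∑ α : Fin m, F α ≤ 0 := by
    have hsum2 : ∑ α : Fin m, F α
        = aR*(((∑ α : Fin m, Bf α) + (∑ α : Fin m, Qf α)) - ∑ α : Fin m, tf α * Sf α)
          + bR*(((∑ α : Fin m, Cf α) + (∑ α : Fin m, Qf α)) - ∑ α : Fin m, tf α * Uf α)
          - (2*(∑ α : Fin m, Qf α) - (∑ α : Fin m, Sf α * Uf α))
          + dd*(∑ α : Fin m, (tf α)^2) := by
      rw [Finset.sum_congr rfl fun α _ => hFid α]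
      simp only [Finset.sum_add_distrib, Finset.sum_sub_distrib, ← Finset.mul_sum]
    have m1 : aR*(((∑ α : Fin m, Bf α) + (∑ α : Fin m, Qf α)) - ∑ α : Fin m, tf α * Sf α)
        ≤ aR*((p:ℝ)*c - (p:ℝ)*((n:ℝ)-2)*H^2) :=
      mul_le_mul_of_nonneg_left (by linarith [hX1]) haR.le
    have m2 : bR*(((∑ α : Fin m, Cf α) + (∑ α : Fin m, Qf α)) - ∑ α : Fin m, tf α * Uf α)
        ≤ bR*(((n:ℝ)-p)*c - ((n:ℝ)-p)*((n:ℝ)-2)*H^2) :=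
      mul_le_mul_of_nonneg_left (by linarith [hX2]) hbR.le
    have hcancel : aR*((p:ℝ)*c - (p:ℝ)*((n:ℝ)-2)*H^2)
        + bR*(((n:ℝ)-p)*c - ((n:ℝ)-p)*((n:ℝ)-2)*H^2)
        - (p:ℝ)*((n:ℝ)-p)*c + dd*((n:ℝ)^2*H^2) = 0 := by
      rw [haRdef, hbRdef, hdddef]
      field_simp
      ring
    rw [hsum2, hE3, hE4]
    linarith [m1, m2, hcancel]
  -- nonnegativity of the summands
  have hQnn : ∀ α, 0 ≤ Qf α := by
    intro α
    simp only [hQf]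
    exact Finset.sum_nonneg fun i _ => Finset.sum_nonneg fun j _ => sq_nonneg _
  have hBdiag : ∀ α, ∑ k ∈ P, (h α k k)^2 ≤ Bf α := by
    intro α
    simp only [hBf]
    exact Finset.sum_le_sum fun i hi =>
      Finset.single_le_sum (f := fun k => (h α i k)^2) (fun k _ => sq_nonneg _) hi
  have hCSb : ∀ α, (Sf α)^2/(p:ℝ) ≤ ∑ k ∈ P, (h α k k)^2 := by
    intro α
    rw [div_le_iff₀ hp0]
    calc (Sf α)^2 ≤ (P.card : ℝ) * ∑ k ∈ P, (h α k k)^2 := by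
          simp only [hSf]; exact sq_sum_le_card_mul_sum_sq
      _ = (∑ k ∈ P, (h α k k)^2) * (p:ℝ) := by rw [hcardP']; ring
  have hCdiag : ∀ α, ∑ k ∈ Pc, (h α k k)^2 ≤ Cf α := by
    intro α
    simp only [hCf]
    exact Finset.sum_le_sum fun i hi =>
      Finset.single_le_sum (f := fun k => (h α i k)^2) (fun k _ => sq_nonneg _) hi
  have hCSc : ∀ α, (Uf α)^2/((n:ℝ)-p) ≤ ∑ k ∈ Pc, (h α k k)^2 := by
    intro α
    rw [div_le_iff₀ hq0]
    calc (Uf α)^2 ≤ (Pc.card : ℝ) * ∑ k ∈ Pc, (h α k k)^2 := by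
          simp only [hUf]; exact sq_sum_le_card_mul_sum_sq
      _ = (∑ k ∈ Pc, (h α k k)^2) * ((n:ℝ)-p) := by rw [hcardPc]; ring
  have hBnn : ∀ α, 0 ≤ Bf α - (Sf α)^2/(p:ℝ) := fun α => by
    linarith [hBdiag α, hCSb α]
  have hCnn : ∀ α, 0 ≤ Cf α - (Uf α)^2/((n:ℝ)-p) := fun α => by
    linarith [hCdiag α, hCSc α]
  have hFnn : ∀ α, 0 ≤ F α := by
    intro α
    rw [hFdef]
    simp only
    have h1 : 0 ≤ (aR + bR - 2)*Qf α := mul_nonneg (by linarith) (hQnn α)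
    have h2 : 0 ≤ aR*(Bf α - (Sf α)^2/(p:ℝ)) := mul_nonneg haR.le (hBnn α)
    have h3 : 0 ≤ bR*(Cf α - (Uf α)^2/((n:ℝ)-p)) := mul_nonneg hbR.le (hCnn α)
    have h4 : 0 ≤ kR*(((n:ℝ)-p)*Sf α - (p:ℝ)*Uf α)^2 := mul_nonneg hkR (sq_nonneg _)
    linarith
  have hFzero : ∀ α, F α = 0 := by
    intro α
    have hsum : ∑ α : Fin m, F α = 0 :=
      le_antisymm hFsum0 (Finset.sum_nonneg fun α _ => hFnn α)
    exact (Finset.sum_eq_zero_iff_of_nonneg fun α _ => hFnn α).mp hsum α (Finset.mem_univ α)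
  have hBeq : ∀ α, Bf α - (Sf α)^2/(p:ℝ) = 0 := by
    intro α
    have h0 := hFzero α
    rw [hFdef] at h0
    simp only at h0
    have h1 : 0 ≤ (aR + bR - 2)*Qf α := mul_nonneg (by linarith) (hQnn α)
    have h3 : 0 ≤ bR*(Cf α - (Uf α)^2/((n:ℝ)-p)) := mul_nonneg hbR.le (hCnn α)
    have h4 : 0 ≤ kR*(((n:ℝ)-p)*Sf α - (p:ℝ)*Uf α)^2 := mul_nonneg hkR (sq_nonneg _)
    have h2 : aR*(Bf α - (Sf α)^2/(p:ℝ)) = 0 := by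
      have hle : aR*(Bf α - (Sf α)^2/(p:ℝ)) ≤ 0 := by linarith
      exact le_antisymm hle (mul_nonneg haR.le (hBnn α))
    rcases mul_eq_zero.mp h2 with hz | hz
    · exact absurd hz (ne_of_gt haR)
    · exact hz
  have hdiagEq : ∀ α, ∑ k ∈ P, (h α k k)^2 = (Sf α)^2/(p:ℝ) := by
    intro α
    have h1 := hBdiag α
    have h2 := hCSb α
    have h3 := hBeq α
    linarith
  have hBdiagEq : ∀ α, Bf α = ∑ k ∈ P, (h α k k)^2 := by
    intro α
    have h1 := hBeq α
    have h2 := hdiagEq α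
    linarith
  -- conclusions
  intro α i hiP k hkP
  constructor
  · -- equal diagonal entries
    have hidd : ∑ i' ∈ P, ∑ l ∈ P, (h α i' i' - h α l l)^2
        = 2*((p:ℝ)*(∑ l ∈ P, (h α l l)^2) - (Sf α)^2) := by
      have hinner : ∀ i' ∈ P, ∑ l ∈ P, (h α i' i' - h α l l)^2
          = (p:ℝ)*(h α i' i')^2 - 2*(h α i' i')*(Sf α) + ∑ l ∈ P, (h α l l)^2 := by
        intro i' _
        have hexp : ∀ l ∈ P, (h α i' i' - h α l l)^2
            = (h α i' i')^2 - 2*(h α i' i')*(h α l l) + (h α l l)^2 := fun l _ => by ring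
        rw [Finset.sum_congr rfl hexp, Finset.sum_add_distrib, Finset.sum_sub_distrib,
          Finset.sum_const, nsmul_eq_mul, hcardP', ← Finset.mul_sum]
      rw [Finset.sum_congr rfl hinner, Finset.sum_add_distrib, Finset.sum_sub_distrib,
        Finset.sum_const, nsmul_eq_mul, hcardP', ← Finset.mul_sum, ← Finset.sum_mul]
      simp only [hSf]
      rw [← Finset.mul_sum]
      ring
    have hzero : ∑ i' ∈ P, ∑ l ∈ P, (h α i' i' - h α l l)^2 = 0 := by
      rw [hidd, hdiagEq α]
      field_simp
      ring
    have houter := (Finset.sum_eq_zero_iff_of_nonneg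
      (fun i' _ => Finset.sum_nonneg fun l _ => sq_nonneg (h α i' i' - h α l l))).mp hzero i hiP
    have hterm := (Finset.sum_eq_zero_iff_of_nonneg
      (fun l _ => sq_nonneg (h α i i - h α l l))).mp houter k hkP
    have hdiff : h α i i - h α k k = 0 := by
      exact pow_eq_zero_iff (n := 2) (by norm_num) |>.mp hterm
    linarith
  · -- vanishing off-diagonal entries
    intro hne
    have hoffsum : ∑ j ∈ P, ((∑ l ∈ P, (h α j l)^2) - (h α j j)^2) = 0 := by
      rw [Finset.sum_sub_distrib]
      have h1 := hBdiagEq α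
      simp only [hBf] at h1
      linarith [h1]
    have hrownn : ∀ j ∈ P, 0 ≤ (∑ l ∈ P, (h α j l)^2) - (h α j j)^2 := by
      intro j hj
      have hb := Finset.single_le_sum (f := fun l => (h α j l)^2)
        (fun l _ => sq_nonneg (h α j l)) hj
      linarith
    have hrow : (∑ l ∈ P, (h α i l)^2) - (h α i i)^2 = 0 :=
      (Finset.sum_eq_zero_iff_of_nonneg hrownn).mp hoffsum i hiP
    have hpairle : (h α i i)^2 + (h α i k)^2 ≤ ∑ l ∈ P, (h α i l)^2 := by
      have hsub : ({i, k} : Finset (Fin n)) ⊆ P := by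
        intro x hx
        rcases Finset.mem_insert.mp hx with hx | hx
        · rw [hx]; exact hiP
        · rw [Finset.mem_singleton.mp hx]; exact hkP
      have hle := Finset.sum_le_sum_of_subset_of_nonneg hsub
        (fun l _ _ => sq_nonneg (h α i l))
      rwa [Finset.sum_insert (by simp [hne]), Finset.sum_singleton] at hle
    have hsq : (h α i k)^2 = 0 := by
      have hle : (h α i k)^2 ≤ 0 := by linarith
      exact le_antisymm hle (sq_nonneg _)
    exact pow_eq_zero_iff (n := 2) (by norm_num) |>.mp hsq


set_option maxHeartbeats 1000000 in
theorem ricci_pinched_equality_block_umbilic {V : Type*} [NormedAddCommGroup V] [InnerProductSpace ℝ V]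
    [FiniteDimensional ℝ V] (n m : ℕ)
    (hdim : Module.finrank ℝ V = n)
    (A : Fin m → V →ₗ[ℝ] V) (hsymm : ∀ α : Fin m, (A α).IsSymmetric)
    (c H : ℝ) (hH : 0 ≤ H)
    (hHdef : (n : ℝ) ^ 2 * H ^ 2 = ∑ α : Fin m, (LinearMap.trace ℝ V (A α)) ^ 2)
    (hn : 4 ≤ n)
    (hRic : ∀ X : V, ‖X‖ = 1 → RicCurv m n c A X ≥ ((n : ℝ) - 2) * (c + H ^ 2))
    (p : ℕ) (hp1 : 2 ≤ p) (hp2 : 2 * p ≤ n)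
    (e : OrthonormalBasis (Fin n) ℝ V)
    (heq : Theta m p A e = (p : ℝ) * ((n : ℝ) - p) * c) :
    ∀ α : Fin m,
      (∀ i : Fin n, (i : ℕ) < p →
        ⟪(A α) (e i), e i⟫ = ⟪(A α) (e ⟨0, by omega⟩), e ⟨0, by omega⟩⟫) ∧
      (∀ i i' : Fin n, (i : ℕ) < p → (i' : ℕ) < p → i ≠ i' →
        ⟪(A α) (e i), e i'⟫ = 0) := by
  classical
  have htr : ∀ β : Fin m, LinearMap.trace ℝ V (A β) = ∑ i, ⟪(A β) (e i), e i⟫ := by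
    intro β
    rw [LinearMap.trace_eq_matrix_trace ℝ e.toBasis, Matrix.trace]
    refine Finset.sum_congr rfl fun i _ => ?_
    simp [Matrix.diag, LinearMap.toMatrix_apply, OrthonormalBasis.coe_toBasis,
      OrthonormalBasis.coe_toBasis_repr_apply, OrthonormalBasis.repr_apply_apply,
      real_inner_comm]
  have hnormsq : ∀ (β : Fin m) (i : Fin n),
      ‖(A β) (e i)‖ ^ 2 = ∑ k, ⟪(A β) (e i), e k⟫ ^ 2 := by
    intro β i
    rw [← real_inner_self_eq_norm_sq, ← e.sum_inner_mul_inner ((A β) (e i)) ((A β) (e i))]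
    exact Finset.sum_congr rfl fun k _ => by rw [sq, real_inner_comm (e k)]
  have hs : ∀ (β : Fin m) (i j : Fin n), ⟪(A β) (e i), e j⟫ = ⟪(A β) (e j), e i⟫ := by
    intro β i j
    rw [hsymm β (e i) (e j), real_inner_comm]
  have hH' : (n:ℝ)^2*H^2 = ∑ β : Fin m, (∑ l, ⟪(A β) (e l), e l⟫)^2 := by
    rw [hHdef]
    exact Finset.sum_congr rfl fun β _ => by rw [htr β]
  have hRic' : ∀ i : Fin n, ((n:ℝ)-2)*(c+H^2) ≤
      ((n:ℝ)-1)*c + (∑ β : Fin m, (∑ l, ⟪(A β) (e l), e l⟫) * ⟪(A β) (e i), e i⟫)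
        - ∑ β : Fin m, ∑ k, ⟪(A β) (e i), e k⟫^2 := by
    intro i
    have h1 := hRic (e i) (e.orthonormal.1 i)
    have E1 : ∑ β : Fin m, LinearMap.trace ℝ V (A β) * ⟪(A β) (e i), e i⟫
        = ∑ β : Fin m, (∑ l, ⟪(A β) (e l), e l⟫) * ⟪(A β) (e i), e i⟫ :=
      Finset.sum_congr rfl fun β _ => by rw [htr β]
    have E2 : ∑ β : Fin m, ‖(A β) (e i)‖^2 = ∑ β : Fin m, ∑ k, ⟪(A β) (e i), e k⟫^2 :=
      Finset.sum_congr rfl fun β _ => hnormsq β i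
    unfold RicCurv at h1
    rw [E1, E2] at h1
    exact h1
  have heq' : ∑ i ∈ Finset.univ.filter (fun i : Fin n => (i : ℕ) < p),
      ∑ j ∈ Finset.univ.filter (fun j : Fin n => p ≤ (j : ℕ)),
        (2 * ∑ β : Fin m, ⟪(A β) (e i), e j⟫^2
          - ∑ β : Fin m, ⟪(A β) (e i), e i⟫ * ⟪(A β) (e j), e j⟫)
      = (p:ℝ) * ((n:ℝ) - p) * c := heq
  have key := core_lemma (m := m) (n := n) p hp1 hp2 hn
    (fun β i j => ⟪(A β) (e i), e j⟫) hs c H hH' hRic' heq'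
  intro α
  have hpn : p < n := by omega
  constructor
  · intro i hi
    have hm : i ∈ Finset.univ.filter (fun i : Fin n => (i : ℕ) < p) :=
      Finset.mem_filter.mpr ⟨Finset.mem_univ _, hi⟩
    have h0 : (⟨0, by omega⟩ : Fin n) ∈ Finset.univ.filter (fun i : Fin n => (i : ℕ) < p) :=
      Finset.mem_filter.mpr ⟨Finset.mem_univ _, by simpa using (by omega : 0 < p)⟩
    exact (key α i hm ⟨0, by omega⟩ h0).1
  · intro i i' hi hi' hne
    have hm : i ∈ Finset.univ.filter (fun i : Fin n => (i : ℕ) < p) :=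
      Finset.mem_filter.mpr ⟨Finset.mem_univ _, hi⟩
    have hm' : i' ∈ Finset.univ.filter (fun i : Fin n => (i : ℕ) < p) :=
      Finset.mem_filter.mpr ⟨Finset.mem_univ _, hi'⟩
    exact (key α i hm i' hm').2 hne
end

section
/- Let V, A_1,…,A_m, c, n, H, Ric, Θ_p be as in the setting, with n ≥ 6 even and p = n/2. Assume Ric(X) ≥ (n−2)(c+H²) for every unit vector X ∈ V, and that for some orthonormal basis e_1,…,e_n of V equality Θ_p = p(n−p)c holds. Then for every α ∈ {1,…,m} there exist real numbers ρ_α and μ_α such that ⟨A_α e_i, e_j⟩ = ρ_α δ_{ij} for all 1 ≤ i, j ≤ p, ⟨A_α e_i, e_j⟩ = μ_α δ_{ij} for all p+1 ≤ i, j ≤ n, and ⟨A_α e_i, e_j⟩ = 0 whenever 1 ≤ i ≤ p < j ≤ n. (Dupin principal normal structure in Proposition 2, part (ii)(a).) -/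
open scoped RealInnerProductSpace

open Finset

lemma trace_os {V : Type*} [NormedAddCommGroup V] [InnerProductSpace ℝ V]
    [FiniteDimensional ℝ V] {n : ℕ} (e : OrthonormalBasis (Fin n) ℝ V) (T : V →ₗ[ℝ] V) :
    LinearMap.trace ℝ V T = ∑ i, ⟪T (e i), e i⟫ := by
  rw [LinearMap.trace_eq_matrix_trace ℝ e.toBasis, Matrix.trace]
  simp [Matrix.diag, LinearMap.toMatrix_apply, OrthonormalBasis.coe_toBasis_repr_apply,
    OrthonormalBasis.repr_apply_apply, real_inner_comm]

lemma normsq_os {V : Type*} [NormedAddCommGroup V] [InnerProductSpace ℝ V]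
    {n : ℕ} (e : OrthonormalBasis (Fin n) ℝ V) (x : V) :
    ‖x‖ ^ 2 = ∑ i, ⟪x, e i⟫ ^ 2 := by
  rw [← real_inner_self_eq_norm_sq, ← e.sum_inner_mul_inner x x]
  congr 1; ext i; rw [real_inner_comm (e i) x]; ring

lemma cardI (n k : ℕ) (hk : k ≤ n) :
    (Finset.univ.filter (fun i : Fin n => (i : ℕ) < k)).card = k := by
  have : (Finset.univ.filter (fun i : Fin n => (i : ℕ) < k)) =
      Finset.map (Fin.castLEEmb hk) Finset.univ := by
    ext x
    simp only [Finset.mem_filter, Finset.mem_univ, true_and, Finset.mem_map]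
    constructor
    · intro hx; exact ⟨⟨x.1, hx⟩, Fin.ext rfl⟩
    · rintro ⟨y, rfl⟩; simpa using y.2
  rw [this, Finset.card_map, Finset.card_univ, Fintype.card_fin]

lemma cardJ (n k : ℕ) (hnk : n = 2 * k) :
    (Finset.univ.filter (fun j : Fin n => k ≤ (j : ℕ))).card = k := by
  have h1 : (Finset.univ.filter (fun j : Fin n => k ≤ (j : ℕ))) =
      (Finset.univ.filter (fun j : Fin n => ¬ (j : ℕ) < k)) := by
    apply Finset.filter_congr; intro j _; simp [not_lt]
  have h2 := Finset.card_filter_add_card_filter_not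
    (s := (Finset.univ : Finset (Fin n))) (p := fun j : Fin n => (j : ℕ) < k)
  rw [cardI n k (by omega)] at h2
  simp only [Finset.card_univ, Fintype.card_fin] at h2
  rw [h1]
  omega

lemma key_alg (n m k : ℕ) (hn6 : 6 ≤ n) (hnk : n = 2 * k)
    (h : Fin m → Fin n → Fin n → ℝ) (hsym : ∀ α i j, h α i j = h α j i)
    (c H : ℝ)
    (hHdef : (n : ℝ) ^ 2 * H ^ 2 = ∑ α : Fin m, (∑ i : Fin n, h α i i) ^ 2)
    (hRic : ∀ i : Fin n, ((n : ℝ) - 1) * c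
        + (∑ α : Fin m, (∑ l : Fin n, h α l l) * h α i i)
        - (∑ α : Fin m, ∑ j : Fin n, h α i j ^ 2) ≥ ((n : ℝ) - 2) * (c + H ^ 2))
    (heq : ∑ i ∈ Finset.univ.filter (fun i : Fin n => (i : ℕ) < k),
        ∑ j ∈ Finset.univ.filter (fun j : Fin n => k ≤ (j : ℕ)),
        (2 * ∑ α : Fin m, h α i j ^ 2 - ∑ α : Fin m, h α i i * h α j j)
        = (k : ℝ) * ((n : ℝ) - (k : ℝ)) * c) :
    ∀ α : Fin m, ∃ ρ μ : ℝ,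
      (∀ i j : Fin n, (i : ℕ) < k → (j : ℕ) < k → h α i j = if i = j then ρ else 0) ∧
      (∀ i j : Fin n, k ≤ (i : ℕ) → k ≤ (j : ℕ) → h α i j = if i = j then μ else 0) ∧
      (∀ i j : Fin n, (i : ℕ) < k → k ≤ (j : ℕ) → h α i j = 0) := by
  have hk3 : 3 ≤ k := by omega
  have hkn : k ≤ n := by omega
  have hkR : (0 : ℝ) < (k : ℝ) := by
    have : 0 < k := by omega
    exact_mod_cast this
  have hn' : ((n : ℕ) : ℝ) = 2 * (k : ℝ) := by rw [hnk]; push_cast; ring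
  rw [hn'] at hHdef hRic heq
  set I := Finset.univ.filter (fun i : Fin n => (i : ℕ) < k) with hIdef
  set J := Finset.univ.filter (fun j : Fin n => k ≤ (j : ℕ)) with hJdef
  have hcardI : I.card = k := cardI n k hkn
  have hJc : J = Finset.univ.filter (fun i : Fin n => ¬ (i : ℕ) < k) := by
    rw [hJdef]; apply Finset.filter_congr; intro j _; simp [not_lt]
  have hcardJ : J.card = k := cardJ n k hnk
  have hsplit : ∀ f : Fin n → ℝ,
      (∑ i : Fin n, f i) = (∑ i ∈ I, f i) + (∑ j ∈ J, f j) := by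
    intro f
    rw [hIdef, hJc]
    exact (Finset.sum_filter_add_sum_filter_not Finset.univ _ f).symm
  -- A3 : per-α diagonal/off-diagonal decomposition of the I-block
  have hQQ1 : ∀ α : Fin m, (∑ i ∈ I, ∑ j ∈ I, h α i j ^ 2)
      = (∑ i ∈ I, h α i i ^ 2) + (∑ i ∈ I, ∑ j ∈ I.erase i, h α i j ^ 2) := by
    intro α
    rw [← Finset.sum_add_distrib]
    exact Finset.sum_congr rfl fun i hi =>
      (Finset.add_sum_erase I (fun j => h α i j ^ 2) hi).symm
  have hQQ2 : ∀ α : Fin m, (∑ i ∈ J, ∑ j ∈ J, h α i j ^ 2)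
      = (∑ i ∈ J, h α i i ^ 2) + (∑ i ∈ J, ∑ j ∈ J.erase i, h α i j ^ 2) := by
    intro α
    rw [← Finset.sum_add_distrib]
    exact Finset.sum_congr rfl fun i hi =>
      (Finset.add_sum_erase J (fun j => h α i j ^ 2) hi).symm
  -- D expansions
  have hD1 : ∀ α : Fin m, (∑ i ∈ I, ((k : ℝ) * h α i i - (∑ i' ∈ I, h α i' i')) ^ 2)
      = (k : ℝ) ^ 2 * (∑ i ∈ I, h α i i ^ 2) - (k : ℝ) * (∑ i' ∈ I, h α i' i') ^ 2 := by
    intro α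
    have expand : ∀ i ∈ I, ((k : ℝ) * h α i i - (∑ i' ∈ I, h α i' i')) ^ 2
        = (k : ℝ) ^ 2 * h α i i ^ 2
          - (2 * (k : ℝ) * (∑ i' ∈ I, h α i' i')) * h α i i
          + (∑ i' ∈ I, h α i' i') ^ 2 := fun i _ => by ring
    rw [Finset.sum_congr rfl expand]
    rw [Finset.sum_add_distrib, Finset.sum_sub_distrib, ← Finset.mul_sum, ← Finset.mul_sum,
      Finset.sum_const, hcardI, nsmul_eq_mul]
    ring
  have hD2 : ∀ α : Fin m, (∑ i ∈ J, ((k : ℝ) * h α i i - (∑ i' ∈ J, h α i' i')) ^ 2)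
      = (k : ℝ) ^ 2 * (∑ i ∈ J, h α i i ^ 2) - (k : ℝ) * (∑ i' ∈ J, h α i' i') ^ 2 := by
    intro α
    have expand : ∀ i ∈ J, ((k : ℝ) * h α i i - (∑ i' ∈ J, h α i' i')) ^ 2
        = (k : ℝ) ^ 2 * h α i i ^ 2
          - (2 * (k : ℝ) * (∑ i' ∈ J, h α i' i')) * h α i i
          + (∑ i' ∈ J, h α i' i') ^ 2 := fun i _ => by ring
    rw [Finset.sum_congr rfl expand]
    rw [Finset.sum_add_distrib, Finset.sum_sub_distrib, ← Finset.mul_sum, ← Finset.mul_sum,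
      Finset.sum_const, hcardJ, nsmul_eq_mul]
    ring
  -- symmetry of the mixed block
  have hN21 : ∀ α : Fin m, (∑ i ∈ J, ∑ j ∈ I, h α i j ^ 2)
      = (∑ i ∈ I, ∑ j ∈ J, h α i j ^ 2) := by
    intro α
    rw [Finset.sum_comm]
    exact Finset.sum_congr rfl fun i _ =>
      Finset.sum_congr rfl fun j _ => by rw [hsym α j i]
  have swapout : ∀ (f : Fin m → Fin n → Fin n → ℝ) (s t : Finset (Fin n)),
      (∑ i ∈ s, ∑ j ∈ t, ∑ α : Fin m, f α i j) = ∑ α : Fin m, ∑ i ∈ s, ∑ j ∈ t, f α i j := by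
    intro f s t
    calc (∑ i ∈ s, ∑ j ∈ t, ∑ α : Fin m, f α i j)
        = ∑ i ∈ s, ∑ α : Fin m, ∑ j ∈ t, f α i j :=
          Finset.sum_congr rfl fun i _ => Finset.sum_comm
      _ = ∑ α : Fin m, ∑ i ∈ s, ∑ j ∈ t, f α i j := Finset.sum_comm
  -- SP formula
  have hSP : (∑ i : Fin n, ((2 * (k : ℝ) - 1) * c
        + (∑ α : Fin m, (∑ l : Fin n, h α l l) * h α i i)
        - (∑ α : Fin m, ∑ j : Fin n, h α i j ^ 2)
        - (2 * (k : ℝ) - 2) * (c + H ^ 2)))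
      = (2 * (k : ℝ)) * ((2 * (k : ℝ) - 1) * c - (2 * (k : ℝ) - 2) * (c + H ^ 2))
        + (∑ α : Fin m, (∑ l : Fin n, h α l l) ^ 2)
        - ∑ α : Fin m, ((∑ i ∈ I, ∑ j ∈ I, h α i j ^ 2)
            + 2 * (∑ i ∈ I, ∑ j ∈ J, h α i j ^ 2)
            + (∑ i ∈ J, ∑ j ∈ J, h α i j ^ 2)) := by
    have e1 : (∑ i : Fin n, ∑ α : Fin m, (∑ l : Fin n, h α l l) * h α i i)
        = ∑ α : Fin m, (∑ l : Fin n, h α l l) ^ 2 := by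
      rw [Finset.sum_comm]
      exact Finset.sum_congr rfl fun α _ => by rw [← Finset.mul_sum]; ring
    have e2 : (∑ i : Fin n, ∑ α : Fin m, ∑ j : Fin n, h α i j ^ 2)
        = ∑ α : Fin m, ((∑ i ∈ I, ∑ j ∈ I, h α i j ^ 2)
            + 2 * (∑ i ∈ I, ∑ j ∈ J, h α i j ^ 2)
            + (∑ i ∈ J, ∑ j ∈ J, h α i j ^ 2)) := by
      rw [Finset.sum_comm]
      refine Finset.sum_congr rfl fun α _ => ?_
      rw [hsplit (fun i => ∑ j : Fin n, h α i j ^ 2)]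
      have e3 : (∑ i ∈ I, ∑ j : Fin n, h α i j ^ 2)
          = (∑ i ∈ I, ∑ j ∈ I, h α i j ^ 2) + (∑ i ∈ I, ∑ j ∈ J, h α i j ^ 2) := by
        rw [← Finset.sum_add_distrib]
        exact Finset.sum_congr rfl fun i _ => hsplit _
      have e4 : (∑ i ∈ J, ∑ j : Fin n, h α i j ^ 2)
          = (∑ i ∈ J, ∑ j ∈ I, h α i j ^ 2) + (∑ i ∈ J, ∑ j ∈ J, h α i j ^ 2) := by
        rw [← Finset.sum_add_distrib]
        exact Finset.sum_congr rfl fun i _ => hsplit _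
      rw [e3, e4, hN21 α]
      ring
    have reshape : ∀ i ∈ (Finset.univ : Finset (Fin n)),
        ((2 * (k : ℝ) - 1) * c + (∑ α : Fin m, (∑ l : Fin n, h α l l) * h α i i)
          - (∑ α : Fin m, ∑ j : Fin n, h α i j ^ 2) - (2 * (k : ℝ) - 2) * (c + H ^ 2))
        = (((2 * (k : ℝ) - 1) * c - (2 * (k : ℝ) - 2) * (c + H ^ 2))
            + ((∑ α : Fin m, (∑ l : Fin n, h α l l) * h α i i)
              - (∑ α : Fin m, ∑ j : Fin n, h α i j ^ 2))) := fun i _ => by ring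
    rw [Finset.sum_congr rfl reshape, Finset.sum_add_distrib, Finset.sum_const,
      Finset.card_univ, Fintype.card_fin, nsmul_eq_mul, Finset.sum_sub_distrib, e1, e2, hn']
    ring
  -- transformation of heq
  have hraw : (∑ i ∈ I, ∑ j ∈ J, (2 * ∑ α : Fin m, h α i j ^ 2 - ∑ α : Fin m, h α i i * h α j j))
      = 2 * (∑ α : Fin m, ∑ i ∈ I, ∑ j ∈ J, h α i j ^ 2)
        - (∑ α : Fin m, (∑ i ∈ I, h α i i) * (∑ j ∈ J, h α j j)) := by
    calc (∑ i ∈ I, ∑ j ∈ J, (2 * ∑ α : Fin m, h α i j ^ 2 - ∑ α : Fin m, h α i i * h α j j))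
        = (∑ i ∈ I, (2 * (∑ j ∈ J, ∑ α : Fin m, h α i j ^ 2)
            - ∑ j ∈ J, ∑ α : Fin m, h α i i * h α j j)) :=
          Finset.sum_congr rfl fun i _ => by rw [Finset.sum_sub_distrib, ← Finset.mul_sum]
      _ = 2 * (∑ i ∈ I, ∑ j ∈ J, ∑ α : Fin m, h α i j ^ 2)
            - (∑ i ∈ I, ∑ j ∈ J, ∑ α : Fin m, h α i i * h α j j) := by
          rw [Finset.sum_sub_distrib, ← Finset.mul_sum]
      _ = 2 * (∑ α : Fin m, ∑ i ∈ I, ∑ j ∈ J, h α i j ^ 2)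
            - (∑ α : Fin m, ∑ i ∈ I, ∑ j ∈ J, h α i i * h α j j) := by
          rw [swapout (fun α i j => h α i j ^ 2) I J,
            swapout (fun α i j => h α i i * h α j j) I J]
      _ = 2 * (∑ α : Fin m, ∑ i ∈ I, ∑ j ∈ J, h α i j ^ 2)
            - (∑ α : Fin m, (∑ i ∈ I, h α i i) * (∑ j ∈ J, h α j j)) := by
          congr 1
          exact Finset.sum_congr rfl fun α _ => (Finset.sum_mul_sum _ _ _ _).symm
  rw [hraw] at heq
  -- aggregated identities
  have A3 : (∑ α : Fin m, ∑ i ∈ I, ∑ j ∈ I, h α i j ^ 2)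
      = (∑ α : Fin m, ∑ i ∈ I, h α i i ^ 2)
        + (∑ α : Fin m, ∑ i ∈ I, ∑ j ∈ I.erase i, h α i j ^ 2) := by
    rw [← Finset.sum_add_distrib]
    exact Finset.sum_congr rfl fun α _ => hQQ1 α
  have A4 : (∑ α : Fin m, ∑ i ∈ J, ∑ j ∈ J, h α i j ^ 2)
      = (∑ α : Fin m, ∑ i ∈ J, h α i i ^ 2)
        + (∑ α : Fin m, ∑ i ∈ J, ∑ j ∈ J.erase i, h α i j ^ 2) := by
    rw [← Finset.sum_add_distrib]
    exact Finset.sum_congr rfl fun α _ => hQQ2 α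
  have A5 : (∑ α : Fin m, ∑ i ∈ I, ((k : ℝ) * h α i i - (∑ i' ∈ I, h α i' i')) ^ 2)
      = (k : ℝ) ^ 2 * (∑ α : Fin m, ∑ i ∈ I, h α i i ^ 2)
        - (k : ℝ) * (∑ α : Fin m, (∑ i' ∈ I, h α i' i') ^ 2) := by
    rw [Finset.mul_sum, Finset.mul_sum, ← Finset.sum_sub_distrib]
    exact Finset.sum_congr rfl fun α _ => hD1 α
  have A6 : (∑ α : Fin m, ∑ i ∈ J, ((k : ℝ) * h α i i - (∑ i' ∈ J, h α i' i')) ^ 2)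
      = (k : ℝ) ^ 2 * (∑ α : Fin m, ∑ i ∈ J, h α i i ^ 2)
        - (k : ℝ) * (∑ α : Fin m, (∑ i' ∈ J, h α i' i') ^ 2) := by
    rw [Finset.mul_sum, Finset.mul_sum, ← Finset.sum_sub_distrib]
    exact Finset.sum_congr rfl fun α _ => hD2 α
  have A7 : (∑ α : Fin m, (∑ l : Fin n, h α l l) ^ 2)
      = (∑ α : Fin m, (∑ i ∈ I, h α i i) ^ 2)
        + 2 * (∑ α : Fin m, (∑ i ∈ I, h α i i) * (∑ j ∈ J, h α j j))
        + (∑ α : Fin m, (∑ j ∈ J, h α j j) ^ 2) := by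
    rw [Finset.mul_sum, ← Finset.sum_add_distrib, ← Finset.sum_add_distrib]
    refine Finset.sum_congr rfl fun α _ => ?_
    rw [hsplit (fun i => h α i i)]
    ring
  have A1s : (∑ α : Fin m, ((∑ i ∈ I, ∑ j ∈ I, h α i j ^ 2)
        + 2 * (∑ i ∈ I, ∑ j ∈ J, h α i j ^ 2)
        + (∑ i ∈ J, ∑ j ∈ J, h α i j ^ 2)))
      = (∑ α : Fin m, ∑ i ∈ I, ∑ j ∈ I, h α i j ^ 2)
        + 2 * (∑ α : Fin m, ∑ i ∈ I, ∑ j ∈ J, h α i j ^ 2)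
        + (∑ α : Fin m, ∑ i ∈ J, ∑ j ∈ J, h α i j ^ 2) := by
    rw [Finset.mul_sum, ← Finset.sum_add_distrib, ← Finset.sum_add_distrib]
  -- the master identity
  have master : 2 * (k : ℝ) ^ 2 * (∑ i : Fin n, ((2 * (k : ℝ) - 1) * c
        + (∑ α : Fin m, (∑ l : Fin n, h α l l) * h α i i)
        - (∑ α : Fin m, ∑ j : Fin n, h α i j ^ 2)
        - (2 * (k : ℝ) - 2) * (c + H ^ 2)))
      + 2 * (k : ℝ) ^ 2 * (∑ α : Fin m, ∑ i ∈ I, ∑ j ∈ I.erase i, h α i j ^ 2)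
      + 2 * (k : ℝ) ^ 2 * (∑ α : Fin m, ∑ i ∈ J, ∑ j ∈ J.erase i, h α i j ^ 2)
      + 2 * (∑ α : Fin m, ∑ i ∈ I, ((k : ℝ) * h α i i - (∑ i' ∈ I, h α i' i')) ^ 2)
      + 2 * (∑ α : Fin m, ∑ i ∈ J, ((k : ℝ) * h α i i - (∑ i' ∈ J, h α i' i')) ^ 2)
      + 2 * (2 * (k : ℝ) - 4) * (k : ℝ) * (∑ α : Fin m, ∑ i ∈ I, ∑ j ∈ J, h α i j ^ 2)
      = 0 := by
    linear_combination (2 * (k : ℝ) ^ 2) * hSP - (2 * (k : ℝ) ^ 2) * A1s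
      - (2 * (k : ℝ) ^ 2) * A3 - (2 * (k : ℝ) ^ 2) * A4 + 2 * A5 + 2 * A6
      + (2 * (k : ℝ)) * A7 - (4 * (k : ℝ)) * heq
      - (2 * (k : ℝ) * ((k : ℝ) - 1)) * hHdef
  -- nonnegativity of the six terms
  have hk3R : (3 : ℝ) ≤ (k : ℝ) := by exact_mod_cast hk3
  have nnSP : 0 ≤ (∑ i : Fin n, ((2 * (k : ℝ) - 1) * c
        + (∑ α : Fin m, (∑ l : Fin n, h α l l) * h α i i)
        - (∑ α : Fin m, ∑ j : Fin n, h α i j ^ 2)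
        - (2 * (k : ℝ) - 2) * (c + H ^ 2))) :=
    Finset.sum_nonneg fun i _ => sub_nonneg.mpr (hRic i)
  have nnF1 : 0 ≤ (∑ α : Fin m, ∑ i ∈ I, ∑ j ∈ I.erase i, h α i j ^ 2) :=
    Finset.sum_nonneg fun _ _ => Finset.sum_nonneg fun _ _ => Finset.sum_nonneg fun _ _ =>
      sq_nonneg _
  have nnF2 : 0 ≤ (∑ α : Fin m, ∑ i ∈ J, ∑ j ∈ J.erase i, h α i j ^ 2) :=
    Finset.sum_nonneg fun _ _ => Finset.sum_nonneg fun _ _ => Finset.sum_nonneg fun _ _ =>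
      sq_nonneg _
  have nnD1 : 0 ≤ (∑ α : Fin m, ∑ i ∈ I, ((k : ℝ) * h α i i - (∑ i' ∈ I, h α i' i')) ^ 2) :=
    Finset.sum_nonneg fun _ _ => Finset.sum_nonneg fun _ _ => sq_nonneg _
  have nnD2 : 0 ≤ (∑ α : Fin m, ∑ i ∈ J, ((k : ℝ) * h α i i - (∑ i' ∈ J, h α i' i')) ^ 2) :=
    Finset.sum_nonneg fun _ _ => Finset.sum_nonneg fun _ _ => sq_nonneg _
  have nnN12 : 0 ≤ (∑ α : Fin m, ∑ i ∈ I, ∑ j ∈ J, h α i j ^ 2) :=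
    Finset.sum_nonneg fun _ _ => Finset.sum_nonneg fun _ _ => Finset.sum_nonneg fun _ _ =>
      sq_nonneg _
  have ck2 : (0 : ℝ) < 2 * (k : ℝ) ^ 2 := by positivity
  have cN : (0 : ℝ) < 2 * (2 * (k : ℝ) - 4) * (k : ℝ) := by nlinarith
  have p1 : 0 ≤ 2 * (k : ℝ) ^ 2 * (∑ i : Fin n, ((2 * (k : ℝ) - 1) * c
        + (∑ α : Fin m, (∑ l : Fin n, h α l l) * h α i i)
        - (∑ α : Fin m, ∑ j : Fin n, h α i j ^ 2)
        - (2 * (k : ℝ) - 2) * (c + H ^ 2))) := mul_nonneg ck2.le nnSP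
  have p2 : 0 ≤ 2 * (k : ℝ) ^ 2 * (∑ α : Fin m, ∑ i ∈ I, ∑ j ∈ I.erase i, h α i j ^ 2) :=
    mul_nonneg ck2.le nnF1
  have p3 : 0 ≤ 2 * (k : ℝ) ^ 2 * (∑ α : Fin m, ∑ i ∈ J, ∑ j ∈ J.erase i, h α i j ^ 2) :=
    mul_nonneg ck2.le nnF2
  have p4 : 0 ≤ 2 * (∑ α : Fin m, ∑ i ∈ I, ((k : ℝ) * h α i i - (∑ i' ∈ I, h α i' i')) ^ 2) := by
    linarith
  have p5 : 0 ≤ 2 * (∑ α : Fin m, ∑ i ∈ J, ((k : ℝ) * h α i i - (∑ i' ∈ J, h α i' i')) ^ 2) := by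
    linarith
  have p6 : 0 ≤ 2 * (2 * (k : ℝ) - 4) * (k : ℝ) * (∑ α : Fin m, ∑ i ∈ I, ∑ j ∈ J, h α i j ^ 2) :=
    mul_nonneg cN.le nnN12
  -- each term vanishes
  have zF1 : (∑ α : Fin m, ∑ i ∈ I, ∑ j ∈ I.erase i, h α i j ^ 2) = 0 := by
    have : 2 * (k : ℝ) ^ 2 * (∑ α : Fin m, ∑ i ∈ I, ∑ j ∈ I.erase i, h α i j ^ 2) = 0 := by
      linarith
    exact (mul_eq_zero.mp this).resolve_left (ne_of_gt ck2)
  have zF2 : (∑ α : Fin m, ∑ i ∈ J, ∑ j ∈ J.erase i, h α i j ^ 2) = 0 := by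
    have : 2 * (k : ℝ) ^ 2 * (∑ α : Fin m, ∑ i ∈ J, ∑ j ∈ J.erase i, h α i j ^ 2) = 0 := by
      linarith
    exact (mul_eq_zero.mp this).resolve_left (ne_of_gt ck2)
  have zD1 : (∑ α : Fin m, ∑ i ∈ I, ((k : ℝ) * h α i i - (∑ i' ∈ I, h α i' i')) ^ 2) = 0 := by
    linarith
  have zD2 : (∑ α : Fin m, ∑ i ∈ J, ((k : ℝ) * h α i i - (∑ i' ∈ J, h α i' i')) ^ 2) = 0 := by
    linarith
  have zN12 : (∑ α : Fin m, ∑ i ∈ I, ∑ j ∈ J, h α i j ^ 2) = 0 := by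
    have : 2 * (2 * (k : ℝ) - 4) * (k : ℝ) * (∑ α : Fin m, ∑ i ∈ I, ∑ j ∈ J, h α i j ^ 2) = 0 := by
      linarith
    exact (mul_eq_zero.mp this).resolve_left (ne_of_gt cN)
  -- entrywise consequences
  have F1z : ∀ (α : Fin m), ∀ i ∈ I, ∀ j ∈ I.erase i, h α i j = 0 := by
    intro α i hi j hj
    have h1 := (Finset.sum_eq_zero_iff_of_nonneg (fun _ _ => Finset.sum_nonneg fun _ _ => Finset.sum_nonneg fun _ _ => sq_nonneg _)).mp zF1
      α (Finset.mem_univ α)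
    have h2 := (Finset.sum_eq_zero_iff_of_nonneg (fun _ _ => Finset.sum_nonneg fun _ _ => sq_nonneg _)).mp h1 i hi
    have h3 := (Finset.sum_eq_zero_iff_of_nonneg (fun _ _ => sq_nonneg _)).mp h2 j hj
    exact pow_eq_zero_iff (by norm_num : (2 : ℕ) ≠ 0) |>.mp h3
  have F2z : ∀ (α : Fin m), ∀ i ∈ J, ∀ j ∈ J.erase i, h α i j = 0 := by
    intro α i hi j hj
    have h1 := (Finset.sum_eq_zero_iff_of_nonneg (fun _ _ => Finset.sum_nonneg fun _ _ => Finset.sum_nonneg fun _ _ => sq_nonneg _)).mp zF2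
      α (Finset.mem_univ α)
    have h2 := (Finset.sum_eq_zero_iff_of_nonneg (fun _ _ => Finset.sum_nonneg fun _ _ => sq_nonneg _)).mp h1 i hi
    have h3 := (Finset.sum_eq_zero_iff_of_nonneg (fun _ _ => sq_nonneg _)).mp h2 j hj
    exact pow_eq_zero_iff (by norm_num : (2 : ℕ) ≠ 0) |>.mp h3
  have N12z : ∀ (α : Fin m), ∀ i ∈ I, ∀ j ∈ J, h α i j = 0 := by
    intro α i hi j hj
    have h1 := (Finset.sum_eq_zero_iff_of_nonneg (fun _ _ => Finset.sum_nonneg fun _ _ => Finset.sum_nonneg fun _ _ => sq_nonneg _)).mp zN12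
      α (Finset.mem_univ α)
    have h2 := (Finset.sum_eq_zero_iff_of_nonneg (fun _ _ => Finset.sum_nonneg fun _ _ => sq_nonneg _)).mp h1 i hi
    have h3 := (Finset.sum_eq_zero_iff_of_nonneg (fun _ _ => sq_nonneg _)).mp h2 j hj
    exact pow_eq_zero_iff (by norm_num : (2 : ℕ) ≠ 0) |>.mp h3
  have D1z : ∀ (α : Fin m), ∀ i ∈ I, (k : ℝ) * h α i i = ∑ i' ∈ I, h α i' i' := by
    intro α i hi
    have h1 := (Finset.sum_eq_zero_iff_of_nonneg (fun _ _ => Finset.sum_nonneg fun _ _ => sq_nonneg _)).mp zD1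
      α (Finset.mem_univ α)
    have h2 := (Finset.sum_eq_zero_iff_of_nonneg (fun _ _ => sq_nonneg _)).mp h1 i hi
    have h3 := pow_eq_zero_iff (by norm_num : (2 : ℕ) ≠ 0) |>.mp h2
    linarith
  have D2z : ∀ (α : Fin m), ∀ i ∈ J, (k : ℝ) * h α i i = ∑ i' ∈ J, h α i' i' := by
    intro α i hi
    have h1 := (Finset.sum_eq_zero_iff_of_nonneg (fun _ _ => Finset.sum_nonneg fun _ _ => sq_nonneg _)).mp zD2
      α (Finset.mem_univ α)
    have h2 := (Finset.sum_eq_zero_iff_of_nonneg (fun _ _ => sq_nonneg _)).mp h1 i hi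
    have h3 := pow_eq_zero_iff (by norm_num : (2 : ℕ) ≠ 0) |>.mp h2
    linarith
  -- conclusion
  intro α
  refine ⟨(∑ i' ∈ I, h α i' i') / (k : ℝ), (∑ i' ∈ J, h α i' i') / (k : ℝ), ?_, ?_, ?_⟩
  · intro i j hi hj
    have hiI : i ∈ I := by rw [hIdef]; exact Finset.mem_filter.mpr ⟨Finset.mem_univ i, hi⟩
    have hjI : j ∈ I := by rw [hIdef]; exact Finset.mem_filter.mpr ⟨Finset.mem_univ j, hj⟩
    by_cases hij : i = j
    · subst hij
      rw [if_pos rfl, eq_div_iff (ne_of_gt hkR)]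
      have := D1z α i hiI
      linarith
    · rw [if_neg hij]
      exact F1z α i hiI j (Finset.mem_erase.mpr ⟨fun e => hij e.symm, hjI⟩)
  · intro i j hi hj
    have hiJ : i ∈ J := by rw [hJdef]; exact Finset.mem_filter.mpr ⟨Finset.mem_univ i, hi⟩
    have hjJ : j ∈ J := by rw [hJdef]; exact Finset.mem_filter.mpr ⟨Finset.mem_univ j, hj⟩
    by_cases hij : i = j
    · subst hij
      rw [if_pos rfl, eq_div_iff (ne_of_gt hkR)]
      have := D2z α i hiJ
      linarith
    · rw [if_neg hij]
      exact F2z α i hiJ j (Finset.mem_erase.mpr ⟨fun e => hij e.symm, hjJ⟩)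
  · intro i j hi hj
    have hiI : i ∈ I := by rw [hIdef]; exact Finset.mem_filter.mpr ⟨Finset.mem_univ i, hi⟩
    have hjJ : j ∈ J := by rw [hJdef]; exact Finset.mem_filter.mpr ⟨Finset.mem_univ j, hj⟩
    exact N12z α i hiI j hjJ


theorem ricci_pinched_equality_dupin {V : Type*} [NormedAddCommGroup V] [InnerProductSpace ℝ V]
    [FiniteDimensional ℝ V] (n m : ℕ)
    (hdim : Module.finrank ℝ V = n)
    (A : Fin m → V →ₗ[ℝ] V) (hsymm : ∀ α : Fin m, (A α).IsSymmetric)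
    (c H : ℝ) (hH : 0 ≤ H)
    (hHdef : (n : ℝ) ^ 2 * H ^ 2 = ∑ α : Fin m, (LinearMap.trace ℝ V (A α)) ^ 2)
    (k : ℕ) (hn6 : 6 ≤ n) (hnk : n = 2 * k)
    (hRic : ∀ X : V, ‖X‖ = 1 → RicCurv m n c A X ≥ ((n : ℝ) - 2) * (c + H ^ 2))
    (e : OrthonormalBasis (Fin n) ℝ V)
    (heq : Theta m k A e = (k : ℝ) * ((n : ℝ) - k) * c) :
    ∀ α : Fin m, ∃ ρ μ : ℝ,
      (∀ i j : Fin n, (i : ℕ) < k → (j : ℕ) < k →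
        ⟪(A α) (e i), e j⟫ = if i = j then ρ else 0) ∧
      (∀ i j : Fin n, k ≤ (i : ℕ) → k ≤ (j : ℕ) →
        ⟪(A α) (e i), e j⟫ = if i = j then μ else 0) ∧
      (∀ i j : Fin n, (i : ℕ) < k → k ≤ (j : ℕ) →
        ⟪(A α) (e i), e j⟫ = 0) := by
  refine key_alg n m k hn6 hnk (fun α i j => ⟪(A α) (e i), e j⟫) ?_ c H ?_ ?_ ?_
  · intro α i j
    show ⟪(A α) (e i), e j⟫ = ⟪(A α) (e j), e i⟫
    rw [hsymm α (e i) (e j)]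
    exact real_inner_comm _ _
  · rw [hHdef]
    exact Finset.sum_congr rfl fun α _ => by rw [trace_os e (A α)]
  · intro i
    have h1 := hRic (e i) (e.orthonormal.1 i)
    simp only [RicCurv] at h1
    have e2 : (∑ α : Fin m, ‖(A α) (e i)‖ ^ 2)
        = ∑ α : Fin m, ∑ j : Fin n, ⟪(A α) (e i), e j⟫ ^ 2 :=
      Finset.sum_congr rfl fun α _ => normsq_os e _
    rw [e2] at h1
    simp only [trace_os e] at h1
    exact h1
  · exact heq
end

section
/- Let V, A_1,…,A_m, c, n, H, Ric, Θ_p be as in the setting, with n ≥ 5 and c ≥ 0. Assume Ric(X) ≥ (n−2)(c+H²) for every unit vector X ∈ V, and that for some integer p with 2 ≤ p < n/2 and some orthonormal basis e_1,…,e_n of V equality Θ_p = p(n−p)c holds. Then c = 0 and A_α = 0 for every α ∈ {1,…,m}. (Totally geodesic alternative in Proposition 2, part (ii)(a).) -/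
open scoped RealInnerProductSpace

section helpers
variable {V : Type*} [NormedAddCommGroup V] [InnerProductSpace ℝ V]

private lemma trace_eq_sum_inner' {n : ℕ} [FiniteDimensional ℝ V]
    (e : OrthonormalBasis (Fin n) ℝ V) (T : V →ₗ[ℝ] V) :
    LinearMap.trace ℝ V T = ∑ k, ⟪T (e k), e k⟫ := by
  rw [LinearMap.trace_eq_matrix_trace ℝ e.toBasis T, Matrix.trace]
  refine Finset.sum_congr rfl fun k _ => ?_
  rw [Matrix.diag_apply, LinearMap.toMatrix_apply, OrthonormalBasis.coe_toBasis,
      OrthonormalBasis.coe_toBasis_repr_apply, OrthonormalBasis.repr_apply_apply,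
      real_inner_comm]

private lemma norm_sq_eq' {n : ℕ} (e : OrthonormalBasis (Fin n) ℝ V) (x : V) :
    ‖x‖^2 = ∑ j, ⟪x, e j⟫^2 := by
  rw [← real_inner_self_eq_norm_sq, ← OrthonormalBasis.sum_inner_mul_inner e x x]
  refine Finset.sum_congr rfl fun j _ => ?_
  rw [real_inner_comm (e j) x]; ring

private lemma card_filter_lt' (n p : ℕ) (hpn : p ≤ n) :
    (Finset.univ.filter fun i : Fin n => (i:ℕ) < p).card = p := by
  have h : (Finset.univ.filter fun i : Fin n => (i:ℕ) < p)
      = Finset.map (Fin.castLEEmb hpn) Finset.univ := by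
    ext i
    simp only [Finset.mem_filter, Finset.mem_univ, true_and, Finset.mem_map]
    constructor
    · intro hlt; exact ⟨⟨(i:ℕ), hlt⟩, Fin.ext rfl⟩
    · rintro ⟨a, rfl⟩
      simpa using a.isLt
  rw [h, Finset.card_map, Finset.card_univ, Fintype.card_fin]

end helpers

set_option maxHeartbeats 1000000

private lemma scalar_key (p q s t Z c C : ℝ) (hp : 2 ≤ p) (hq : p + 1 ≤ q)
    (hs : 0 ≤ s) (ht : 0 ≤ t) (hc : 0 ≤ c) (hC : 0 ≤ C) (hZ2 : Z ^ 2 ≤ s * t)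
    (hU : (p+q)^2 * (p * C) ≤ ((p+q)^2 * ((p-1)*s + p*Z) - p^2 * (((p+q)-2)*(s+2*Z+t) - (p+q)^2*c)))
    (hV : (p+q)^2 * (q * C) ≤ ((p+q)^2 * ((q-1)*t + q*Z) - q^2 * (((p+q)-2)*(s+2*Z+t) - (p+q)^2*c)))
    (hTh : 2 * C = Z + p * q * c) :
    s = 0 ∧ t = 0 ∧ c = 0 ∧ Z = 0 := by
  have hP0 : (0:ℝ) ≤ p - 2 := by linarith
  have hQ0 : (0:ℝ) ≤ q - p - 1 := by linarith
  have hp0 : (0:ℝ) < p := by linarith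
  have hq0 : (0:ℝ) < q := by linarith
  obtain ⟨nn, hnn⟩ : ∃ x : ℝ, x = p + q := ⟨_, rfl⟩
  obtain ⟨N, hN⟩ : ∃ x : ℝ, x = 4*(p-1)*q + 3*(q-p) := ⟨_, rfl⟩
  obtain ⟨D, hD⟩ : ∃ x : ℝ, x = 4*(p-1)*q + (q-p) := ⟨_, rfl⟩
  obtain ⟨U, hUd⟩ : ∃ x : ℝ, x = nn^2 * ((p-1)*s + p*Z) - p^2 * ((nn-2)*(s+2*Z+t) - nn^2*c) := ⟨_, rfl⟩
  obtain ⟨Vv, hVd⟩ : ∃ x : ℝ, x = nn^2 * ((q-1)*t + q*Z) - q^2 * ((nn-2)*(s+2*Z+t) - nn^2*c) := ⟨_, rfl⟩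
  obtain ⟨K, hK⟩ : ∃ x : ℝ, x = p*q*nn^2*N*D := ⟨_, rfl⟩
  obtain ⟨C1, hC1d⟩ : ∃ x : ℝ, x = p*q*(nn-2)*D^2 - N^2*((p-1)*nn^2 - (nn-2)*p^2) := ⟨_, rfl⟩
  obtain ⟨C2, hC2d⟩ : ∃ x : ℝ, x = p*q*(nn-2)*N^2 - D^2*((q-1)*nn^2 - (nn-2)*q^2) := ⟨_, rfl⟩
  obtain ⟨C3, hC3d⟩ : ∃ x : ℝ, x = N*D*nn^2 - N^2*(nn^2 - 2*p*(nn-2)) - D^2*(nn^2 - 2*q*(nn-2)) := ⟨_, rfl⟩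
  obtain ⟨C4, hC4d⟩ : ∃ x : ℝ, x = p*q*(N^2*(nn^2 - 2*p*(nn-2)) + D^2*(nn^2 - 2*q*(nn-2))) - nn^2*(p*N^2 + q*D^2) := ⟨_, rfl⟩
  have hU' : nn^2 * (p * C) ≤ U := by rw [hUd, hnn]; exact hU
  have hV' : nn^2 * (q * C) ≤ Vv := by rw [hVd, hnn]; exact hV
  have hU0 : (0:ℝ) ≤ U := le_trans (mul_nonneg (sq_nonneg _) (mul_nonneg hp0.le hC)) hU'
  have hV0 : (0:ℝ) ≤ Vv := le_trans (mul_nonneg (sq_nonneg _) (mul_nonneg hq0.le hC)) hV'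
  have hNpos : (0:ℝ) < N := by rw [hN]; nlinarith
  have hDpos : (0:ℝ) < D := by rw [hD]; nlinarith
  have hUV : (nn^2 * (p * C)) * (nn^2 * (q * C)) ≤ U * Vv :=
    mul_le_mul hU' hV' (mul_nonneg (sq_nonneg _) (mul_nonneg hq0.le hC)) hU0
  have hcoef : (0:ℝ) ≤ p*q*N^2*D^2 :=
    mul_nonneg (mul_nonneg (mul_nonneg hp0.le hq0.le) (sq_nonneg _)) (sq_nonneg _)
  have hprod2 : (K*C)^2 ≤ (q*N^2*U) * (p*D^2*Vv) := by
    calc (K*C)^2 = (p*q*N^2*D^2) * ((nn^2 * (p * C)) * (nn^2 * (q * C))) := by rw [hK]; ring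
    _ ≤ (p*q*N^2*D^2) * (U * Vv) := mul_le_mul_of_nonneg_left hUV hcoef
    _ = (q*N^2*U) * (p*D^2*Vv) := by ring
  have hut0 : (0:ℝ) ≤ q*N^2*U := mul_nonneg (mul_nonneg hq0.le (sq_nonneg _)) hU0
  have hvt0 : (0:ℝ) ≤ p*D^2*Vv := mul_nonneg (mul_nonneg hp0.le (sq_nonneg _)) hV0
  have hKC0 : (0:ℝ) ≤ K*C := by
    have h1 : (0:ℝ) ≤ K := by
      rw [hK]
      exact mul_nonneg (mul_nonneg (mul_nonneg (mul_nonneg hp0.le hq0.le) (sq_nonneg _)) hNpos.le) hDpos.le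
    exact mul_nonneg h1 hC
  have hsum2 : 2*(K*C) ≤ q*N^2*U + p*D^2*Vv := by
    nlinarith [hprod2, hut0, hvt0, hKC0, sq_nonneg (q*N^2*U - p*D^2*Vv)]
  have hid : K*(Z + p*q*c) - (q*N^2*U + p*D^2*Vv)
      = q*C1*s + p*C2*t + p*q*C4*c + p*q*C3*(Z + p*q*c) := by
    rw [hK, hC1d, hC2d, hC3d, hC4d, hUd, hVd, hN, hD, hnn]; ring
  have hmain : q*C1*s + p*C2*t + p*q*C4*c + p*q*C3*(Z + p*q*c) ≤ 0 := by
    rw [← hid, ← hTh]; linarith [hsum2]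
  have hC1pos : (0:ℝ) < C1 := by
    have e : C1 = 117 + (288*(p-2)^0*(q-p-1)^1 + 226*(p-2)^0*(q-p-1)^2 + 56*(p-2)^0*(q-p-1)^3 + 1*(p-2)^0*(q-p-1)^4 + 186*(p-2)^1*(q-p-1)^0 + 430*(p-2)^1*(q-p-1)^1 + 302*(p-2)^1*(q-p-1)^2 + 58*(p-2)^1*(q-p-1)^3 + 96*(p-2)^2*(q-p-1)^0 + 208*(p-2)^2*(q-p-1)^1 + 128*(p-2)^2*(q-p-1)^2 + 16*(p-2)^2*(q-p-1)^3 + 16*(p-2)^3*(q-p-1)^0 + 32*(p-2)^3*(q-p-1)^1 + 16*(p-2)^3*(q-p-1)^2) := by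
      rw [hC1d, hN, hD, hnn]; ring
    have h2 : (0:ℝ) ≤ 288*(p-2)^0*(q-p-1)^1 + 226*(p-2)^0*(q-p-1)^2 + 56*(p-2)^0*(q-p-1)^3 + 1*(p-2)^0*(q-p-1)^4 + 186*(p-2)^1*(q-p-1)^0 + 430*(p-2)^1*(q-p-1)^1 + 302*(p-2)^1*(q-p-1)^2 + 58*(p-2)^1*(q-p-1)^3 + 96*(p-2)^2*(q-p-1)^0 + 208*(p-2)^2*(q-p-1)^1 + 128*(p-2)^2*(q-p-1)^2 + 16*(p-2)^2*(q-p-1)^3 + 16*(p-2)^3*(q-p-1)^0 + 32*(p-2)^3*(q-p-1)^1 + 16*(p-2)^3*(q-p-1)^2 :=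
      (add_nonneg (add_nonneg (add_nonneg (add_nonneg (add_nonneg (add_nonneg (add_nonneg (add_nonneg (add_nonneg (add_nonneg (add_nonneg (add_nonneg (add_nonneg (add_nonneg (mul_nonneg (mul_nonneg (by norm_num : (0:ℝ) ≤ 288) (pow_nonneg hP0 0)) (pow_nonneg hQ0 1)) (mul_nonneg (mul_nonneg (by norm_num : (0:ℝ) ≤ 226) (pow_nonneg hP0 0)) (pow_nonneg hQ0 2))) (mul_nonneg (mul_nonneg (by norm_num : (0:ℝ) ≤ 56) (pow_nonneg hP0 0)) (pow_nonneg hQ0 3))) (mul_nonneg (mul_nonneg (by norm_num : (0:ℝ) ≤ 1) (pow_nonneg hP0 0)) (pow_nonneg hQ0 4))) (mul_nonneg (mul_nonneg (by norm_num : (0:ℝ) ≤ 186) (pow_nonneg hP0 1)) (pow_nonneg hQ0 0))) (mul_nonneg (mul_nonneg (by norm_num : (0:ℝ) ≤ 430) (pow_nonneg hP0 1)) (pow_nonneg hQ0 1))) (mul_nonneg (mul_nonneg (by norm_num : (0:ℝ) ≤ 302) (pow_nonneg hP0 1)) (pow_nonneg hQ0 2))) (mul_nonneg (mul_nonneg (by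 norm_num : (0:ℝ) ≤ 58) (pow_nonneg hP0 1)) (pow_nonneg hQ0 3))) (mul_nonneg (mul_nonneg (by norm_num : (0:ℝ) ≤ 96) (pow_nonneg hP0 2)) (pow_nonneg hQ0 0))) (mul_nonneg (mul_nonneg (by norm_num : (0:ℝ) ≤ 208) (pow_nonneg hP0 2)) (pow_nonneg hQ0 1))) (mul_nonneg (mul_nonneg (by norm_num : (0:ℝ) ≤ 128) (pow_nonneg hP0 2)) (pow_nonneg hQ0 2))) (mul_nonneg (mul_nonneg (by norm_num : (0:ℝ) ≤ 16) (pow_nonneg hP0 2)) (pow_nonneg hQ0 3))) (mul_nonneg (mul_nonneg (by norm_num : (0:ℝ) ≤ 16) (pow_nonneg hP0 3)) (pow_nonneg hQ0 0))) (mul_nonneg (mul_nonneg (by norm_num : (0:ℝ) ≤ 32) (pow_nonneg hP0 3)) (pow_nonneg hQ0 1))) (mul_nonneg (mul_nonneg (by norm_num : (0:ℝ) ≤ 16) (pow_nonneg hP0 3)) (pow_nonneg hQ0 2)))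
    linarith [e, h2]
  have hC2pos : (0:ℝ) < C2 := by
    have e : C2 = 163 + (448*(p-2)^0*(q-p-1)^1 + 430*(p-2)^0*(q-p-1)^2 + 168*(p-2)^0*(q-p-1)^3 + 23*(p-2)^0*(q-p-1)^4 + 246*(p-2)^1*(q-p-1)^0 + 626*(p-2)^1*(q-p-1)^1 + 530*(p-2)^1*(q-p-1)^2 + 166*(p-2)^1*(q-p-1)^3 + 16*(p-2)^1*(q-p-1)^4 + 112*(p-2)^2*(q-p-1)^0 + 256*(p-2)^2*(q-p-1)^1 + 176*(p-2)^2*(q-p-1)^2 + 32*(p-2)^2*(q-p-1)^3 + 16*(p-2)^3*(q-p-1)^0 + 32*(p-2)^3*(q-p-1)^1 + 16*(p-2)^3*(q-p-1)^2) := by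
      rw [hC2d, hN, hD, hnn]; ring
    have h2 : (0:ℝ) ≤ 448*(p-2)^0*(q-p-1)^1 + 430*(p-2)^0*(q-p-1)^2 + 168*(p-2)^0*(q-p-1)^3 + 23*(p-2)^0*(q-p-1)^4 + 246*(p-2)^1*(q-p-1)^0 + 626*(p-2)^1*(q-p-1)^1 + 530*(p-2)^1*(q-p-1)^2 + 166*(p-2)^1*(q-p-1)^3 + 16*(p-2)^1*(q-p-1)^4 + 112*(p-2)^2*(q-p-1)^0 + 256*(p-2)^2*(q-p-1)^1 + 176*(p-2)^2*(q-p-1)^2 + 32*(p-2)^2*(q-p-1)^3 + 16*(p-2)^3*(q-p-1)^0 + 32*(p-2)^3*(q-p-1)^1 + 16*(p-2)^3*(q-p-1)^2 :=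
      (add_nonneg (add_nonneg (add_nonneg (add_nonneg (add_nonneg (add_nonneg (add_nonneg (add_nonneg (add_nonneg (add_nonneg (add_nonneg (add_nonneg (add_nonneg (add_nonneg (add_nonneg (mul_nonneg (mul_nonneg (by norm_num : (0:ℝ) ≤ 448) (pow_nonneg hP0 0)) (pow_nonneg hQ0 1)) (mul_nonneg (mul_nonneg (by norm_num : (0:ℝ) ≤ 430) (pow_nonneg hP0 0)) (pow_nonneg hQ0 2))) (mul_nonneg (mul_nonneg (by norm_num : (0:ℝ) ≤ 168) (pow_nonneg hP0 0)) (pow_nonneg hQ0 3))) (mul_nonneg (mul_nonneg (by norm_num : (0:ℝ) ≤ 23) (pow_nonneg hP0 0)) (pow_nonneg hQ0 4))) (mul_nonneg (mul_nonneg (by norm_num : (0:ℝ) ≤ 246) (pow_nonneg hP0 1)) (pow_nonneg hQ0 0))) (mul_nonneg (mul_nonneg (by norm_num : (0:ℝ) ≤ 626) (pow_nonneg hP0 1)) (pow_nonneg hQ0 1))) (mul_nonneg (mul_nonneg (by norm_num : (0:ℝ) ≤ 530) (pow_nonneg hP0 1)) (pow_nonneg hQ0 2))) (mul_nonneg (mul_nonneg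 (by norm_num : (0:ℝ) ≤ 166) (pow_nonneg hP0 1)) (pow_nonneg hQ0 3))) (mul_nonneg (mul_nonneg (by norm_num : (0:ℝ) ≤ 16) (pow_nonneg hP0 1)) (pow_nonneg hQ0 4))) (mul_nonneg (mul_nonneg (by norm_num : (0:ℝ) ≤ 112) (pow_nonneg hP0 2)) (pow_nonneg hQ0 0))) (mul_nonneg (mul_nonneg (by norm_num : (0:ℝ) ≤ 256) (pow_nonneg hP0 2)) (pow_nonneg hQ0 1))) (mul_nonneg (mul_nonneg (by norm_num : (0:ℝ) ≤ 176) (pow_nonneg hP0 2)) (pow_nonneg hQ0 2))) (mul_nonneg (mul_nonneg (by norm_num : (0:ℝ) ≤ 32) (pow_nonneg hP0 2)) (pow_nonneg hQ0 3))) (mul_nonneg (mul_nonneg (by norm_num : (0:ℝ) ≤ 16) (pow_nonneg hP0 3)) (pow_nonneg hQ0 0))) (mul_nonneg (mul_nonneg (by norm_num : (0:ℝ) ≤ 32) (pow_nonneg hP0 3)) (pow_nonneg hQ0 1))) (mul_nonneg (mul_nonneg (by norm_num : (0:ℝ) ≤ 16) (pow_nonneg hP0 3)) (pow_nonneg hQ0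 2)))
    linarith [e, h2]
  have hC3pos : (0:ℝ) < C3 := by
    have e : C3 = 767 + (1448*(p-2)^0*(q-p-1)^1 + 862*(p-2)^0*(q-p-1)^2 + 192*(p-2)^0*(q-p-1)^3 + 11*(p-2)^0*(q-p-1)^4 + 4260*(p-2)^1*(q-p-1)^0 + 6180*(p-2)^1*(q-p-1)^1 + 2940*(p-2)^1*(q-p-1)^2 + 540*(p-2)^1*(q-p-1)^3 + 32*(p-2)^1*(q-p-1)^4 + 7820*(p-2)^2*(q-p-1)^0 + 8792*(p-2)^2*(q-p-1)^1 + 3164*(p-2)^2*(q-p-1)^2 + 416*(p-2)^2*(q-p-1)^3 + 16*(p-2)^2*(q-p-1)^4 + 6816*(p-2)^3*(q-p-1)^0 + 5664*(p-2)^3*(q-p-1)^1 + 1376*(p-2)^3*(q-p-1)^2 + 96*(p-2)^3*(q-p-1)^3 + 3088*(p-2)^4*(q-p-1)^0 + 1696*(p-2)^4*(q-p-1)^1 + 208*(p-2)^4*(q-p-1)^2 + 704*(p-2)^5*(q-p-1)^0 + 192*(p-2)^5*(q-p-1)^1 + 64*(p-2)^6*(q-p-1)^0) := by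
      rw [hC3d, hN, hD, hnn]; ring
    have h2 : (0:ℝ) ≤ 1448*(p-2)^0*(q-p-1)^1 + 862*(p-2)^0*(q-p-1)^2 + 192*(p-2)^0*(q-p-1)^3 + 11*(p-2)^0*(q-p-1)^4 + 4260*(p-2)^1*(q-p-1)^0 + 6180*(p-2)^1*(q-p-1)^1 + 2940*(p-2)^1*(q-p-1)^2 + 540*(p-2)^1*(q-p-1)^3 + 32*(p-2)^1*(q-p-1)^4 + 7820*(p-2)^2*(q-p-1)^0 + 8792*(p-2)^2*(q-p-1)^1 + 3164*(p-2)^2*(q-p-1)^2 + 416*(p-2)^2*(q-p-1)^3 + 16*(p-2)^2*(q-p-1)^4 + 6816*(p-2)^3*(q-p-1)^0 + 5664*(p-2)^3*(q-p-1)^1 + 1376*(p-2)^3*(q-p-1)^2 + 96*(p-2)^3*(q-p-1)^3 + 3088*(p-2)^4*(q-p-1)^0 + 1696*(p-2)^4*(q-p-1)^1 + 208*(p-2)^4*(q-p-1)^2 + 704*(p-2)^5*(q-p-1)^0 + 192*(p-2)^5*(q-p-1)^1 + 64*(p-2)^6*(q-p-1)^0 :=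
      (add_nonneg (add_nonneg (add_nonneg (add_nonneg (add_nonneg (add_nonneg (add_nonneg (add_nonneg (add_nonneg (add_nonneg (add_nonneg (add_nonneg (add_nonneg (add_nonneg (add_nonneg (add_nonneg (add_nonneg (add_nonneg (add_nonneg (add_nonneg (add_nonneg (add_nonneg (add_nonneg (mul_nonneg (mul_nonneg (by norm_num : (0:ℝ) ≤ 1448) (pow_nonneg hP0 0)) (pow_nonneg hQ0 1)) (mul_nonneg (mul_nonneg (by norm_num : (0:ℝ) ≤ 862) (pow_nonneg hP0 0)) (pow_nonneg hQ0 2))) (mul_nonneg (mul_nonneg (by norm_num : (0:ℝ) ≤ 192) (pow_nonneg hP0 0)) (pow_nonneg hQ0 3))) (mul_nonneg (mul_nonneg (by norm_num : (0:ℝ) ≤ 11) (pow_nonneg hP0 0)) (pow_nonneg hQ0 4))) (mul_nonneg (mul_nonneg (by norm_num : (0:ℝ) ≤ 4260) (pow_nonneg hP0 1)) (pow_nonneg hQ0 0))) (mul_nonneg (mul_nonneg (by norm_num : (0:ℝ) ≤ 6180) (pow_nonneg hP0 1)) (pow_nonneg hQ0 1))) (mul_nonneg (mul_nonneg (by norm_num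 : (0:ℝ) ≤ 2940) (pow_nonneg hP0 1)) (pow_nonneg hQ0 2))) (mul_nonneg (mul_nonneg (by norm_num : (0:ℝ) ≤ 540) (pow_nonneg hP0 1)) (pow_nonneg hQ0 3))) (mul_nonneg (mul_nonneg (by norm_num : (0:ℝ) ≤ 32) (pow_nonneg hP0 1)) (pow_nonneg hQ0 4))) (mul_nonneg (mul_nonneg (by norm_num : (0:ℝ) ≤ 7820) (pow_nonneg hP0 2)) (pow_nonneg hQ0 0))) (mul_nonneg (mul_nonneg (by norm_num : (0:ℝ) ≤ 8792) (pow_nonneg hP0 2)) (pow_nonneg hQ0 1))) (mul_nonneg (mul_nonneg (by norm_num : (0:ℝ) ≤ 3164) (pow_nonneg hP0 2)) (pow_nonneg hQ0 2))) (mul_nonneg (mul_nonneg (by norm_num : (0:ℝ) ≤ 416) (pow_nonneg hP0 2)) (pow_nonneg hQ0 3))) (mul_nonneg (mul_nonneg (by norm_num : (0:ℝ) ≤ 16) (pow_nonneg hP0 2)) (pow_nonneg hQ0 4))) (mul_nonneg (mul_nonneg (by norm_num : (0:ℝ) ≤ 6816) (pow_nonneg hP0 3)) (pow_nonneg hQ0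 0))) (mul_nonneg (mul_nonneg (by norm_num : (0:ℝ) ≤ 5664) (pow_nonneg hP0 3)) (pow_nonneg hQ0 1))) (mul_nonneg (mul_nonneg (by norm_num : (0:ℝ) ≤ 1376) (pow_nonneg hP0 3)) (pow_nonneg hQ0 2))) (mul_nonneg (mul_nonneg (by norm_num : (0:ℝ) ≤ 96) (pow_nonneg hP0 3)) (pow_nonneg hQ0 3))) (mul_nonneg (mul_nonneg (by norm_num : (0:ℝ) ≤ 3088) (pow_nonneg hP0 4)) (pow_nonneg hQ0 0))) (mul_nonneg (mul_nonneg (by norm_num : (0:ℝ) ≤ 1696) (pow_nonneg hP0 4)) (pow_nonneg hQ0 1))) (mul_nonneg (mul_nonneg (by norm_num : (0:ℝ) ≤ 208) (pow_nonneg hP0 4)) (pow_nonneg hQ0 2))) (mul_nonneg (mul_nonneg (by norm_num : (0:ℝ) ≤ 704) (pow_nonneg hP0 5)) (pow_nonneg hQ0 0))) (mul_nonneg (mul_nonneg (by norm_num : (0:ℝ) ≤ 192) (pow_nonneg hP0 5)) (pow_nonneg hQ0 1))) (mul_nonneg (mul_nonneg (by norm_num : (0:ℝ) ≤ 64) (pow_nonneg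 hP0 6)) (pow_nonneg hQ0 0)))
    linarith [e, h2]
  have hC4pos : (0:ℝ) < C4 := by
    have e : C4 = 723 + (2083*(p-2)^0*(q-p-1)^1 + 2190*(p-2)^0*(q-p-1)^2 + 1046*(p-2)^0*(q-p-1)^3 + 239*(p-2)^0*(q-p-1)^4 + 23*(p-2)^0*(q-p-1)^5 + 1390*(p-2)^1*(q-p-1)^0 + 3720*(p-2)^1*(q-p-1)^1 + 3476*(p-2)^1*(q-p-1)^2 + 1368*(p-2)^1*(q-p-1)^3 + 238*(p-2)^1*(q-p-1)^4 + 16*(p-2)^1*(q-p-1)^5 + 960*(p-2)^2*(q-p-1)^0 + 2352*(p-2)^2*(q-p-1)^1 + 1872*(p-2)^2*(q-p-1)^2 + 528*(p-2)^2*(q-p-1)^3 + 48*(p-2)^2*(q-p-1)^4 + 288*(p-2)^3*(q-p-1)^0 + 640*(p-2)^3*(q-p-1)^1 + 416*(p-2)^3*(q-p-1)^2 + 64*(p-2)^3*(q-p-1)^3 + 32*(p-2)^4*(q-p-1)^0 + 64*(p-2)^4*(q-p-1)^1 + 32*(p-2)^4*(q-p-1)^2) := by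
      rw [hC4d, hN, hD, hnn]; ring
    have h2 : (0:ℝ) ≤ 2083*(p-2)^0*(q-p-1)^1 + 2190*(p-2)^0*(q-p-1)^2 + 1046*(p-2)^0*(q-p-1)^3 + 239*(p-2)^0*(q-p-1)^4 + 23*(p-2)^0*(q-p-1)^5 + 1390*(p-2)^1*(q-p-1)^0 + 3720*(p-2)^1*(q-p-1)^1 + 3476*(p-2)^1*(q-p-1)^2 + 1368*(p-2)^1*(q-p-1)^3 + 238*(p-2)^1*(q-p-1)^4 + 16*(p-2)^1*(q-p-1)^5 + 960*(p-2)^2*(q-p-1)^0 + 2352*(p-2)^2*(q-p-1)^1 + 1872*(p-2)^2*(q-p-1)^2 + 528*(p-2)^2*(q-p-1)^3 + 48*(p-2)^2*(q-p-1)^4 + 288*(p-2)^3*(q-p-1)^0 + 640*(p-2)^3*(q-p-1)^1 + 416*(p-2)^3*(q-p-1)^2 + 64*(p-2)^3*(q-p-1)^3 + 32*(p-2)^4*(q-p-1)^0 + 64*(p-2)^4*(q-p-1)^1 + 32*(p-2)^4*(q-p-1)^2 :=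
      (add_nonneg (add_nonneg (add_nonneg (add_nonneg (add_nonneg (add_nonneg (add_nonneg (add_nonneg (add_nonneg (add_nonneg (add_nonneg (add_nonneg (add_nonneg (add_nonneg (add_nonneg (add_nonneg (add_nonneg (add_nonneg (add_nonneg (add_nonneg (add_nonneg (add_nonneg (mul_nonneg (mul_nonneg (by norm_num : (0:ℝ) ≤ 2083) (pow_nonneg hP0 0)) (pow_nonneg hQ0 1)) (mul_nonneg (mul_nonneg (by norm_num : (0:ℝ) ≤ 2190) (pow_nonneg hP0 0)) (pow_nonneg hQ0 2))) (mul_nonneg (mul_nonneg (by norm_num : (0:ℝ) ≤ 1046) (pow_nonneg hP0 0)) (pow_nonneg hQ0 3))) (mul_nonneg (mul_nonneg (by norm_num : (0:ℝ) ≤ 239) (pow_nonneg hP0 0)) (pow_nonneg hQ0 4))) (mul_nonneg (mul_nonneg (by norm_num : (0:ℝ) ≤ 23) (pow_nonneg hP0 0)) (pow_nonneg hQ0 5))) (mul_nonneg (mul_nonneg (by norm_num : (0:ℝ) ≤ 1390) (pow_nonneg hP0 1)) (pow_nonneg hQ0 0))) (mul_nonneg (mul_nonneg (by norm_num : (0:ℝ)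 ≤ 3720) (pow_nonneg hP0 1)) (pow_nonneg hQ0 1))) (mul_nonneg (mul_nonneg (by norm_num : (0:ℝ) ≤ 3476) (pow_nonneg hP0 1)) (pow_nonneg hQ0 2))) (mul_nonneg (mul_nonneg (by norm_num : (0:ℝ) ≤ 1368) (pow_nonneg hP0 1)) (pow_nonneg hQ0 3))) (mul_nonneg (mul_nonneg (by norm_num : (0:ℝ) ≤ 238) (pow_nonneg hP0 1)) (pow_nonneg hQ0 4))) (mul_nonneg (mul_nonneg (by norm_num : (0:ℝ) ≤ 16) (pow_nonneg hP0 1)) (pow_nonneg hQ0 5))) (mul_nonneg (mul_nonneg (by norm_num : (0:ℝ) ≤ 960) (pow_nonneg hP0 2)) (pow_nonneg hQ0 0))) (mul_nonneg (mul_nonneg (by norm_num : (0:ℝ) ≤ 2352) (pow_nonneg hP0 2)) (pow_nonneg hQ0 1))) (mul_nonneg (mul_nonneg (by norm_num : (0:ℝ) ≤ 1872) (pow_nonneg hP0 2)) (pow_nonneg hQ0 2))) (mul_nonneg (mul_nonneg (by norm_num : (0:ℝ) ≤ 528) (pow_nonneg hP0 2)) (pow_nonneg hQ0 3))) (mul_nonneg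 (mul_nonneg (by norm_num : (0:ℝ) ≤ 48) (pow_nonneg hP0 2)) (pow_nonneg hQ0 4))) (mul_nonneg (mul_nonneg (by norm_num : (0:ℝ) ≤ 288) (pow_nonneg hP0 3)) (pow_nonneg hQ0 0))) (mul_nonneg (mul_nonneg (by norm_num : (0:ℝ) ≤ 640) (pow_nonneg hP0 3)) (pow_nonneg hQ0 1))) (mul_nonneg (mul_nonneg (by norm_num : (0:ℝ) ≤ 416) (pow_nonneg hP0 3)) (pow_nonneg hQ0 2))) (mul_nonneg (mul_nonneg (by norm_num : (0:ℝ) ≤ 64) (pow_nonneg hP0 3)) (pow_nonneg hQ0 3))) (mul_nonneg (mul_nonneg (by norm_num : (0:ℝ) ≤ 32) (pow_nonneg hP0 4)) (pow_nonneg hQ0 0))) (mul_nonneg (mul_nonneg (by norm_num : (0:ℝ) ≤ 64) (pow_nonneg hP0 4)) (pow_nonneg hQ0 1))) (mul_nonneg (mul_nonneg (by norm_num : (0:ℝ) ≤ 32) (pow_nonneg hP0 4)) (pow_nonneg hQ0 2)))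
    linarith [e, h2]
  have h2C0 : (0:ℝ) ≤ Z + p*q*c := by rw [← hTh]; linarith
  have ht1 : (0:ℝ) ≤ q*C1*s := mul_nonneg (mul_nonneg hq0.le hC1pos.le) hs
  have ht2 : (0:ℝ) ≤ p*C2*t := mul_nonneg (mul_nonneg hp0.le hC2pos.le) ht
  have ht3 : (0:ℝ) ≤ p*q*C4*c := mul_nonneg (mul_nonneg (mul_nonneg hp0.le hq0.le) hC4pos.le) hc
  have ht4 : (0:ℝ) ≤ p*q*C3*(Z + p*q*c) := mul_nonneg (mul_nonneg (mul_nonneg hp0.le hq0.le) hC3pos.le) h2C0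
  have hs0 : s = 0 := by
    have h0 : q*C1*s = 0 := le_antisymm (by linarith) ht1
    rcases mul_eq_zero.mp h0 with h | h
    · exact absurd h (ne_of_gt (mul_pos hq0 hC1pos))
    · exact h
  have ht0 : t = 0 := by
    have h0 : p*C2*t = 0 := le_antisymm (by linarith) ht2
    rcases mul_eq_zero.mp h0 with h | h
    · exact absurd h (ne_of_gt (mul_pos hp0 hC2pos))
    · exact h
  have hc0 : c = 0 := by
    have h0 : p*q*C4*c = 0 := le_antisymm (by linarith) ht3
    rcases mul_eq_zero.mp h0 with h | h
    · exact absurd h (ne_of_gt (mul_pos (mul_pos hp0 hq0) hC4pos))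
    · exact h
  have hZ0 : Z = 0 := by
    have h0 : Z^2 ≤ 0 := by rw [hs0, ht0] at hZ2; linarith
    have h1 : Z^2 = 0 := le_antisymm h0 (sq_nonneg Z)
    exact pow_eq_zero_iff two_ne_zero |>.mp h1
  exact ⟨hs0, ht0, hc0, hZ0⟩

theorem ricci_pinched_equality_totally_geodesic {V : Type*} [NormedAddCommGroup V] [InnerProductSpace ℝ V]
    [FiniteDimensional ℝ V] (n m : ℕ)
    (hdim : Module.finrank ℝ V = n)
    (A : Fin m → V →ₗ[ℝ] V) (hsymm : ∀ α : Fin m, (A α).IsSymmetric)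
    (c H : ℝ) (hH : 0 ≤ H)
    (hHdef : (n : ℝ) ^ 2 * H ^ 2 = ∑ α : Fin m, (LinearMap.trace ℝ V (A α)) ^ 2)
    (hn : 5 ≤ n) (hc : 0 ≤ c)
    (hRic : ∀ X : V, ‖X‖ = 1 → RicCurv m n c A X ≥ ((n : ℝ) - 2) * (c + H ^ 2))
    (p : ℕ) (hp1 : 2 ≤ p) (hp2 : 2 * p < n)
    (e : OrthonormalBasis (Fin n) ℝ V)
    (heq : Theta m p A e = (p : ℝ) * ((n : ℝ) - p) * c) :
    c = 0 ∧ ∀ α : Fin m, A α = 0 := by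
  classical
  have hpn : p ≤ n := by omega
  simp only [Theta] at heq
  set I := Finset.univ.filter (fun i : Fin n => (i : ℕ) < p) with hIdef
  set J := Finset.univ.filter (fun j : Fin n => p ≤ (j : ℕ)) with hJdef
  have hJI : J = Finset.univ.filter (fun i : Fin n => ¬ ((i:ℕ) < p)) := by
    rw [hJdef]
    exact Finset.filter_congr (fun i _ => by simp [not_lt])
  have hsplitAll : ∀ f : Fin n → ℝ, (∑ k, f k) = (∑ i ∈ I, f i) + (∑ j ∈ J, f j) := by
    intro f
    rw [hJI, hIdef]
    exact (Finset.sum_filter_add_sum_filter_not Finset.univ _ f).symm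
  have hcardI : I.card = p := by rw [hIdef]; exact card_filter_lt' n p hpn
  have hcardJ : J.card = n - p := by
    have h1 : I.card + J.card = n := by
      rw [hIdef, hJI]
      rw [Finset.card_filter_add_card_filter_not]
      simp
    omega
  -- scalar quantities
  set b : Fin m → ℝ := fun α => ∑ k, ⟪A α (e k), e k⟫ with hbdef
  set x : Fin m → ℝ := fun α => ∑ i ∈ I, ⟪A α (e i), e i⟫ with hxdef
  set y : Fin m → ℝ := fun α => ∑ j ∈ J, ⟪A α (e j), e j⟫ with hydef
  set s : ℝ := ∑ α, (x α)^2 with hsdef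
  set t : ℝ := ∑ α, (y α)^2 with htdef
  set Z : ℝ := ∑ α, x α * y α with hZdef
  set CC : ℝ := ∑ α, ∑ i ∈ I, ∑ j ∈ J, ⟪A α (e i), e j⟫^2 with hCCdef
  have htr : ∀ α, LinearMap.trace ℝ V (A α) = b α := fun α => trace_eq_sum_inner' e (A α)
  have hb : ∀ α, b α = x α + y α := fun α => hsplitAll _
  have hsymA : ∀ (α) (i j : Fin n), ⟪A α (e j), e i⟫ = ⟪A α (e i), e j⟫ := by
    intro α i j
    rw [hsymm α (e j) (e i), real_inner_comm]
  -- swap lemma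
  have swap3 : ∀ (S T : Finset (Fin n)) (F : Fin m → Fin n → Fin n → ℝ),
      (∑ i ∈ S, ∑ j ∈ T, ∑ α, F α i j) = ∑ α, ∑ i ∈ S, ∑ j ∈ T, F α i j := by
    intro S T F
    calc ∑ i ∈ S, ∑ j ∈ T, ∑ α, F α i j
        = ∑ i ∈ S, ∑ α, ∑ j ∈ T, F α i j :=
          Finset.sum_congr rfl fun i _ => Finset.sum_comm
      _ = ∑ α, ∑ i ∈ S, ∑ j ∈ T, F α i j := Finset.sum_comm
  -- Theta identity : 2*CC - Z = p*(n-p)*c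
  have hThm : 2*CC - Z = (p:ℝ) * ((n:ℝ) - p) * c := by
    rw [← heq]
    rw [Finset.sum_congr rfl (fun i (_ : i ∈ I) => Finset.sum_sub_distrib
      (s := J) _ _)]
    rw [Finset.sum_sub_distrib]
    congr 1
    · have h1 : ∑ i ∈ I, ∑ j ∈ J, (2 * ∑ α, ⟪A α (e i), e j⟫^2)
          = 2 * ∑ i ∈ I, ∑ j ∈ J, ∑ α, ⟪A α (e i), e j⟫^2 := by
        rw [Finset.mul_sum]
        exact Finset.sum_congr rfl fun i _ => (Finset.mul_sum _ _ _).symm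
      rw [h1, swap3, hCCdef]
    · rw [swap3, hZdef]
      refine Finset.sum_congr rfl fun α _ => ?_
      rw [hxdef, hydef]
      simp only
      rw [Finset.sum_mul_sum]
  -- per-vector Ricci inequality
  have hRk : ∀ k : Fin n, ((n:ℝ)-2)*H^2 - c ≤
      (∑ α, b α * ⟪A α (e k), e k⟫) - (∑ α, ∑ l, ⟪A α (e k), e l⟫^2) := by
    intro k
    have h0 := hRic (e k) (e.orthonormal.1 k)
    simp only [RicCurv] at h0
    have e1 : ∑ α, LinearMap.trace ℝ V (A α) * ⟪A α (e k), e k⟫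
        = ∑ α, b α * ⟪A α (e k), e k⟫ :=
      Finset.sum_congr rfl fun α _ => by rw [htr α]
    have e2 : ∑ α, ‖A α (e k)‖^2 = ∑ α, ∑ l, ⟪A α (e k), e l⟫^2 :=
      Finset.sum_congr rfl fun α _ => norm_sq_eq' e _
    rw [e1, e2] at h0
    linarith
  -- summed over I
  have hSI : (p:ℝ)*(((n:ℝ)-2)*H^2 - c) ≤
      (∑ α, b α * x α) - (∑ α, ∑ i ∈ I, ∑ l, ⟪A α (e i), e l⟫^2) := by
    have h1 : ∑ i ∈ I, (((n:ℝ)-2)*H^2 - c) ≤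
        ∑ i ∈ I, ((∑ α, b α * ⟪A α (e i), e i⟫) - (∑ α, ∑ l, ⟪A α (e i), e l⟫^2)) :=
      Finset.sum_le_sum fun i _ => hRk i
    rw [Finset.sum_const, hcardI, nsmul_eq_mul] at h1
    rw [Finset.sum_sub_distrib] at h1
    have h2 : ∑ i ∈ I, ∑ α, b α * ⟪A α (e i), e i⟫ = ∑ α, b α * x α := by
      rw [Finset.sum_comm]
      exact Finset.sum_congr rfl fun α _ => by rw [hxdef]; exact (Finset.mul_sum _ _ _).symm
    have h3 : ∑ i ∈ I, ∑ α, ∑ l, ⟪A α (e i), e l⟫^2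
        = ∑ α, ∑ i ∈ I, ∑ l, ⟪A α (e i), e l⟫^2 := Finset.sum_comm
    rw [h2, h3] at h1
    exact h1
  have hSJ : ((n:ℝ)-p)*(((n:ℝ)-2)*H^2 - c) ≤
      (∑ α, b α * y α) - (∑ α, ∑ j ∈ J, ∑ l, ⟪A α (e j), e l⟫^2) := by
    have h1 : ∑ j ∈ J, (((n:ℝ)-2)*H^2 - c) ≤
        ∑ j ∈ J, ((∑ α, b α * ⟪A α (e j), e j⟫) - (∑ α, ∑ l, ⟪A α (e j), e l⟫^2)) :=
      Finset.sum_le_sum fun j _ => hRk j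
    rw [Finset.sum_const, hcardJ, nsmul_eq_mul] at h1
    rw [Finset.sum_sub_distrib] at h1
    have h2 : ∑ j ∈ J, ∑ α, b α * ⟪A α (e j), e j⟫ = ∑ α, b α * y α := by
      rw [Finset.sum_comm]
      exact Finset.sum_congr rfl fun α _ => by rw [hydef]; exact (Finset.mul_sum _ _ _).symm
    have h3 : ∑ j ∈ J, ∑ α, ∑ l, ⟪A α (e j), e l⟫^2
        = ∑ α, ∑ j ∈ J, ∑ l, ⟪A α (e j), e l⟫^2 := Finset.sum_comm
    rw [h2, h3] at h1
    have hcast : ((n - p : ℕ) : ℝ) = (n:ℝ) - p := by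
      push_cast [Nat.cast_sub hpn]; ring
    rw [hcast] at h1
    exact h1
  -- row estimates
  have hrowI : ∑ α, ∑ i ∈ I, (⟪A α (e i), e i⟫^2 + ∑ j ∈ J, ⟪A α (e i), e j⟫^2)
      ≤ ∑ α, ∑ i ∈ I, ∑ l, ⟪A α (e i), e l⟫^2 := by
    refine Finset.sum_le_sum fun α _ => Finset.sum_le_sum fun i hi => ?_
    rw [hsplitAll (fun l => ⟪A α (e i), e l⟫^2)]
    have h0 := Finset.single_le_sum (f := fun l => ⟪A α (e i), e l⟫^2)
      (fun l _ => sq_nonneg _) hi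
    have h1 : ⟪A α (e i), e i⟫^2 ≤ ∑ l ∈ I, ⟪A α (e i), e l⟫^2 := by simpa using h0
    linarith
  have hrowJ : ∑ α, ∑ j ∈ J, (⟪A α (e j), e j⟫^2 + ∑ i ∈ I, ⟪A α (e j), e i⟫^2)
      ≤ ∑ α, ∑ j ∈ J, ∑ l, ⟪A α (e j), e l⟫^2 := by
    refine Finset.sum_le_sum fun α _ => Finset.sum_le_sum fun j hj => ?_
    rw [hsplitAll (fun l => ⟪A α (e j), e l⟫^2)]
    have h0 := Finset.single_le_sum (f := fun l => ⟪A α (e j), e l⟫^2)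
      (fun l _ => sq_nonneg _) hj
    have h1 : ⟪A α (e j), e j⟫^2 ≤ ∑ l ∈ J, ⟪A α (e j), e l⟫^2 := by simpa using h0
    linarith
  -- cross sum symmetry
  have hcross : ∑ α, ∑ j ∈ J, ∑ i ∈ I, ⟪A α (e j), e i⟫^2 = CC := by
    rw [hCCdef]
    refine Finset.sum_congr rfl fun α _ => ?_
    rw [Finset.sum_comm]
    exact Finset.sum_congr rfl fun i _ => Finset.sum_congr rfl fun j _ => by
      rw [hsymA α i j]
  -- diagonal Cauchy-Schwarz
  have hCSI : s ≤ (p:ℝ) * ∑ α, ∑ i ∈ I, ⟪A α (e i), e i⟫^2 := by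
    rw [hsdef, Finset.mul_sum]
    refine Finset.sum_le_sum fun α _ => ?_
    have h1 := sq_sum_le_card_mul_sum_sq (s := I)
      (f := fun i => ⟪A α (e i), e i⟫)
    rw [hcardI] at h1
    rw [hxdef]
    exact_mod_cast h1
  have hCSJ : t ≤ ((n:ℝ)-p) * ∑ α, ∑ j ∈ J, ⟪A α (e j), e j⟫^2 := by
    have hcast : ((n - p : ℕ) : ℝ) = (n:ℝ) - p := by
      push_cast [Nat.cast_sub hpn]; ring
    rw [htdef, Finset.mul_sum]
    refine Finset.sum_le_sum fun α _ => ?_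
    have h1 := sq_sum_le_card_mul_sum_sq (s := J)
      (f := fun j => ⟪A α (e j), e j⟫)
    rw [hcardJ] at h1
    rw [hydef, ← hcast]
    exact_mod_cast h1
  -- b-sums
  have hbx : ∑ α, b α * x α = s + Z := by
    rw [hsdef, hZdef, ← Finset.sum_add_distrib]
    exact Finset.sum_congr rfl fun α _ => by rw [hb α]; ring
  have hby : ∑ α, b α * y α = Z + t := by
    rw [htdef, hZdef, ← Finset.sum_add_distrib]
    exact Finset.sum_congr rfl fun α _ => by rw [hb α]; ring
  have hHB : (n:ℝ)^2 * H^2 = s + 2*Z + t := by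
    rw [hHdef, hsdef, htdef, hZdef]
    have h1 : ∀ α : Fin m, (LinearMap.trace ℝ V (A α))^2 = (x α)^2 + 2*(x α * y α) + (y α)^2 := by
      intro α; rw [htr α, hb α]; ring
    rw [Finset.sum_congr rfl fun α _ => h1 α]
    rw [Finset.sum_add_distrib, Finset.sum_add_distrib, Finset.mul_sum]
  -- restate row inequalities
  have hrowI' : (∑ α, ∑ i ∈ I, ⟪A α (e i), e i⟫^2) + CC
      ≤ ∑ α, ∑ i ∈ I, ∑ l, ⟪A α (e i), e l⟫^2 := by
    have h1 : ∑ α, ∑ i ∈ I, (⟪A α (e i), e i⟫^2 + ∑ j ∈ J, ⟪A α (e i), e j⟫^2)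
        = (∑ α, ∑ i ∈ I, ⟪A α (e i), e i⟫^2) + CC := by
      rw [hCCdef, ← Finset.sum_add_distrib]
      exact Finset.sum_congr rfl fun α _ => by rw [← Finset.sum_add_distrib]
    rw [← h1]
    exact hrowI
  have hrowJ' : (∑ α, ∑ j ∈ J, ⟪A α (e j), e j⟫^2) + CC
      ≤ ∑ α, ∑ j ∈ J, ∑ l, ⟪A α (e j), e l⟫^2 := by
    have h1 : ∑ α, ∑ j ∈ J, (⟪A α (e j), e j⟫^2 + ∑ i ∈ I, ⟪A α (e j), e i⟫^2)
        = (∑ α, ∑ j ∈ J, ⟪A α (e j), e j⟫^2) + CC := by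
      rw [← hcross, ← Finset.sum_add_distrib]
      refine Finset.sum_congr rfl fun α _ => ?_
      rw [← Finset.sum_add_distrib]
    rw [← h1]
    exact hrowJ
  rw [hbx] at hSI
  rw [hby] at hSJ
  have hpR0 : (0:ℝ) ≤ (p:ℝ) := Nat.cast_nonneg p
  have hqR0 : (0:ℝ) ≤ (n:ℝ) - (p:ℝ) := by
    have : (p:ℝ) ≤ (n:ℝ) := Nat.cast_le.mpr hpn
    linarith
  have HD : (p:ℝ)^2*((n:ℝ)^2*(((n:ℝ)-2)*H^2 - c))
      = (p:ℝ)^2*(((n:ℝ)-2)*(s+2*Z+t) - (n:ℝ)^2*c) := by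
    linear_combination ((p:ℝ)^2*((n:ℝ)-2))*hHB
  have HD' : ((n:ℝ)-(p:ℝ))^2*((n:ℝ)^2*(((n:ℝ)-2)*H^2 - c))
      = ((n:ℝ)-(p:ℝ))^2*(((n:ℝ)-2)*(s+2*Z+t) - (n:ℝ)^2*c) := by
    linear_combination (((n:ℝ)-(p:ℝ))^2*((n:ℝ)-2))*hHB
  have hUmain : (n:ℝ)^2 * ((p:ℝ) * CC) ≤ (n:ℝ)^2*(((p:ℝ)-1)*s + (p:ℝ)*Z)
      - (p:ℝ)^2*(((n:ℝ)-2)*(s+2*Z+t) - (n:ℝ)^2*c) := by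
    have HA := mul_nonneg (sq_nonneg ((n:ℝ))) (mul_nonneg hpR0 (sub_nonneg.mpr hrowI'))
    have HB := mul_nonneg (sq_nonneg ((n:ℝ))) (sub_nonneg.mpr hCSI)
    have HC := mul_nonneg (sq_nonneg ((n:ℝ))) (mul_nonneg hpR0 (sub_nonneg.mpr hSI))
    linarith [HA, HB, HC, HD]
  have hVmain : (n:ℝ)^2 * (((n:ℝ)-(p:ℝ)) * CC) ≤ (n:ℝ)^2*((((n:ℝ)-(p:ℝ))-1)*t + ((n:ℝ)-(p:ℝ))*Z)
      - ((n:ℝ)-(p:ℝ))^2*(((n:ℝ)-2)*(s+2*Z+t) - (n:ℝ)^2*c) := by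
    have HA := mul_nonneg (sq_nonneg ((n:ℝ))) (mul_nonneg hqR0 (sub_nonneg.mpr hrowJ'))
    have HB := mul_nonneg (sq_nonneg ((n:ℝ))) (sub_nonneg.mpr hCSJ)
    have HC := mul_nonneg (sq_nonneg ((n:ℝ))) (mul_nonneg hqR0 (sub_nonneg.mpr hSJ))
    linarith [HA, HB, HC, HD']
  -- remaining scalar facts
  have hZ2 : Z^2 ≤ s*t := by
    rw [hZdef, hsdef, htdef]
    exact Finset.sum_mul_sq_le_sq_mul_sq Finset.univ x y
  have hsnn : 0 ≤ s := by rw [hsdef]; exact Finset.sum_nonneg fun α _ => sq_nonneg _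
  have htnn : 0 ≤ t := by rw [htdef]; exact Finset.sum_nonneg fun α _ => sq_nonneg _
  have hCnn : 0 ≤ CC := by
    rw [hCCdef]
    exact Finset.sum_nonneg fun α _ => Finset.sum_nonneg fun i _ =>
      Finset.sum_nonneg fun j _ => sq_nonneg _
  have hpcast : (2:ℝ) ≤ (p:ℝ) := by exact_mod_cast hp1
  have hqcast : (p:ℝ) + 1 ≤ (n:ℝ) - (p:ℝ) := by
    have h1 : (2*p+1 : ℕ) ≤ n := by omega
    have h2 : ((2*p+1 : ℕ) : ℝ) ≤ (n:ℝ) := Nat.cast_le.mpr h1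
    push_cast at h2
    linarith
  have hTh2 : 2 * CC = Z + (p:ℝ) * ((n:ℝ)-(p:ℝ)) * c := by linarith [hThm]
  have hpq : (p:ℝ) + ((n:ℝ) - (p:ℝ)) = (n:ℝ) := by ring
  obtain ⟨hs0, ht0, hc0, hZ0⟩ := scalar_key (p:ℝ) ((n:ℝ)-(p:ℝ)) s t Z c CC
    hpcast hqcast hsnn htnn hc hCnn hZ2
    (by rw [hpq]; exact hUmain) (by rw [hpq]; exact hVmain) hTh2
  -- endgame
  have hxa : ∀ α, x α = 0 := by
    intro α
    have h1 : ∑ β, (x β)^2 = 0 := by rw [← hsdef]; exact hs0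
    have h2 := (Finset.sum_eq_zero_iff_of_nonneg (fun β _ => sq_nonneg (x β))).mp h1 α
      (Finset.mem_univ α)
    exact pow_eq_zero_iff two_ne_zero |>.mp h2
  have hya : ∀ α, y α = 0 := by
    intro α
    have h1 : ∑ β, (y β)^2 = 0 := by rw [← htdef]; exact ht0
    have h2 := (Finset.sum_eq_zero_iff_of_nonneg (fun β _ => sq_nonneg (y β))).mp h1 α
      (Finset.mem_univ α)
    exact pow_eq_zero_iff two_ne_zero |>.mp h2
  have hb0 : ∀ α, b α = 0 := fun α => by rw [hb α, hxa α, hya α]; ring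
  have hH2 : H^2 = 0 := by
    have h1 : (n:ℝ)^2*H^2 = 0 := by rw [hHB, hs0, ht0, hZ0]; ring
    rcases mul_eq_zero.mp h1 with h | h
    · exfalso
      have hn0 : (n:ℝ) ≠ 0 := Nat.cast_ne_zero.mpr (by omega)
      exact hn0 (pow_eq_zero_iff two_ne_zero |>.mp h)
    · exact h
  refine ⟨hc0, fun α => ?_⟩
  have hAk : ∀ k : Fin n, ∑ β, ‖A β (e k)‖^2 ≤ 0 := by
    intro k
    have h0 := hRic (e k) (e.orthonormal.1 k)
    simp only [RicCurv] at h0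
    have e1 : ∑ β, LinearMap.trace ℝ V (A β) * ⟪A β (e k), e k⟫ = 0 :=
      Finset.sum_eq_zero fun β _ => by rw [htr β, hb0 β]; ring
    rw [e1, hc0, hH2] at h0
    linarith
  have hAek : ∀ k : Fin n, A α (e k) = 0 := by
    intro k
    have h1 : ∑ β, ‖A β (e k)‖^2 = 0 :=
      le_antisymm (hAk k) (Finset.sum_nonneg fun β _ => sq_nonneg _)
    have h2 := (Finset.sum_eq_zero_iff_of_nonneg (fun β _ => sq_nonneg ‖A β (e k)‖)).mp h1 α
      (Finset.mem_univ α)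
    have h3 : ‖A α (e k)‖ = 0 := pow_eq_zero_iff two_ne_zero |>.mp h2
    exact norm_eq_zero.mp h3
  refine e.toBasis.ext fun i => ?_
  simp only [OrthonormalBasis.coe_toBasis, LinearMap.zero_apply]
  exact hAek i
end
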